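/- arXiv:1204.3943 — 10 statements merged into one kernel-verified Lean document; each statement's English description precedes it below -/
import Mathlib

section
/- Let R be a symmetric (n-1)×(n-1) matrix with R ≤ ρI (i.e., ρI − R positive semidefinite) for some ρ ≥ 0. Define √Ric(ρ) = Tr(√(ρI − R)). Then for any ρ' ≥ ρ, if Tr(√(ρI − R)) ≥ (n-1)√(ρ − κ) then Tr(√(ρ'I − R)) ≥ (n-1)√(ρ' − κ). -/
open scoped ComplexOrder in
/-- The positive semidefinite square root of a positive semidefinite matrix
(as defined in Mathlib, December 2024; since removed from Mathlib). -/
noncomputable def Matrix.PosSemidef.sqrt {n : Type*} [Fintype n] [DecidableEq n]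
    {𝕜 : Type*} [RCLike 𝕜] {A : Matrix n n 𝕜} (hA : A.PosSemidef) : Matrix n n 𝕜 :=
  (hA.1.eigenvectorUnitary : Matrix n n 𝕜) *
    Matrix.diagonal ((↑) ∘ (√·) ∘ hA.1.eigenvalues : n → 𝕜) *
    (star hA.1.eigenvectorUnitary : Matrix n n 𝕜)

open Matrix

private lemma sqrt_two_add (a b s t : ℝ) :
    Real.sqrt ((a + b) ^ 2 + (s + t) ^ 2) ≤
      Real.sqrt (a ^ 2 + s ^ 2) + Real.sqrt (b ^ 2 + t ^ 2) := by
  have hp : (0:ℝ) ≤ a ^ 2 + s ^ 2 := by positivity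
  have hq : (0:ℝ) ≤ b ^ 2 + t ^ 2 := by positivity
  have h2 : a * b + s * t ≤ Real.sqrt (a ^ 2 + s ^ 2) * Real.sqrt (b ^ 2 + t ^ 2) := by
    rw [← Real.sqrt_mul hp]
    exact Real.le_sqrt_of_sq_le (by nlinarith [sq_nonneg (a * t - b * s)])
  have e1 := Real.sq_sqrt hp
  have e2 := Real.sq_sqrt hq
  have key : (a + b) ^ 2 + (s + t) ^ 2 ≤
      (Real.sqrt (a ^ 2 + s ^ 2) + Real.sqrt (b ^ 2 + t ^ 2)) ^ 2 := by nlinarith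
  calc Real.sqrt ((a + b) ^ 2 + (s + t) ^ 2)
      ≤ Real.sqrt ((Real.sqrt (a ^ 2 + s ^ 2) + Real.sqrt (b ^ 2 + t ^ 2)) ^ 2) :=
        Real.sqrt_le_sqrt key
    _ = _ := Real.sqrt_sq (by positivity)

private lemma sum_sqrt_sq_add {ι : Type*} (s : Finset ι) (δ : ℝ) (hδ : 0 ≤ δ)
    (x : ι → ℝ) :
    Real.sqrt ((∑ i ∈ s, x i) ^ 2 + ((s.card : ℝ) * Real.sqrt δ) ^ 2) ≤
      ∑ i ∈ s, Real.sqrt ((x i) ^ 2 + δ) := by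
  classical
  induction s using Finset.induction_on with
  | empty => simp
  | @insert a s ha ih =>
    rw [Finset.sum_insert ha, Finset.sum_insert ha, Finset.card_insert_of_notMem ha]
    push_cast
    have e : ((s.card : ℝ) + 1) * Real.sqrt δ =
        Real.sqrt δ + (s.card : ℝ) * Real.sqrt δ := by ring
    rw [e]
    refine (sqrt_two_add (x a) (∑ i ∈ s, x i) (Real.sqrt δ)
      ((s.card : ℝ) * Real.sqrt δ)).trans ?_
    have : Real.sqrt ((x a) ^ 2 + (Real.sqrt δ) ^ 2) = Real.sqrt ((x a) ^ 2 + δ) := by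
      rw [Real.sq_sqrt hδ]
    rw [this]
    exact add_le_add le_rfl ih

open scoped MatrixOrder in
private lemma eq_psd_sqrt_of_sq_eq {m : ℕ} (M B : Matrix (Fin m) (Fin m) ℝ) (h' : M.PosSemidef) (hBpos : B.PosSemidef) (hB2 : B ^ 2 = M) : B = h'.sqrt := by
  have e1 : h'.sqrt = CFC.sqrt M := by
    rw [CFC.sqrt_eq_cfc, cfc_nnreal_eq_real _ _ h'.nonneg, h'.1.cfc_eq]
    simp [Matrix.PosSemidef.sqrt, Matrix.IsHermitian.cfc, Function.comp_def, max_eq_left (h'.eigenvalues_nonneg _)]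
  rw [e1, ← hB2, CFC.sqrt_sq B hBpos.nonneg]

/-- Root-Ricci class is monotone in `ρ`: if `κ ≤ ρ ≤ ρ'`, `0 ≤ ρ`,
`R ≤ ρI` (so also `R ≤ ρ'I`), and `Tr √(ρI − R) ≥ (n−1)√(ρ−κ)`,
then `Tr √(ρ'I − R) ≥ (n−1)√(ρ'−κ)`.  Here the matrices have size
`(n−1) × (n−1)`, represented by `Fin m` with `m = n−1`. -/
theorem rootRic_class_mono {m : ℕ} {R : Matrix (Fin m) (Fin m) ℝ}
    {ρ ρ' κ : ℝ} (hρ0 : 0 ≤ ρ) (hκρ : κ ≤ ρ) (hρρ' : ρ ≤ ρ')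
    (h : (ρ • (1 : Matrix (Fin m) (Fin m) ℝ) - R).PosSemidef)
    (h' : (ρ' • (1 : Matrix (Fin m) (Fin m) ℝ) - R).PosSemidef)
    (htr : (m : ℝ) * Real.sqrt (ρ - κ) ≤ h.sqrt.trace) :
    (m : ℝ) * Real.sqrt (ρ' - κ) ≤ h'.sqrt.trace := by
  set δ : ℝ := ρ' - ρ with hδdef
  have hδ : 0 ≤ δ := sub_nonneg.mpr hρρ'
  set A : Matrix (Fin m) (Fin m) ℝ := ρ • (1 : Matrix (Fin m) (Fin m) ℝ) - R with hAdef
  have hH : A.IsHermitian := h.1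
  set U : Matrix (Fin m) (Fin m) ℝ := (hH.eigenvectorUnitary : Matrix (Fin m) (Fin m) ℝ) with hUdef
  set μ : Fin m → ℝ := hH.eigenvalues with hμdef
  have hUU : star U * U = 1 := Matrix.mem_unitaryGroup_iff'.mp hH.eigenvectorUnitary.2
  have hUU' : U * star U = 1 := Matrix.mem_unitaryGroup_iff.mp hH.eigenvectorUnitary.2
  have tr_conj : ∀ D : Matrix (Fin m) (Fin m) ℝ, (U * D * star U).trace = D.trace := by
    intro D
    rw [Matrix.trace_mul_cycle, hUU, one_mul]
  -- trace of h.sqrt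
  have hsqrt_def : h.sqrt = U * diagonal (RCLike.ofReal ∘ Real.sqrt ∘ μ) * star U := rfl
  have htr1 : h.sqrt.trace = ∑ i, Real.sqrt (μ i) := by
    rw [hsqrt_def, tr_conj, Matrix.trace_diagonal]
    simp [RCLike.ofReal]
  -- the square root of ρ'•1 - R
  set B : Matrix (Fin m) (Fin m) ℝ :=
    U * diagonal (fun i => Real.sqrt (μ i + δ)) * star U with hBdef
  have hBpos : B.PosSemidef := by
    rw [hBdef, Matrix.star_eq_conjTranspose]
    exact (Matrix.posSemidef_diagonal_iff.mpr fun i => Real.sqrt_nonneg _).mul_mul_conjTranspose_same U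
  have hμ0 : ∀ i, 0 ≤ μ i := fun i => h.eigenvalues_nonneg i
  have hB2 : B ^ 2 = ρ' • (1 : Matrix (Fin m) (Fin m) ℝ) - R := by
    have hA' : ρ' • (1 : Matrix (Fin m) (Fin m) ℝ) - R = A + δ • 1 := by
      rw [hAdef, hδdef]; module
    have hdiag : (diagonal (fun i => Real.sqrt (μ i + δ))) *
        (diagonal (fun i => Real.sqrt (μ i + δ))) = diagonal (fun i => μ i + δ) := by
      rw [Matrix.diagonal_mul_diagonal]
      exact congrArg diagonal (funext fun i => Real.mul_self_sqrt (add_nonneg (hμ0 i) hδ))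
    have hspec : A = U * diagonal (RCLike.ofReal ∘ μ) * star U := hH.spectral_theorem
    calc B ^ 2 = U * ((diagonal (fun i => Real.sqrt (μ i + δ)) * (star U * U)) *
          diagonal (fun i => Real.sqrt (μ i + δ))) * star U := by
          rw [pow_two, hBdef]; noncomm_ring
      _ = U * diagonal (fun i => μ i + δ) * star U := by rw [hUU, mul_one, hdiag]
      _ = U * (diagonal (RCLike.ofReal ∘ μ) + δ • 1) * star U := by
          congr 1
          congr 1
          rw [Matrix.smul_one_eq_diagonal, Matrix.diagonal_add]
          rfl
      _ = U * diagonal (RCLike.ofReal ∘ μ) * star U + δ • (U * star U) := by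
          rw [Matrix.mul_add, Matrix.add_mul]
          congr 1
          rw [Matrix.mul_smul, Matrix.smul_mul, mul_one]
      _ = ρ' • (1 : Matrix (Fin m) (Fin m) ℝ) - R := by
          rw [hUU', ← hspec, ← hA']
  have hBs : B = h'.sqrt := eq_psd_sqrt_of_sq_eq _ B h' hBpos hB2
  have htr2 : h'.sqrt.trace = ∑ i, Real.sqrt (μ i + δ) := by
    rw [← hBs, hBdef, tr_conj, Matrix.trace_diagonal]
  rw [htr2]
  -- scalar inequality
  set c : ℝ := Real.sqrt (ρ - κ) with hcdef
  have hc0 : 0 ≤ c := Real.sqrt_nonneg _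
  have hsum : (m : ℝ) * c ≤ ∑ i, Real.sqrt (μ i) := by rw [← htr1]; exact htr
  have hrw : ∀ i, Real.sqrt (μ i + δ) = Real.sqrt ((Real.sqrt (μ i)) ^ 2 + δ) := fun i => by
    rw [Real.sq_sqrt (hμ0 i)]
  have hkey := sum_sqrt_sq_add Finset.univ δ hδ (fun i => Real.sqrt (μ i))
  rw [Finset.card_univ, Fintype.card_fin] at hkey
  have hmono : Real.sqrt (((m : ℝ) * c) ^ 2 + ((m : ℝ) * Real.sqrt δ) ^ 2) ≤
      Real.sqrt ((∑ i, Real.sqrt (μ i)) ^ 2 + ((m : ℝ) * Real.sqrt δ) ^ 2) := by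
    apply Real.sqrt_le_sqrt
    have : ((m : ℝ) * c) ^ 2 ≤ (∑ i, Real.sqrt (μ i)) ^ 2 := by
      apply pow_le_pow_left₀ (by positivity) hsum 2
    linarith
  have heval : Real.sqrt (((m : ℝ) * c) ^ 2 + ((m : ℝ) * Real.sqrt δ) ^ 2) =
      (m : ℝ) * Real.sqrt (ρ' - κ) := by
    have hc2 : c ^ 2 = ρ - κ := Real.sq_sqrt (by linarith)
    have hd : (Real.sqrt δ) ^ 2 = δ := Real.sq_sqrt hδ
    have h1 : ((m : ℝ) * c) ^ 2 + ((m : ℝ) * Real.sqrt δ) ^ 2 =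
        (m : ℝ) ^ 2 * (ρ' - κ) := by
      rw [mul_pow, mul_pow, hc2, hd, hδdef]; ring
    rw [h1, Real.sqrt_mul (by positivity), Real.sqrt_sq (by positivity)]
  calc (m : ℝ) * Real.sqrt (ρ' - κ)
      = Real.sqrt (((m : ℝ) * c) ^ 2 + ((m : ℝ) * Real.sqrt δ) ^ 2) := heval.symm
    _ ≤ Real.sqrt ((∑ i, Real.sqrt (μ i)) ^ 2 + ((m : ℝ) * Real.sqrt δ) ^ 2) := hmono
    _ ≤ ∑ i, Real.sqrt ((Real.sqrt (μ i)) ^ 2 + δ) := hkey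
    _ = ∑ i, Real.sqrt (μ i + δ) := by
        exact Finset.sum_congr rfl fun i _ => (hrw i).symm
end

section
/- For a fixed real symmetric positive semidefinite matrix Q with Tr(Q) fixed, the function ρ ↦ ρ − (Tr(√(ρI − R))/(n−1))², where R is a fixed symmetric matrix with R ≤ ρI for all large ρ, converges as ρ → ∞ to Tr(R)/(n−1). -/
open Filter Matrix

private lemma aux_key_tendsto (a b : ℝ) :
    Tendsto (fun ρ : ℝ => ρ - Real.sqrt (ρ - a) * Real.sqrt (ρ - b)) atTop
      (nhds ((a + b) / 2)) := by
  have hdivzero : ∀ c : ℝ, Tendsto (fun ρ : ℝ => c / ρ) atTop (nhds 0) :=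
    fun c => tendsto_const_nhds.div_atTop tendsto_id
  have hnum : Tendsto (fun ρ : ℝ => (a + b) - a * b / ρ) atTop (nhds (a + b)) := by
    simpa using tendsto_const_nhds.sub (hdivzero (a * b))
  have h1 : ∀ c : ℝ, Tendsto (fun ρ : ℝ => 1 - c / ρ) atTop (nhds 1) := by
    intro c; simpa using tendsto_const_nhds.sub (hdivzero c)
  have hin : Tendsto (fun ρ : ℝ => (1 - a / ρ) * (1 - b / ρ)) atTop (nhds 1) := by
    simpa using (h1 a).mul (h1 b)
  have hsq : Tendsto (fun ρ : ℝ => Real.sqrt ((1 - a / ρ) * (1 - b / ρ))) atTop (nhds 1) := by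
    have := (Real.continuous_sqrt.tendsto 1).comp hin
    rw [Real.sqrt_one] at this; exact this
  have hden : Tendsto (fun ρ : ℝ => 1 + Real.sqrt ((1 - a / ρ) * (1 - b / ρ))) atTop
      (nhds 2) := by
    have h := (tendsto_const_nhds (x := (1:ℝ)) (f := atTop)).add hsq
    norm_num at h
    exact h
  have hg : Tendsto (fun ρ : ℝ => ((a + b) - a * b / ρ) /
      (1 + Real.sqrt ((1 - a / ρ) * (1 - b / ρ)))) atTop (nhds ((a + b) / 2)) :=
    hnum.div hden two_ne_zero
  refine hg.congr' ?_
  filter_upwards [eventually_ge_atTop (max (max a b) 1)] with ρ hρ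
  have ha : a ≤ ρ := le_trans (le_max_left _ _) (le_trans (le_max_left _ _) hρ)
  have hb : b ≤ ρ := le_trans (le_max_right _ _) (le_trans (le_max_left _ _) hρ)
  have hρpos : (0:ℝ) < ρ := lt_of_lt_of_le one_pos (le_trans (le_max_right _ _) hρ)
  have hx : (0:ℝ) ≤ ρ - a := by linarith
  have hy : (0:ℝ) ≤ ρ - b := by linarith
  set s := Real.sqrt (ρ - a) * Real.sqrt (ρ - b) with hs_def
  have hs0 : 0 ≤ s := mul_nonneg (Real.sqrt_nonneg _) (Real.sqrt_nonneg _)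
  have hss : s * s = (ρ - a) * (ρ - b) := by
    rw [hs_def]
    rw [mul_mul_mul_comm, Real.mul_self_sqrt hx, Real.mul_self_sqrt hy]
  have hsr : Real.sqrt ((1 - a / ρ) * (1 - b / ρ)) = s / ρ := by
    have e1 : (1 - a / ρ) * (1 - b / ρ) = ((ρ - a) * (ρ - b)) / (ρ * ρ) := by
      field_simp
    have e2 : (ρ - a) * (ρ - b) / (ρ * ρ) = (s / ρ) * (s / ρ) := by
      rw [div_mul_div_comm, hss]
    rw [e1, e2, Real.sqrt_mul_self (by positivity)]
  have hdenpos : (0:ℝ) < 1 + s / ρ := by positivity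
  rw [hsr, div_eq_iff (ne_of_gt hdenpos)]
  field_simp
  nlinarith [hss]

private lemma aux_sum_tendsto {m : ℕ} (hm : 1 ≤ m) (μ : Fin m → ℝ) :
    Tendsto (fun ρ : ℝ => ρ - ((∑ i, Real.sqrt (ρ - μ i)) / (m : ℝ)) ^ 2) atTop
      (nhds ((∑ i, μ i) / (m : ℝ))) := by
  have hm0 : (m : ℝ) ≠ 0 := Nat.cast_ne_zero.mpr (by omega)
  have h2 : Tendsto (fun ρ : ℝ =>
      (∑ i, ∑ j, (ρ - Real.sqrt (ρ - μ i) * Real.sqrt (ρ - μ j))) / ((m : ℝ) ^ 2)) atTop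
      (nhds ((∑ i, ∑ j, (μ i + μ j) / 2) / ((m : ℝ) ^ 2))) :=
    (tendsto_finset_sum _ fun i _ => tendsto_finset_sum _ fun j _ =>
      aux_key_tendsto (μ i) (μ j)).div_const _
  have hval : (∑ i, ∑ j, (μ i + μ j) / 2) / ((m : ℝ) ^ 2) = (∑ i, μ i) / (m : ℝ) := by
    have : (∑ i : Fin m, ∑ j : Fin m, (μ i + μ j) / 2) = (m : ℝ) * ∑ i, μ i := by
      simp only [add_div, Finset.sum_add_distrib, Finset.sum_const, Finset.card_univ,
        Fintype.card_fin, nsmul_eq_mul, ← Finset.sum_div]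
      rw [← Finset.mul_sum, ← Finset.sum_div]
      ring
    rw [this]; field_simp
  rw [← hval]
  refine h2.congr fun ρ => ?_
  have hsum : (∑ i, ∑ j, (ρ - Real.sqrt (ρ - μ i) * Real.sqrt (ρ - μ j)))
      = (m : ℝ) ^ 2 * ρ - (∑ i, Real.sqrt (ρ - μ i)) ^ 2 := by
    calc (∑ i, ∑ j, (ρ - Real.sqrt (ρ - μ i) * Real.sqrt (ρ - μ j)))
        = ∑ i, ((m : ℝ) * ρ - Real.sqrt (ρ - μ i) * ∑ j, Real.sqrt (ρ - μ j)) := by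
          refine Finset.sum_congr rfl fun i _ => ?_
          rw [Finset.sum_sub_distrib, ← Finset.mul_sum]
          simp
      _ = (m : ℝ) * ((m : ℝ) * ρ) - (∑ i, Real.sqrt (ρ - μ i)) * (∑ j, Real.sqrt (ρ - μ j)) := by
          rw [Finset.sum_sub_distrib, Finset.sum_const, Finset.card_univ,
            Fintype.card_fin, nsmul_eq_mul, ← Finset.sum_mul]
      _ = (m : ℝ) ^ 2 * ρ - (∑ i, Real.sqrt (ρ - μ i)) ^ 2 := by ring
  rw [hsum]
  field_simp

/-- The conjugated root-Ricci curvature converges to the normalized trace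
(Ricci curvature) for large `ρ`: if `f ρ` is, for all large `ρ`, the positive
semidefinite square root of `ρI − R` (for a fixed symmetric matrix `R` of size
`(n−1) × (n−1)`, with `n − 1 = m ≥ 1`), then
`ρ − (Tr(f ρ)/(n−1))² → Tr(R)/(n−1)` as `ρ → ∞`. -/
theorem conj_rootRic_tendsto_ricci {m : ℕ} (hm : 1 ≤ m)
    {R : Matrix (Fin m) (Fin m) ℝ} (hR : R.IsSymm)
    (f : ℝ → Matrix (Fin m) (Fin m) ℝ) (ρ₀ : ℝ)
    (hf : ∀ ρ ≥ ρ₀, (f ρ).PosSemidef ∧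
      (f ρ) ^ 2 = ρ • (1 : Matrix (Fin m) (Fin m) ℝ) - R) :
    Filter.Tendsto (fun ρ => ρ - ((f ρ).trace / (m : ℝ)) ^ 2)
      Filter.atTop (nhds (R.trace / (m : ℝ))) := by
  have hR' : R.IsHermitian := by
    rw [Matrix.IsHermitian, Matrix.conjTranspose]
    exact Matrix.isHermitian_iff_isSymm.mpr hR
  set μ := hR'.eigenvalues with hμ
  set U : Matrix (Fin m) (Fin m) ℝ := (hR'.eigenvectorUnitary : Matrix (Fin m) (Fin m) ℝ)
    with hU_def
  have hUU : star U * U = 1 := by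
    exact Matrix.mem_unitaryGroup_iff'.mp hR'.eigenvectorUnitary.2
  have hUU' : U * star U = 1 := by
    exact Matrix.mem_unitaryGroup_iff.mp hR'.eigenvectorUnitary.2
  have hspec : R = U * Matrix.diagonal μ * star U := by
    have := hR'.spectral_theorem
    simpa using this
  have htraceR : R.trace = ∑ i, μ i := by
    rw [hspec, Matrix.trace_mul_cycle, hUU, Matrix.one_mul, Matrix.trace_diagonal]
  have key : ∀ᶠ ρ in atTop, (f ρ).trace = ∑ i, Real.sqrt (ρ - μ i) := by
    have h1 : ∀ᶠ ρ : ℝ in atTop, ρ₀ ≤ ρ := eventually_ge_atTop ρ₀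
    have h2 : ∀ᶠ ρ : ℝ in atTop, ∀ i, μ i ≤ ρ := by
      rw [eventually_all]; exact fun i => eventually_ge_atTop (μ i)
    filter_upwards [h1, h2] with ρ hρ1 hρ2
    set D : Matrix (Fin m) (Fin m) ℝ := Matrix.diagonal (fun i => Real.sqrt (ρ - μ i))
      with hD_def
    set B : Matrix (Fin m) (Fin m) ℝ := U * D * star U with hB_def
    have hDpsd : D.PosSemidef :=
      Matrix.posSemidef_diagonal_iff.mpr fun i => Real.sqrt_nonneg _
    have hBpsd : B.PosSemidef := by
      rw [hB_def, Matrix.star_eq_conjTranspose]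
      exact hDpsd.mul_mul_conjTranspose_same U
    have hB2 : B ^ 2 = ρ • (1 : Matrix (Fin m) (Fin m) ℝ) - R := by
      have hDD : D * D = Matrix.diagonal (fun i => ρ - μ i) := by
        have hfun : (fun i => Real.sqrt (ρ - μ i) * Real.sqrt (ρ - μ i))
            = fun i => ρ - μ i := by
          funext i
          exact Real.mul_self_sqrt (by linarith [hρ2 i])
        rw [hD_def, Matrix.diagonal_mul_diagonal, hfun]
      have : B ^ 2 = U * (D * D) * star U := by
        rw [hB_def, pow_two]
        rw [Matrix.mul_assoc, Matrix.mul_assoc, ← Matrix.mul_assoc (star U),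
          ← Matrix.mul_assoc (star U), hUU, Matrix.one_mul]
        noncomm_ring
      have hdiag : ρ • (1 : Matrix (Fin m) (Fin m) ℝ) - Matrix.diagonal μ
          = Matrix.diagonal (fun i => ρ - μ i) := by
        rw [← Matrix.diagonal_one, ← Matrix.diagonal_smul, Matrix.diagonal_sub]
        congr 1
        funext i
        simp
      have hone : ρ • (1 : Matrix (Fin m) (Fin m) ℝ) = U * (ρ • 1) * star U := by
        rw [Matrix.mul_smul, Matrix.smul_mul, Matrix.mul_one, hUU']
      rw [this, hDD]
      conv_rhs => rw [hspec, hone]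
      rw [← Matrix.sub_mul, ← Matrix.mul_sub, hdiag]
    have hfB : f ρ = B := by
      open scoped MatrixOrder in
      exact (CFC.sq_eq_sq_iff (f ρ) B (hf ρ hρ1).1.nonneg hBpsd.nonneg).mp
        (by rw [(hf ρ hρ1).2, hB2])
    rw [hfB, hB_def, Matrix.trace_mul_cycle, hUU, Matrix.one_mul, hD_def,
      Matrix.trace_diagonal]
  rw [htraceR]
  refine (aux_sum_tendsto hm μ).congr' ?_
  filter_upwards [key] with ρ h
  rw [h]
end

section
/- The function α ↦ β(κ,α,ρ) = ρ + (n−2)α − ((n−1)√(ρ−κ) − (n−2)√(ρ−α))² is monotonically decreasing in α on [κ, ρ]. -/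
/-- The function `α ↦ β(κ,α,ρ) = ρ + (n−2)α − ((n−1)√(ρ−κ) − (n−2)√(ρ−α))²`
is monotonically decreasing on `[κ, ρ]`. -/
theorem beta_antitone (n : ℕ) (hn : 2 ≤ n) {κ ρ : ℝ}
    (hκρ : κ ≤ ρ) (hρ0 : 0 ≤ ρ) :
    AntitoneOn (fun α => ρ + ((n : ℝ) - 2) * α -
      (((n : ℝ) - 1) * Real.sqrt (ρ - κ) -
        ((n : ℝ) - 2) * Real.sqrt (ρ - α)) ^ 2)
      (Set.Icc κ ρ) := by
  intro x hx y hy hxy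
  obtain ⟨hκx, hxρ⟩ := hx
  obtain ⟨hκy, hyρ⟩ := hy
  have hm : (2 : ℝ) ≤ (n : ℝ) := by exact_mod_cast hn
  set a := Real.sqrt (ρ - κ) with ha
  set u := Real.sqrt (ρ - x) with hu
  set v := Real.sqrt (ρ - y) with hv
  have hu2 : u ^ 2 = ρ - x := Real.sq_sqrt (by linarith)
  have hv2 : v ^ 2 = ρ - y := Real.sq_sqrt (by linarith)
  have hvu : v ≤ u := Real.sqrt_le_sqrt (by linarith)
  have hua : u ≤ a := Real.sqrt_le_sqrt (by linarith)
  have hv0 : 0 ≤ v := Real.sqrt_nonneg _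
  simp only
  nlinarith [mul_nonneg (mul_nonneg (by linarith : (0:ℝ) ≤ (n:ℝ) - 1)
      (by linarith : (0:ℝ) ≤ (n:ℝ) - 2))
      (mul_nonneg (by linarith : (0:ℝ) ≤ u - v) (by linarith : (0:ℝ) ≤ 2*a - u - v))]
end

section
/- Let ρ ≥ 0 and r > 0 with √ρ·r < π. For every continuous function y : [0,r] → ℝ^{n−1} with L² derivative and y(0) = y(r) = 0, the energy E(ρ,y) = ∫₀ʳ (|y'|² − ρ|y|²) dt is nonnegative, and is zero only if y = 0. -/
open MeasureTheory Set
open scoped RealInnerProductSpace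

lemma inner_integrable_prod {E : Type*} [NormedAddCommGroup E] [InnerProductSpace ℝ E]
    {μ ν : Measure ℝ} [SFinite μ] [SFinite ν] {f h : ℝ → E}
    (hf : Integrable f μ) (hh : Integrable h ν) :
    Integrable (fun z : ℝ × ℝ => ⟪f z.1, h z.2⟫) (μ.prod ν) := by
  have hm : AEStronglyMeasurable (fun z : ℝ × ℝ => ⟪f z.1, h z.2⟫) (μ.prod ν) :=
    hf.aestronglyMeasurable.comp_fst.inner hh.aestronglyMeasurable.comp_snd
  refine (hf.norm.mul_prod hh.norm).mono' hm ?_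
  filter_upwards with z
  simpa using abs_real_inner_le_norm (f z.1) (h z.2)

lemma partsA {E : Type*} [NormedAddCommGroup E] [InnerProductSpace ℝ E] [CompleteSpace E]
    {r : ℝ} (hr : 0 ≤ r)
    {f h : ℝ → E} (hf : IntegrableOn f (Set.Ioc 0 r))
    (hh : IntegrableOn h (Set.Ioc 0 r)) :
    (∫ t in (0:ℝ)..r, (⟪∫ s in (0:ℝ)..t, f s, h t⟫ + ⟪f t, ∫ s in (0:ℝ)..t, h s⟫))
      = ⟪∫ s in (0:ℝ)..r, f s, ∫ s in (0:ℝ)..r, h s⟫ := by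
  set μ := volume.restrict (Set.Ioc (0:ℝ) r) with hμ
  have hfi : Integrable f μ := hf
  have hhi : Integrable h μ := hh
  -- partial integrals as indicator integrals
  have key : ∀ t ∈ Set.Ioc (0:ℝ) r, ∀ (φ : ℝ → E),
      (∫ s in (0:ℝ)..t, φ s) = ∫ s, (Set.Ioc 0 t).indicator φ s ∂μ := by
    intro t ht φ
    rw [intervalIntegral.integral_of_le ht.1.le, integral_indicator measurableSet_Ioc, hμ,
      Measure.restrict_restrict measurableSet_Ioc,
      Set.inter_eq_self_of_subset_left (Set.Ioc_subset_Ioc_right ht.2)]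
  have hK : Integrable (fun z : ℝ × ℝ => (⟪f z.1, h z.2⟫ : ℝ)) (μ.prod μ) :=
    inner_integrable_prod hfi hhi
  have hK' : Integrable (fun z : ℝ × ℝ => (⟪f z.2, h z.1⟫ : ℝ)) (μ.prod μ) := by
    have := inner_integrable_prod hhi hfi
    simpa [real_inner_comm] using this
  have hR : MeasurableSet {z : ℝ × ℝ | z.2 ∈ Set.Ioc 0 z.1} := by
    have : {z : ℝ × ℝ | z.2 ∈ Set.Ioc 0 z.1}
        = {z : ℝ × ℝ | (0:ℝ) < z.2} ∩ {z : ℝ × ℝ | z.2 ≤ z.1} := by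
      ext z; simp only [Set.mem_setOf_eq, Set.mem_Ioc, Set.mem_inter_iff]
    rw [this]
    exact (measurableSet_lt measurable_const measurable_snd).inter
      (measurableSet_le measurable_snd measurable_fst)
  have hR' : MeasurableSet {z : ℝ × ℝ | z.1 ∈ Set.Ioc 0 z.2} := by
    have : {z : ℝ × ℝ | z.1 ∈ Set.Ioc 0 z.2}
        = {z : ℝ × ℝ | (0:ℝ) < z.1} ∩ {z : ℝ × ℝ | z.1 ≤ z.2} := by
      ext z; simp [Set.mem_Ioc]
    rw [this]
    exact (measurableSet_lt measurable_const measurable_fst).inter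
      (measurableSet_le measurable_fst measurable_snd)
  -- step 1 : rewrite LHS as iterated integral of an indicator function
  have step1 : (∫ t in (0:ℝ)..r, (⟪∫ s in (0:ℝ)..t, f s, h t⟫ + ⟪f t, ∫ s in (0:ℝ)..t, h s⟫))
      = ∫ t, (∫ s, ({z : ℝ × ℝ | z.2 ∈ Set.Ioc 0 z.1}.indicator
          (fun z => ⟪f z.2, h z.1⟫ + ⟪f z.1, h z.2⟫) (t, s)) ∂μ) ∂μ := by
    rw [intervalIntegral.integral_of_le hr, ← hμ]
    refine integral_congr_ae ?_
    filter_upwards [ae_restrict_mem measurableSet_Ioc] with t ht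
    rw [key t ht f, key t ht h]
    have e1 : ⟪∫ s, (Set.Ioc 0 t).indicator f s ∂μ, h t⟫
        = ∫ s, (Set.Ioc 0 t).indicator (fun s => (⟪f s, h t⟫ : ℝ)) s ∂μ := by
      rw [real_inner_comm, ← integral_inner (hfi.indicator measurableSet_Ioc)]
      refine integral_congr_ae (Filter.Eventually.of_forall fun s => ?_)
      by_cases hs : s ∈ Set.Ioc 0 t <;> simp [hs, real_inner_comm]
    have e2 : ⟪f t, ∫ s, (Set.Ioc 0 t).indicator h s ∂μ⟫
        = ∫ s, (Set.Ioc 0 t).indicator (fun s => (⟪f t, h s⟫ : ℝ)) s ∂μ := by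
      rw [← integral_inner (hhi.indicator measurableSet_Ioc)]
      refine integral_congr_ae (Filter.Eventually.of_forall fun s => ?_)
      by_cases hs : s ∈ Set.Ioc 0 t <;> simp [hs]
    rw [e1, e2, ← integral_add ((hfi.inner_const (h t)).indicator measurableSet_Ioc)
      ((hhi.const_inner (f t)).indicator measurableSet_Ioc)]
    refine integral_congr_ae (Filter.Eventually.of_forall fun s => ?_)
    by_cases hs : s ∈ Set.Ioc 0 t
    · have hs' : (0:ℝ) < s ∧ s ≤ t := Set.mem_Ioc.mp hs
      simp [Set.indicator_apply, Set.mem_Ioc, hs'.1, hs'.2]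
    · have hs' : ¬ ((0:ℝ) < s ∧ s ≤ t) := fun hc => hs (Set.mem_Ioc.mpr hc)
      simp [Set.indicator_apply, Set.mem_Ioc, hs']
  rw [step1]
  -- step 2 : Fubini to a product integral
  have hΦ : Integrable ({z : ℝ × ℝ | z.2 ∈ Set.Ioc 0 z.1}.indicator
      (fun z => (⟪f z.2, h z.1⟫ : ℝ) + ⟪f z.1, h z.2⟫)) (μ.prod μ) :=
    (hK'.add hK).indicator hR
  have step2 : (∫ t, (∫ s, ({z : ℝ × ℝ | z.2 ∈ Set.Ioc 0 z.1}.indicator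
          (fun z => ⟪f z.2, h z.1⟫ + ⟪f z.1, h z.2⟫) (t, s)) ∂μ) ∂μ)
      = ∫ z, ({z : ℝ × ℝ | z.2 ∈ Set.Ioc 0 z.1}.indicator
          (fun z => ⟪f z.2, h z.1⟫ + ⟪f z.1, h z.2⟫)) z ∂(μ.prod μ) := by
    exact MeasureTheory.integral_integral hΦ
  rw [step2]
  -- step 3 : split, swap one piece
  have hsplit : ({z : ℝ × ℝ | z.2 ∈ Set.Ioc 0 z.1}.indicator
        (fun z => (⟪f z.2, h z.1⟫ : ℝ) + ⟪f z.1, h z.2⟫))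
      = (fun z => {z : ℝ × ℝ | z.2 ∈ Set.Ioc 0 z.1}.indicator (fun z => (⟪f z.2, h z.1⟫ : ℝ)) z
          + {z : ℝ × ℝ | z.2 ∈ Set.Ioc 0 z.1}.indicator (fun z => (⟪f z.1, h z.2⟫ : ℝ)) z) := by
    funext z
    by_cases hz : z ∈ {z : ℝ × ℝ | z.2 ∈ Set.Ioc 0 z.1}
    · rw [Set.indicator_of_mem hz, Set.indicator_of_mem hz, Set.indicator_of_mem hz]
    · rw [Set.indicator_of_notMem hz, Set.indicator_of_notMem hz,
        Set.indicator_of_notMem hz]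
      ring
  rw [hsplit, integral_add (hK'.indicator hR) (hK.indicator hR)]
  have swap1 : (∫ z, {z : ℝ × ℝ | z.2 ∈ Set.Ioc 0 z.1}.indicator
        (fun z => (⟪f z.2, h z.1⟫ : ℝ)) z ∂(μ.prod μ))
      = ∫ z, {z : ℝ × ℝ | z.1 ∈ Set.Ioc 0 z.2}.indicator
        (fun z => (⟪f z.1, h z.2⟫ : ℝ)) z ∂(μ.prod μ) := by
    rw [← MeasureTheory.integral_prod_swap]
    refine integral_congr_ae (Filter.Eventually.of_forall fun z => ?_)
    by_cases hz : z.1 ∈ Set.Ioc 0 z.2 <;>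
      simp [Set.indicator_apply, Prod.swap, hz]
  rw [swap1, ← integral_add (hK.indicator hR') (hK.indicator hR)]
  -- step 4 : the two indicators add up to 1 a.e.
  have hdiag : (μ.prod μ) {z : ℝ × ℝ | z.1 = z.2} = 0 := by
    have hD : MeasurableSet {z : ℝ × ℝ | z.1 = z.2} :=
      measurableSet_eq_fun measurable_fst measurable_snd
    rw [Measure.prod_apply hD]
    have : ∀ x : ℝ, μ (Prod.mk x ⁻¹' {z : ℝ × ℝ | z.1 = z.2}) = 0 := by
      intro x
      have hpre : Prod.mk x ⁻¹' {z : ℝ × ℝ | z.1 = z.2} = {x} := by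
        ext y; simp [eq_comm]
      rw [hpre]
      exact measure_singleton x
    simp [this]
  have hsq : ∀ᵐ z ∂(μ.prod μ), z ∈ Set.Ioc (0:ℝ) r ×ˢ Set.Ioc (0:ℝ) r := by
    rw [hμ, Measure.prod_restrict]
    exact ae_restrict_mem (measurableSet_Ioc.prod measurableSet_Ioc)
  have step4 : (∫ z, ({z : ℝ × ℝ | z.1 ∈ Set.Ioc 0 z.2}.indicator
        (fun z => (⟪f z.1, h z.2⟫ : ℝ)) z
      + {z : ℝ × ℝ | z.2 ∈ Set.Ioc 0 z.1}.indicator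
        (fun z => (⟪f z.1, h z.2⟫ : ℝ)) z) ∂(μ.prod μ))
      = ∫ z, (⟪f z.1, h z.2⟫ : ℝ) ∂(μ.prod μ) := by
    refine integral_congr_ae ?_
    have hne : ∀ᵐ z ∂(μ.prod μ), z.1 ≠ z.2 := by
      rw [MeasureTheory.ae_iff]
      simpa using hdiag
    filter_upwards [hsq, hne] with z hz hzne
    obtain ⟨hz1, hz2⟩ := hz
    rcases lt_or_gt_of_ne hzne with hlt | hgt
    · have h1 : z.1 ∈ Set.Ioc 0 z.2 := ⟨hz1.1, hlt.le⟩
      have h2 : z.2 ∉ Set.Ioc 0 z.1 := fun hc => absurd hc.2 (not_le.2 hlt)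
      have h2' : ¬ ((0:ℝ) < z.2 ∧ z.2 ≤ z.1) := fun hc => h2 (Set.mem_Ioc.mpr hc)
      simp [Set.indicator_apply, Set.mem_Ioc, h1.1, h1.2, h2']
    · have h1 : z.1 ∉ Set.Ioc 0 z.2 := fun hc => absurd hc.2 (not_le.2 hgt)
      have h2 : z.2 ∈ Set.Ioc 0 z.1 := ⟨hz2.1, hgt.le⟩
      have h1' : ¬ ((0:ℝ) < z.1 ∧ z.1 ≤ z.2) := fun hc => h1 (Set.mem_Ioc.mpr hc)
      simp [Set.indicator_apply, Set.mem_Ioc, h1', h2.1, h2.2]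
  rw [step4]
  -- step 5 : compute the full double integral
  rw [MeasureTheory.integral_prod _ hK]
  have e3 : ∀ t : ℝ, (∫ s, (⟪f t, h s⟫ : ℝ) ∂μ) = ⟪f t, ∫ s, h s ∂μ⟫ := fun t =>
    integral_inner hhi (f t)
  simp_rw [e3]
  have e4 : (∫ t, (⟪f t, ∫ s, h s ∂μ⟫ : ℝ) ∂μ) = ⟪∫ t, f t ∂μ, ∫ s, h s ∂μ⟫ := by
    calc (∫ t, (⟪f t, ∫ s, h s ∂μ⟫ : ℝ) ∂μ)
        = ∫ t, (⟪∫ s, h s ∂μ, f t⟫ : ℝ) ∂μ :=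
          integral_congr_ae (Filter.Eventually.of_forall fun t => real_inner_comm _ _)
      _ = ⟪∫ s, h s ∂μ, ∫ t, f t ∂μ⟫ := integral_inner hfi _
      _ = ⟪∫ t, f t ∂μ, ∫ s, h s ∂μ⟫ := real_inner_comm _ _
  rw [e4, intervalIntegral.integral_of_le hr, intervalIntegral.integral_of_le hr]

set_option maxHeartbeats 1000000 in
/-- Positive definiteness of the comparison energy: if `0 ≤ ρ`, `0 < r`,
`√ρ·r < π`, and `y ∈ H¹₀((0,r), ℝ^{n−1})` — represented as
`y t = ∫₀ᵗ g` with `g` square-integrable on `[0,r]` and `y r = 0` — then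
`E(ρ,y) = ∫₀ʳ (|y'|² − ρ|y|²) dt ≥ 0`, with equality only if `y ≡ 0` on `[0,r]`. -/
theorem comparison_energy_posdef {m : ℕ} {ρ r : ℝ}
    (hρ : 0 ≤ ρ) (hr : 0 < r) (hρr : Real.sqrt ρ * r < Real.pi)
    (g : ℝ → EuclideanSpace ℝ (Fin m))
    (hg : IntervalIntegrable g MeasureTheory.volume 0 r)
    (hg2 : IntervalIntegrable (fun t => ‖g t‖ ^ 2) MeasureTheory.volume 0 r)
    (y : ℝ → EuclideanSpace ℝ (Fin m))
    (hy : ∀ t, y t = ∫ s in (0:ℝ)..t, g s)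
    (hyr : y r = 0) :
    0 ≤ ∫ t in (0:ℝ)..r, (‖g t‖ ^ 2 - ρ * ‖y t‖ ^ 2) ∧
      ((∫ t in (0:ℝ)..r, (‖g t‖ ^ 2 - ρ * ‖y t‖ ^ 2)) = 0 →
        ∀ t ∈ Set.Icc (0:ℝ) r, y t = 0) := by
  have hr' : (0:ℝ) ≤ r := hr.le
  set s : ℝ := Real.sqrt ρ with hs
  have hs0 : 0 ≤ s := Real.sqrt_nonneg ρ
  have hs2 : s ^ 2 = ρ := Real.sq_sqrt hρ
  have hsr0 : 0 ≤ s * r := mul_nonneg hs0 hr'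
  set δ : ℝ := (Real.pi - s * r) / 2 with hδ
  set θ : ℝ → ℝ := fun t => s * t + δ with hθdef
  have hθmem : ∀ t ∈ Set.Icc (0:ℝ) r, 0 < θ t ∧ θ t < Real.pi := by
    intro t ht
    have h1 : 0 ≤ s * t := mul_nonneg hs0 ht.1
    have h2 : s * t ≤ s * r := mul_le_mul_of_nonneg_left ht.2 hs0
    constructor
    · have : 0 < δ := by rw [hδ]; linarith
      simp only [hθdef]; linarith
    · simp only [hθdef, hδ]; linarith
  have hsin : ∀ t ∈ Set.Icc (0:ℝ) r, 0 < Real.sin (θ t) := fun t ht =>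
    Real.sin_pos_of_pos_of_lt_pi (hθmem t ht).1 (hθmem t ht).2
  set w : ℝ → ℝ := fun t => s * Real.cos (θ t) / Real.sin (θ t) with hwdef
  set w' : ℝ → ℝ := fun t => -ρ - w t ^ 2 with hw'def
  have hwderiv : ∀ t ∈ Set.Icc (0:ℝ) r, HasDerivAt w (w' t) t := by
    intro t ht
    have hsin' : Real.sin (θ t) ≠ 0 := (hsin t ht).ne'
    have hθd : HasDerivAt θ s t := by
      have h := ((hasDerivAt_id t).const_mul s).add_const δ
      rw [mul_one] at h
      exact h
    have hcos : HasDerivAt (fun u => Real.cos (θ u)) (-Real.sin (θ t) * s) t :=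
      (Real.hasDerivAt_cos (θ t)).comp t hθd
    have hsinD : HasDerivAt (fun u => Real.sin (θ u)) (Real.cos (θ t) * s) t :=
      (Real.hasDerivAt_sin (θ t)).comp t hθd
    have hnum : HasDerivAt (fun u => s * Real.cos (θ u)) (s * (-Real.sin (θ t) * s)) t :=
      hcos.const_mul s
    have hdiv := hnum.div hsinD hsin'
    refine hdiv.congr_deriv ?_
    symm
    have pyth := Real.sin_sq_add_cos_sq (θ t)
    rw [hw'def, hwdef]
    field_simp
    nlinarith [pyth, hs2, sq_nonneg (Real.sin (θ t)), sq_nonneg (Real.cos (θ t))]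
  have hwcont : ContinuousOn w (Set.Icc 0 r) := fun t ht =>
    (hwderiv t ht).continuousAt.continuousWithinAt
  have hw'cont : ContinuousOn w' (Set.Icc 0 r) := by
    rw [hw'def]
    exact continuousOn_const.sub (hwcont.pow 2)
  have hgIoc : MeasureTheory.IntegrableOn g (Set.Ioc 0 r) :=
    (intervalIntegrable_iff_integrableOn_Ioc_of_le hr').mp hg
  have hycont : ContinuousOn y (Set.Icc 0 r) := by
    have hint : MeasureTheory.IntegrableOn g (Set.Icc 0 r) := by
      rwa [integrableOn_Icc_iff_integrableOn_Ioc]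
    have hc := intervalIntegral.continuousOn_primitive (f := g) (a := 0) (b := r) hint
    exact ContinuousOn.congr hc fun x hx => by
      rw [hy x, intervalIntegral.integral_of_le hx.1]
  set n : ℝ → ℝ := fun t => ‖y t‖ ^ 2 with hndef
  have hncont : ContinuousOn n (Set.Icc 0 r) := by
    rw [hndef]; exact (hycont.norm).pow 2
  set m' : ℝ → ℝ := fun t => ⟪y t, g t⟫ + ⟪g t, y t⟫ with hmdef
  obtain ⟨C, hC⟩ := isCompact_Icc.exists_bound_of_continuousOn hycont
  have hyaesm : AEStronglyMeasurable y (volume.restrict (Set.Ioc 0 r)) :=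
    (hycont.mono Set.Ioc_subset_Icc_self).aestronglyMeasurable measurableSet_Ioc
  have hmIoc : MeasureTheory.IntegrableOn m' (Set.Ioc 0 r) := by
    have hgaesm := hgIoc.aestronglyMeasurable
    have hmaesm : AEStronglyMeasurable m' (volume.restrict (Set.Ioc 0 r)) :=
      (hyaesm.inner hgaesm).add (hgaesm.inner hyaesm)
    refine (hgIoc.norm.const_mul (2 * C)).mono' hmaesm ?_
    filter_upwards [ae_restrict_mem measurableSet_Ioc] with t ht
    have h1 : ‖y t‖ ≤ C := hC t (Set.Ioc_subset_Icc_self ht)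
    calc ‖m' t‖ ≤ ‖(⟪y t, g t⟫ : ℝ)‖ + ‖(⟪g t, y t⟫ : ℝ)‖ := norm_add_le _ _
      _ ≤ ‖y t‖ * ‖g t‖ + ‖g t‖ * ‖y t‖ :=
          add_le_add (norm_inner_le_norm _ _) (norm_inner_le_norm _ _)
      _ ≤ 2 * C * ‖g t‖ := by nlinarith [norm_nonneg (g t), norm_nonneg (y t)]
  have hmInt : IntervalIntegrable m' volume 0 r :=
    (intervalIntegrable_iff_integrableOn_Ioc_of_le hr').mpr hmIoc
  have hn : ∀ τ ∈ Set.Icc (0:ℝ) r, (∫ t in (0:ℝ)..τ, m' t) = n τ := by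
    intro τ hτ
    have hgτ : MeasureTheory.IntegrableOn g (Set.Ioc 0 τ) :=
      hgIoc.mono_set (Set.Ioc_subset_Ioc_right hτ.2)
    have h1 := partsA hτ.1 hgτ hgτ
    simp_rw [← hy] at h1
    simp only [hndef]
    rw [← real_inner_self_eq_norm_sq]
    exact h1
  have hrIcc : r ∈ Set.Icc (0:ℝ) r := Set.right_mem_Icc.mpr hr'
  have hWt : ∀ t ∈ Set.Icc (0:ℝ) r, (∫ u in (0:ℝ)..t, w' u) = w t - w 0 := by
    intro t ht
    have hsub : Set.uIcc (0:ℝ) t ⊆ Set.Icc 0 r := by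
      rw [Set.uIcc_of_le ht.1]; exact Set.Icc_subset_Icc le_rfl ht.2
    exact intervalIntegral.integral_eq_sub_of_hasDerivAt
      (fun x hx => hwderiv x (hsub hx)) ((hw'cont.mono hsub).intervalIntegrable)
  have hw'Int : IntervalIntegrable w' volume 0 r := by
    apply ContinuousOn.intervalIntegrable
    rwa [Set.uIcc_of_le hr']
  have hw'Ioc : MeasureTheory.IntegrableOn w' (Set.Ioc 0 r) :=
    (intervalIntegrable_iff_integrableOn_Ioc_of_le hr').mp hw'Int
  have hwInt : IntervalIntegrable w volume 0 r := by
    apply ContinuousOn.intervalIntegrable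
    rwa [Set.uIcc_of_le hr']
  have hnInt : IntervalIntegrable n volume 0 r := by
    apply ContinuousOn.intervalIntegrable
    rwa [Set.uIcc_of_le hr']
  have hnr : n r = 0 := by simp only [hndef]; simp [hyr]
  have hmr : (∫ t in (0:ℝ)..r, m' t) = 0 := by rw [hn r hrIcc, hnr]
  have star : (∫ t in (0:ℝ)..r, (w t * m' t + w' t * n t)) = 0 := by
    have h2 := partsA (E := ℝ) hr' hw'Ioc hmIoc
    simp only [RCLike.inner_apply, RCLike.conj_to_real, starRingEnd_apply, star_trivial] at h2
    rw [hWt r hrIcc, hn r hrIcc, hnr, zero_mul] at h2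
    have h3 : (∫ t in (0:ℝ)..r, ((w t - w 0) * m' t + w' t * n t)) = 0 := by
      have hcg : (∫ t in (0:ℝ)..r, ((w t - w 0) * m' t + w' t * n t))
          = ∫ t in (0:ℝ)..r,
              ((∫ u in (0:ℝ)..t, w' u) * m' t + w' t * ∫ u in (0:ℝ)..t, m' u) := by
        apply intervalIntegral.integral_congr
        intro t ht
        rw [Set.uIcc_of_le hr'] at ht
        beta_reduce
        rw [hWt t ht, hn t ht]
      rw [hcg]
      exact Eq.trans (intervalIntegral.integral_congr fun t _ => by ring) h2
    have hA : IntervalIntegrable (fun t => (w t - w 0) * m' t + w' t * n t) volume 0 r := by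
      apply IntervalIntegrable.add
      · exact hmInt.continuousOn_mul
          (by rw [Set.uIcc_of_le hr']; exact hwcont.sub continuousOn_const)
      · apply ContinuousOn.intervalIntegrable
        rw [Set.uIcc_of_le hr']
        exact hw'cont.mul hncont
    have hB : IntervalIntegrable (fun t => w 0 * m' t) volume 0 r := hmInt.const_mul (w 0)
    calc (∫ t in (0:ℝ)..r, (w t * m' t + w' t * n t))
        = ∫ t in (0:ℝ)..r, (((w t - w 0) * m' t + w' t * n t) + w 0 * m' t) :=
          intervalIntegral.integral_congr fun t _ => by ring
      _ = (∫ t in (0:ℝ)..r, ((w t - w 0) * m' t + w' t * n t))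
            + ∫ t in (0:ℝ)..r, w 0 * m' t := intervalIntegral.integral_add hA hB
      _ = 0 := by
          rw [h3, intervalIntegral.integral_const_mul, hmr]; ring
  have hexp : ∀ t, ‖g t - w t • y t‖ ^ 2 = ‖g t‖ ^ 2 - w t * m' t + w t ^ 2 * n t := by
    intro t
    rw [norm_sub_sq_real, real_inner_smul_right, norm_smul]
    simp only [hmdef, hndef]
    rw [real_inner_comm (y t) (g t)]
    simp [Real.norm_eq_abs, mul_pow, sq_abs]
    ring
  have hintegrand : ∀ t, ‖g t‖ ^ 2 - ρ * n t
      = ‖g t - w t • y t‖ ^ 2 + (w t * m' t + w' t * n t) := by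
    intro t
    rw [hexp t]
    simp only [hw'def]
    ring
  have hwm : IntervalIntegrable (fun t => w t * m' t) volume 0 r :=
    hmInt.continuousOn_mul (by rw [Set.uIcc_of_le hr']; exact hwcont)
  have hw'n : IntervalIntegrable (fun t => w' t * n t) volume 0 r := by
    apply ContinuousOn.intervalIntegrable
    rw [Set.uIcc_of_le hr']
    exact hw'cont.mul hncont
  have hw2n : IntervalIntegrable (fun t => w t ^ 2 * n t) volume 0 r := by
    apply ContinuousOn.intervalIntegrable
    rw [Set.uIcc_of_le hr']
    exact (hwcont.pow 2).mul hncont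
  have hsqInt : IntervalIntegrable (fun t => ‖g t - w t • y t‖ ^ 2) volume 0 r := by
    have he : (fun t => ‖g t - w t • y t‖ ^ 2)
        = fun t => (‖g t‖ ^ 2 - w t * m' t) + w t ^ 2 * n t := by
      funext t; rw [hexp t]
    rw [he]
    exact (hg2.sub hwm).add hw2n
  have hE : (∫ t in (0:ℝ)..r, (‖g t‖ ^ 2 - ρ * ‖y t‖ ^ 2))
      = ∫ t in (0:ℝ)..r, ‖g t - w t • y t‖ ^ 2 := by
    calc (∫ t in (0:ℝ)..r, (‖g t‖ ^ 2 - ρ * ‖y t‖ ^ 2))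
        = ∫ t in (0:ℝ)..r, (‖g t - w t • y t‖ ^ 2 + (w t * m' t + w' t * n t)) :=
          intervalIntegral.integral_congr fun t _ => hintegrand t
      _ = (∫ t in (0:ℝ)..r, ‖g t - w t • y t‖ ^ 2)
            + ∫ t in (0:ℝ)..r, (w t * m' t + w' t * n t) :=
          intervalIntegral.integral_add hsqInt (hwm.add hw'n)
      _ = ∫ t in (0:ℝ)..r, ‖g t - w t • y t‖ ^ 2 := by rw [star, add_zero]
  constructor
  · rw [hE]
    exact intervalIntegral.integral_nonneg hr' fun u _ => sq_nonneg _
  · intro hE0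
    rw [hE] at hE0
    have hsqIoc : MeasureTheory.IntegrableOn (fun t => ‖g t - w t • y t‖ ^ 2) (Set.Ioc 0 r) :=
      (intervalIntegrable_iff_integrableOn_Ioc_of_le hr').mp hsqInt
    have h0 : (∫ t in Set.Ioc (0:ℝ) r, ‖g t - w t • y t‖ ^ 2) = 0 := by
      rw [← intervalIntegral.integral_of_le hr']; exact hE0
    have hae : ∀ᵐ t ∂(volume.restrict (Set.Ioc (0:ℝ) r)), g t = w t • y t := by
      have hz := (MeasureTheory.integral_eq_zero_iff_of_nonneg_ae
        (Filter.Eventually.of_forall fun t => sq_nonneg _) hsqIoc).mp h0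
      filter_upwards [hz] with t ht
      have h2 : ‖g t - w t • y t‖ ^ 2 = 0 := ht
      have h1 : g t - w t • y t = 0 :=
        norm_eq_zero.mp (pow_eq_zero_iff two_ne_zero |>.mp h2)
      exact sub_eq_zero.mp h1
    set c : ℝ → ℝ := fun t => max 0 (min t r) with hcdef
    have hcCont : Continuous c := continuous_const.max (continuous_id.min continuous_const)
    have hcmem : ∀ t, c t ∈ Set.Icc (0:ℝ) r := by
      intro t
      constructor
      · exact le_max_left _ _
      · simp only [hcdef]; exact max_le hr' (min_le_right t r)
    have hceq : ∀ t ∈ Set.Icc (0:ℝ) r, c t = t := by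
      intro t ht
      simp only [hcdef]
      rw [min_eq_left ht.2, max_eq_right ht.1]
    set q : ℝ → ℝ := fun t => 2 * w (c t) * n (c t) with hqdef
    have hqCont : Continuous q := by
      have h1 : Continuous fun t => w (c t) := hwcont.comp_continuous hcCont hcmem
      have h2 : Continuous fun t => n (c t) := hncont.comp_continuous hcCont hcmem
      exact (continuous_const.mul h1).mul h2
    have hmq : ∀ᵐ t ∂(volume.restrict (Set.Ioc (0:ℝ) r)), m' t = q t := by
      filter_upwards [hae, ae_restrict_mem measurableSet_Ioc] with t hgt ht
      have htIcc := Set.Ioc_subset_Icc_self ht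
      simp only [hmdef, hqdef, hceq t htIcc, hgt, real_inner_smul_right,
        real_inner_smul_left, hndef]
      rw [real_inner_self_eq_norm_sq]
      ring
    set N : ℝ → ℝ := fun τ => ∫ t in (0:ℝ)..τ, q t with hNdef
    have hNderiv : ∀ τ : ℝ, HasDerivAt N (q τ) τ := fun τ =>
      intervalIntegral.integral_hasDerivAt_right (hqCont.intervalIntegrable 0 τ)
        (hqCont.stronglyMeasurable.stronglyMeasurableAtFilter) hqCont.continuousAt
    have hNn : ∀ τ ∈ Set.Icc (0:ℝ) r, N τ = n τ := by
      intro τ hτ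
      have heq : (∫ t in (0:ℝ)..τ, q t) = ∫ t in (0:ℝ)..τ, m' t := by
        apply intervalIntegral.integral_congr_ae
        have h1 := (ae_restrict_iff' measurableSet_Ioc).mp hmq
        filter_upwards [h1] with t h2 h3
        have h4 : t ∈ Set.Ioc (0:ℝ) r := by
          rw [Set.uIoc_of_le hτ.1] at h3
          exact Set.Ioc_subset_Ioc_right hτ.2 h3
        exact (h2 h4).symm
      simp only [hNdef]
      rw [heq, hn τ hτ]
    obtain ⟨K, hK⟩ := isCompact_Icc.exists_bound_of_continuousOn
      (show ContinuousOn (fun t => 2 * w t) (Set.Icc (0:ℝ) r) from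
        continuousOn_const.mul hwcont)
    have hNcont : ContinuousOn N (Set.Icc 0 r) := fun t _ =>
      (hNderiv t).continuousAt.continuousWithinAt
    have hbound : ∀ x ∈ Set.Ico (0:ℝ) r, ‖q x‖ ≤ K * ‖N x‖ + 0 := by
      intro x hx
      have hxIcc : x ∈ Set.Icc (0:ℝ) r := ⟨hx.1, hx.2.le⟩
      rw [hNn x hxIcc, add_zero]
      have hqx : q x = (2 * w x) * n x := by
        simp only [hqdef, hceq x hxIcc]
      rw [hqx, norm_mul]
      exact mul_le_mul_of_nonneg_right (hK x hxIcc) (norm_nonneg _)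
    have hgr := norm_le_gronwallBound_of_norm_deriv_right_le (f := N) (f' := q)
      (δ := ‖N 0‖) (K := K) (ε := 0) hNcont
      (fun x hx => (hNderiv x).hasDerivWithinAt) le_rfl hbound
    intro t ht
    have hNt := hgr t ht
    have hN0 : N 0 = 0 := intervalIntegral.integral_same
    rw [hN0, norm_zero, gronwallBound_ε0_δ0] at hNt
    have hNt0 : N t = 0 := norm_le_zero_iff.mp hNt
    have hnt : n t = 0 := by rw [← hNn t ht]; exact hNt0
    have hyt : ‖y t‖ ^ 2 = 0 := hnt
    exact norm_eq_zero.mp (pow_eq_zero_iff two_ne_zero |>.mp hyt)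
end

section
/- Let R : [0,r] → Sym(n−1) be continuous with R(t) ≤ ρI for all t, where ρ ≥ 0 and √ρ·r < π. Then for every y ∈ H¹₀((0,r), ℝ^{n−1}), E(R,y) = ∫₀ʳ (|y'|² − ⟨y, R(t)y⟩) dt ≥ E(ρ,y) ≥ 0, with equality E(R,y)=0 only for y = 0. -/
open Matrix MeasureTheory Set intervalIntegral

private lemma dotSelf_nonneg {m : ℕ} (v : Fin m → ℝ) : 0 ≤ v ⬝ᵥ v :=
  Finset.sum_nonneg fun _ _ => mul_self_nonneg _

private lemma eq_zero_of_dotSelf_eq_zero {m : ℕ} {v : Fin m → ℝ} (h : v ⬝ᵥ v = 0) : v = 0 := by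
  funext i
  have h0 : ∀ j ∈ Finset.univ, (0:ℝ) ≤ v j * v j := fun j _ => mul_self_nonneg _
  have := (Finset.sum_eq_zero_iff_of_nonneg h0).mp h i (Finset.mem_univ i)
  simpa [mul_self_eq_zero] using this

private lemma fubini_triangle {f φ : ℝ → ℝ} {b : ℝ} (hb : 0 ≤ b)
    (hf : IntervalIntegrable f volume 0 b) (hφ : IntervalIntegrable φ volume 0 b) :
    ∫ t in (0:ℝ)..b, f t * (∫ s in (0:ℝ)..t, φ s) =
      ∫ s in (0:ℝ)..b, (∫ t in s..b, f t) * φ s := by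
  set μ := volume.restrict (Ioc (0:ℝ) b) with hμ
  have hfμ : Integrable f μ := (intervalIntegrable_iff_integrableOn_Ioc_of_le hb).mp hf
  have hφμ : Integrable φ μ := (intervalIntegrable_iff_integrableOn_Ioc_of_le hb).mp hφ
  set F : ℝ × ℝ → ℝ := fun p => if p.1 < p.2 then φ p.1 * f p.2 else 0 with hF
  have hFeq : F = ({p : ℝ × ℝ | p.1 < p.2}).indicator (fun p => φ p.1 * f p.2) := by
    funext p; simp [hF, Set.indicator_apply]
  have hFint : Integrable F (μ.prod μ) := by
    rw [hFeq]
    exact (hφμ.mul_prod hfμ).indicator (measurableSet_lt measurable_fst measurable_snd)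
  have hswap : (∫ s, ∫ t, F (s, t) ∂μ ∂μ) = ∫ t, ∫ s, F (s, t) ∂μ ∂μ :=
    integral_integral_swap (f := fun s t => F (s, t)) hFint
  rw [intervalIntegral.integral_of_le hb, intervalIntegral.integral_of_le hb]
  calc
    ∫ t in Ioc (0:ℝ) b, f t * (∫ s in (0:ℝ)..t, φ s)
        = ∫ t, (∫ s, F (s, t) ∂μ) ∂μ := by
          refine setIntegral_congr_fun measurableSet_Ioc (fun t ht => ?_)
          have e1 : (fun s => F (s, t)) = (Iio t).indicator (fun s => φ s * f t) := by
            funext s; simp [hF, Set.indicator_apply]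
          rw [e1, MeasureTheory.integral_indicator measurableSet_Iio, hμ,
            Measure.restrict_restrict measurableSet_Iio]
          have e2 : Iio t ∩ Ioc 0 b = Ioo 0 t := by
            ext s
            simp only [mem_inter_iff, mem_Iio, mem_Ioc, mem_Ioo]
            exact ⟨fun h => ⟨h.2.1, h.1⟩, fun h => ⟨h.2, h.1, h.2.le.trans ht.2⟩⟩
          rw [e2, MeasureTheory.integral_mul_const, ← MeasureTheory.integral_Ioc_eq_integral_Ioo,
            ← intervalIntegral.integral_of_le ht.1.le, mul_comm]
    _ = ∫ s, (∫ t, F (s, t) ∂μ) ∂μ := hswap.symm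
    _ = ∫ s in Ioc (0:ℝ) b, (∫ t in s..b, f t) * φ s := by
          refine setIntegral_congr_fun measurableSet_Ioc (fun s hs => ?_)
          have e1 : (fun t => F (s, t)) = (Ioi s).indicator (fun t => φ s * f t) := by
            funext t; simp [hF, Set.indicator_apply]
          rw [e1, MeasureTheory.integral_indicator measurableSet_Ioi, hμ,
            Measure.restrict_restrict measurableSet_Ioi]
          have e2 : Ioi s ∩ Ioc 0 b = Ioc s b := by
            ext t
            simp only [mem_inter_iff, mem_Ioi, mem_Ioc]
            exact ⟨fun h => ⟨h.1, h.2.2⟩, fun h => ⟨h.1, hs.1.trans h.1, h.2⟩⟩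
          rw [e2, MeasureTheory.integral_const_mul, ← intervalIntegral.integral_of_le hs.2,
            mul_comm]

private lemma sq_primitive_eq {φ : ℝ → ℝ} {t : ℝ} (ht : 0 ≤ t)
    (hφ : IntervalIntegrable φ volume 0 t) :
    (∫ s in (0:ℝ)..t, φ s) * (∫ s in (0:ℝ)..t, φ s) =
      2 * ∫ s in (0:ℝ)..t, (∫ x in (0:ℝ)..s, φ x) * φ s := by
  have hP : ContinuousOn (fun s => ∫ x in (0:ℝ)..s, φ x) (uIcc 0 t) :=
    continuousOn_primitive_interval' hφ left_mem_uIcc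
  have key := fubini_triangle ht hφ hφ
  have h1 : EqOn (fun s => (∫ x in s..t, φ x) * φ s)
      (fun s => (∫ x in (0:ℝ)..t, φ x) * φ s - (∫ x in (0:ℝ)..s, φ x) * φ s) (uIcc 0 t) := by
    intro s hs
    rw [uIcc_of_le ht] at hs
    have e : ∫ x in s..t, φ x = (∫ x in (0:ℝ)..t, φ x) - ∫ x in (0:ℝ)..s, φ x := by
      rw [eq_sub_iff_add_eq, add_comm]
      exact intervalIntegral.integral_add_adjacent_intervals
        (hφ.mono_set (by rw [uIcc_of_le ht, uIcc_of_le hs.1]; exact Icc_subset_Icc le_rfl hs.2))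
        (hφ.mono_set (by rw [uIcc_of_le ht, uIcc_of_le hs.2]; exact Icc_subset_Icc hs.1 le_rfl))
    simp only [e, sub_mul]
  rw [intervalIntegral.integral_congr h1] at key
  have hint2 : IntervalIntegrable (fun s => (∫ x in (0:ℝ)..s, φ x) * φ s) volume 0 t :=
    hφ.continuousOn_mul hP
  rw [intervalIntegral.integral_sub (hφ.const_mul _) hint2,
    intervalIntegral.integral_const_mul] at key
  have e3 : ∫ s in (0:ℝ)..t, φ s * ∫ x in (0:ℝ)..s, φ x
      = ∫ s in (0:ℝ)..t, (∫ x in (0:ℝ)..s, φ x) * φ s := by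
    refine intervalIntegral.integral_congr (fun s _ => ?_); exact mul_comm _ _
  rw [e3] at key
  linarith

/-- For continuous symmetric `R(t) ≤ ρI`, `0 ≤ ρ`, `0 < r`, `√ρ·r < π`, and
`y ∈ H¹₀((0,r), ℝ^{n−1})` (given as `y t = ∫₀ᵗ g` with `g` square-integrable
and `y r = 0`): `E(R,y) = ∫₀ʳ (|y'|² − ⟨y, R y⟩) ≥ E(ρ,y) ≥ 0`, and
`E(R,y) = 0` only for `y ≡ 0` on `[0,r]`. -/
theorem energy_ge_comparison {m : ℕ} {ρ r : ℝ}
    (hρ : 0 ≤ ρ) (hr : 0 < r) (hρr : Real.sqrt ρ * r < Real.pi)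
    (R : ℝ → Matrix (Fin m) (Fin m) ℝ)
    (hRcont : ∀ i j, Continuous fun t => R t i j)
    (hRsymm : ∀ t ∈ Set.Icc (0:ℝ) r, (R t).IsSymm)
    (hRle : ∀ t ∈ Set.Icc (0:ℝ) r,
      (ρ • (1 : Matrix (Fin m) (Fin m) ℝ) - R t).PosSemidef)
    (g : ℝ → Fin m → ℝ)
    (hg : IntervalIntegrable g MeasureTheory.volume 0 r)
    (hg2 : IntervalIntegrable (fun t => g t ⬝ᵥ g t) MeasureTheory.volume 0 r)
    (y : ℝ → Fin m → ℝ)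
    (hy : ∀ t, y t = ∫ s in (0:ℝ)..t, g s)
    (hyr : y r = 0) :
    (0 ≤ ∫ t in (0:ℝ)..r, (g t ⬝ᵥ g t - ρ * (y t ⬝ᵥ y t))) ∧
    (∫ t in (0:ℝ)..r, (g t ⬝ᵥ g t - ρ * (y t ⬝ᵥ y t))) ≤
      (∫ t in (0:ℝ)..r, (g t ⬝ᵥ g t - y t ⬝ᵥ (R t).mulVec (y t))) ∧
    ((∫ t in (0:ℝ)..r, (g t ⬝ᵥ g t - y t ⬝ᵥ (R t).mulVec (y t))) = 0 →
      ∀ t ∈ Set.Icc (0:ℝ) r, y t = 0) := by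
  have hr' : (0:ℝ) ≤ r := hr.le
  have huIcc : uIcc (0:ℝ) r = Icc 0 r := uIcc_of_le hr'
  -- continuity of y on [0, r]
  have hycont : ContinuousOn y (Icc 0 r) := by
    have h1 : ContinuousOn (fun t => ∫ s in (0:ℝ)..t, g s) (uIcc 0 r) :=
      continuousOn_primitive_interval' hg left_mem_uIcc
    rw [huIcc] at h1
    exact h1.congr (fun t _ => hy t)
  -- coordinates of g are interval integrable
  have hgi : ∀ i, IntervalIntegrable (fun t => g t i) volume 0 r := by
    intro i
    refine hg.mono_fun ?_ ?_
    · exact (continuous_apply i).comp_aestronglyMeasurable hg.def'.aestronglyMeasurable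
    · exact Filter.Eventually.of_forall fun t => norm_le_pi_norm (g t) i
  have hyi_cont : ∀ i, ContinuousOn (fun t => y t i) (Icc 0 r) :=
    fun i => (continuous_apply i).comp_continuousOn hycont
  -- interval integrability of y ⬝ g
  have hyg_int : IntervalIntegrable (fun t => y t ⬝ᵥ g t) volume 0 r := by
    have h1 : ∀ i ∈ Finset.univ, IntervalIntegrable (fun t => y t i * g t i) volume 0 r :=
      fun i _ => (hgi i).continuousOn_mul (by rw [huIcc]; exact hyi_cont i)
    have h2 := IntervalIntegrable.sum Finset.univ h1
    have h3 : (fun t => y t ⬝ᵥ g t) = (∑ i : Fin m, fun t => y t i * g t i) := by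
      funext t; simp [dotProduct, Finset.sum_apply]
    rw [h3]; exact h2
  have hyy_cont : ContinuousOn (fun t => y t ⬝ᵥ y t) (Icc 0 r) := by
    apply continuousOn_finset_sum
    intro i _
    exact (hyi_cont i).mul (hyi_cont i)
  -- the square identity
  have hq : ∀ t ∈ Icc (0:ℝ) r, y t ⬝ᵥ y t = ∫ s in (0:ℝ)..t, 2 * (y s ⬝ᵥ g s) := by
    intro t ht
    have hsub : uIcc (0:ℝ) t ⊆ uIcc (0:ℝ) r := by
      rw [huIcc, uIcc_of_le ht.1]; exact Icc_subset_Icc le_rfl ht.2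
    have hcoord : ∀ s ∈ Icc (0:ℝ) t, ∀ i, y s i = ∫ x in (0:ℝ)..s, g x i := by
      intro s hs i
      have hgs : IntervalIntegrable g volume 0 s :=
        hg.mono_set (by rw [huIcc, uIcc_of_le hs.1]; exact Icc_subset_Icc le_rfl (hs.2.trans ht.2))
      rw [hy s]
      exact ((ContinuousLinearMap.proj (R := ℝ) (φ := fun _ : Fin m => ℝ)
        i).intervalIntegral_comp_comm hgs).symm
    have h1 : ∀ i, y t i * y t i = 2 * ∫ s in (0:ℝ)..t, y s i * g s i := by
      intro i
      have hφi : IntervalIntegrable (fun u => g u i) volume 0 t := (hgi i).mono_set hsub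
      have := sq_primitive_eq ht.1 hφi
      rw [← hcoord t (right_mem_Icc.mpr ht.1) i] at this
      rw [this]
      congr 1
      refine intervalIntegral.integral_congr (fun s hs => ?_)
      rw [uIcc_of_le ht.1] at hs
      rw [← hcoord s hs i]
    have h2 : ∀ i ∈ Finset.univ, IntervalIntegrable (fun s => y s i * g s i) volume 0 t :=
      fun i _ => ((hgi i).continuousOn_mul (by rw [huIcc]; exact hyi_cont i)).mono_set hsub
    calc y t ⬝ᵥ y t = ∑ i, y t i * y t i := rfl
      _ = ∑ i, 2 * ∫ s in (0:ℝ)..t, y s i * g s i := by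
            exact Finset.sum_congr rfl (fun i _ => h1 i)
      _ = 2 * ∑ i, ∫ s in (0:ℝ)..t, y s i * g s i := by rw [Finset.mul_sum]
      _ = 2 * ∫ s in (0:ℝ)..t, ∑ i, y s i * g s i := by
            rw [← intervalIntegral.integral_finset_sum h2]
      _ = ∫ s in (0:ℝ)..t, 2 * (y s ⬝ᵥ g s) := by
            rw [intervalIntegral.integral_const_mul]; rfl
  -- the comparison function h
  set c := Real.sqrt ρ with hcdef
  set δ := (Real.pi - c * r) / 2 with hδdef
  have hδ : 0 < δ := by rw [hδdef]; linarith
  have hc : 0 ≤ c := Real.sqrt_nonneg _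
  have hc2 : c ^ 2 = ρ := Real.sq_sqrt hρ
  set h : ℝ → ℝ := fun t => c * (Real.cos (c * t + δ) / Real.sin (c * t + δ)) with hhdef
  have hsin : ∀ t ∈ Icc (0:ℝ) r, 0 < Real.sin (c * t + δ) := by
    intro t ht
    apply Real.sin_pos_of_pos_of_lt_pi
    · have : 0 ≤ c * t := mul_nonneg hc ht.1
      linarith
    · have h1 : c * t ≤ c * r := mul_le_mul_of_nonneg_left ht.2 hc
      rw [hδdef]; linarith
  have hderiv : ∀ t ∈ Icc (0:ℝ) r, HasDerivAt h (-(ρ + (h t) ^ 2)) t := by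
    intro t ht
    have hst := (hsin t ht).ne'
    have hu : HasDerivAt (fun x : ℝ => c * x + δ) c t := by
      simpa using ((hasDerivAt_id t).const_mul c).add_const δ
    have hcos : HasDerivAt (fun x => Real.cos (c * x + δ)) (-Real.sin (c * t + δ) * c) t := hu.cos
    have hsin' : HasDerivAt (fun x => Real.sin (c * x + δ)) (Real.cos (c * t + δ) * c) t := hu.sin
    have hdiv := (hcos.div hsin' hst).const_mul c
    refine hdiv.congr_deriv ?_
    have hpy := Real.sin_sq_add_cos_sq (c * t + δ)
    rw [hhdef]
    field_simp
    nlinarith [hpy, hc2, sq_nonneg (Real.sin (c * t + δ)), sq_nonneg (Real.cos (c * t + δ))]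
  have hhcont : ContinuousOn h (Icc 0 r) :=
    fun t ht => ((hderiv t ht).continuousAt).continuousWithinAt
  have hhcont' : ContinuousOn h (uIcc 0 r) := by rw [huIcc]; exact hhcont
  -- FTC for h
  have hFTC : ∀ s ∈ Icc (0:ℝ) r, (∫ t in s..r, (ρ + (h t) ^ 2)) = h s - h r := by
    intro s hs
    have hD : ∀ x ∈ uIcc s r, HasDerivAt (fun u => -h u) (ρ + (h x) ^ 2) x := by
      intro x hx
      rw [uIcc_of_le hs.2] at hx
      have hx' : x ∈ Icc (0:ℝ) r := ⟨hs.1.trans hx.1, hx.2⟩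
      have hn := (hderiv x hx').neg
      rw [neg_neg] at hn
      exact hn
    have hint : IntervalIntegrable (fun t => ρ + (h t) ^ 2) volume s r := by
      apply ContinuousOn.intervalIntegrable
      have hmono : ContinuousOn h (uIcc s r) := by
        apply hhcont.mono; rw [uIcc_of_le hs.2]; exact Icc_subset_Icc hs.1 le_rfl
      exact continuousOn_const.add (hmono.pow 2)
    have := intervalIntegral.integral_eq_sub_of_hasDerivAt hD hint
    rw [this]; ring
  -- interval integrability facts
  have hφ2 : IntervalIntegrable (fun s => 2 * (y s ⬝ᵥ g s)) volume 0 r := hyg_int.const_mul 2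
  have hyyc' : ContinuousOn (fun t => y t ⬝ᵥ y t) (uIcc 0 r) := by rw [huIcc]; exact hyy_cont
  have hρh2 : IntervalIntegrable (fun t => ρ + (h t) ^ 2) volume 0 r :=
    ContinuousOn.intervalIntegrable (continuousOn_const.add (hhcont'.pow 2))
  have hhyg_int : IntervalIntegrable (fun t => 2 * h t * (y t ⬝ᵥ g t)) volume 0 r :=
    hyg_int.continuousOn_mul (continuousOn_const.mul hhcont')
  have hh2yy_int : IntervalIntegrable (fun t => (h t) ^ 2 * (y t ⬝ᵥ y t)) volume 0 r :=
    ContinuousOn.intervalIntegrable ((hhcont'.pow 2).mul hyyc')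
  have hρyy_int : IntervalIntegrable (fun t => ρ * (y t ⬝ᵥ y t)) volume 0 r :=
    ContinuousOn.intervalIntegrable (continuousOn_const.mul hyyc')
  -- ∫ 2(y⬝g) = 0
  have hint0 : (∫ s in (0:ℝ)..r, 2 * (y s ⬝ᵥ g s)) = 0 := by
    have := hq r (right_mem_Icc.mpr hr')
    rw [hyr] at this
    simpa using this.symm
  -- key identity via Fubini
  have hKEY : (∫ t in (0:ℝ)..r, (ρ + (h t) ^ 2) * (y t ⬝ᵥ y t))
      = ∫ s in (0:ℝ)..r, 2 * h s * (y s ⬝ᵥ g s) := by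
    have e1 : (∫ t in (0:ℝ)..r, (ρ + (h t) ^ 2) * (y t ⬝ᵥ y t))
        = ∫ t in (0:ℝ)..r, (ρ + (h t) ^ 2) * (∫ s in (0:ℝ)..t, 2 * (y s ⬝ᵥ g s)) := by
      refine intervalIntegral.integral_congr (fun t ht => ?_)
      rw [huIcc] at ht
      rw [hq t ht]
    rw [e1, fubini_triangle hr' hρh2 hφ2]
    have e2 : EqOn (fun s => (∫ t in s..r, (ρ + (h t) ^ 2)) * (2 * (y s ⬝ᵥ g s)))
        (fun s => 2 * h s * (y s ⬝ᵥ g s) - h r * (2 * (y s ⬝ᵥ g s))) (uIcc 0 r) := by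
      intro s hs
      rw [huIcc] at hs
      simp only
      rw [hFTC s hs]; ring
    rw [intervalIntegral.integral_congr e2,
      intervalIntegral.integral_sub hhyg_int (hφ2.const_mul _),
      intervalIntegral.integral_const_mul, hint0, mul_zero, sub_zero]
  -- expansion of the nonnegative integrand
  have hEexp : ∀ t, (g t - h t • y t) ⬝ᵥ (g t - h t • y t)
      = g t ⬝ᵥ g t - 2 * h t * (y t ⬝ᵥ g t) + (h t) ^ 2 * (y t ⬝ᵥ y t) := by
    intro t
    simp only [sub_dotProduct, dotProduct_sub, smul_dotProduct,
      dotProduct_smul, smul_eq_mul, dotProduct_comm (g t) (y t)]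
    ring
  have hNN_int : IntervalIntegrable
      (fun t => (g t - h t • y t) ⬝ᵥ (g t - h t • y t)) volume 0 r := by
    have e : (fun t => (g t - h t • y t) ⬝ᵥ (g t - h t • y t))
        = fun t => g t ⬝ᵥ g t - 2 * h t * (y t ⬝ᵥ g t) + (h t) ^ 2 * (y t ⬝ᵥ y t) :=
      funext hEexp
    rw [e]
    exact (hg2.sub hhyg_int).add hh2yy_int
  -- value of the nonnegative integral
  have hNNval : (∫ t in (0:ℝ)..r, (g t - h t • y t) ⬝ᵥ (g t - h t • y t))
      = ∫ t in (0:ℝ)..r, (g t ⬝ᵥ g t - ρ * (y t ⬝ᵥ y t)) := by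
    have e : (fun t => (g t - h t • y t) ⬝ᵥ (g t - h t • y t))
        = fun t => g t ⬝ᵥ g t - 2 * h t * (y t ⬝ᵥ g t) + (h t) ^ 2 * (y t ⬝ᵥ y t) :=
      funext hEexp
    rw [e, intervalIntegral.integral_add (hg2.sub hhyg_int) hh2yy_int,
      intervalIntegral.integral_sub hg2 hhyg_int,
      intervalIntegral.integral_sub hg2 hρyy_int, ← hKEY]
    have e3 : (∫ t in (0:ℝ)..r, (ρ + (h t) ^ 2) * (y t ⬝ᵥ y t))
        = (∫ t in (0:ℝ)..r, ρ * (y t ⬝ᵥ y t)) + ∫ t in (0:ℝ)..r, (h t) ^ 2 * (y t ⬝ᵥ y t) := by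
      rw [← intervalIntegral.integral_add hρyy_int hh2yy_int]
      refine intervalIntegral.integral_congr (fun t _ => ?_)
      ring
    rw [e3]; ring
  have part1 : 0 ≤ ∫ t in (0:ℝ)..r, (g t ⬝ᵥ g t - ρ * (y t ⬝ᵥ y t)) := by
    rw [← hNNval]
    exact intervalIntegral.integral_nonneg hr' (fun u _ => dotSelf_nonneg _)
  -- part 2
  have hRy_cont : ContinuousOn (fun t => y t ⬝ᵥ (R t).mulVec (y t)) (Icc 0 r) := by
    simp only [dotProduct, Matrix.mulVec]
    apply continuousOn_finset_sum
    intro i _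
    refine (hyi_cont i).mul ?_
    apply continuousOn_finset_sum
    intro j _
    exact ((hRcont i j).continuousOn).mul (hyi_cont j)
  have hgR_int : IntervalIntegrable
      (fun t => g t ⬝ᵥ g t - y t ⬝ᵥ (R t).mulVec (y t)) volume 0 r := by
    refine hg2.sub (ContinuousOn.intervalIntegrable ?_)
    rw [huIcc]; exact hRy_cont
  have hgρ_int : IntervalIntegrable
      (fun t => g t ⬝ᵥ g t - ρ * (y t ⬝ᵥ y t)) volume 0 r := hg2.sub hρyy_int
  have hpointwise : ∀ t ∈ Icc (0:ℝ) r,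
      g t ⬝ᵥ g t - ρ * (y t ⬝ᵥ y t) ≤ g t ⬝ᵥ g t - y t ⬝ᵥ (R t).mulVec (y t) := by
    intro t ht
    have hps := (hRle t ht).dotProduct_mulVec_nonneg (y t)
    rw [star_trivial, Matrix.sub_mulVec, Matrix.smul_mulVec, Matrix.one_mulVec,
      dotProduct_sub, dotProduct_smul, smul_eq_mul] at hps
    linarith
  have part2 : (∫ t in (0:ℝ)..r, (g t ⬝ᵥ g t - ρ * (y t ⬝ᵥ y t)))
      ≤ ∫ t in (0:ℝ)..r, (g t ⬝ᵥ g t - y t ⬝ᵥ (R t).mulVec (y t)) :=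
    intervalIntegral.integral_mono_on hr' hgρ_int hgR_int hpointwise
  refine ⟨part1, part2, ?_⟩
  -- part 3
  intro hE0 t ht
  have h0 : (∫ t in (0:ℝ)..r, (g t ⬝ᵥ g t - ρ * (y t ⬝ᵥ y t))) = 0 :=
    le_antisymm (part2.trans (le_of_eq hE0)) part1
  have hNN0 : (∫ t in (0:ℝ)..r, (g t - h t • y t) ⬝ᵥ (g t - h t • y t)) = 0 := by
    rw [hNNval]; exact h0
  have hae : (fun t => (g t - h t • y t) ⬝ᵥ (g t - h t • y t))
      =ᵐ[volume.restrict (Ioc 0 r)] 0 := by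
    refine (intervalIntegral.integral_eq_zero_iff_of_le_of_nonneg_ae hr' ?_ hNN_int).mp hNN0
    exact Filter.Eventually.of_forall (fun s => dotSelf_nonneg _)
  have haev : ∀ᵐ s ∂(volume.restrict (Ioc (0:ℝ) r)), g s = h s • y s := by
    filter_upwards [hae] with s hs
    have := eq_zero_of_dotSelf_eq_zero (v := g s - h s • y s) hs
    exact sub_eq_zero.mp this
  -- y is an integral of h • y
  have hyint2 : ∀ x ∈ Icc (0:ℝ) r, y x = ∫ s in (0:ℝ)..x, h s • y s := by
    intro x hx
    rw [hy x, intervalIntegral.integral_of_le hx.1, intervalIntegral.integral_of_le hx.1]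
    refine integral_congr_ae ?_
    have := ae_restrict_of_ae_restrict_of_subset (Ioc_subset_Ioc_right hx.2) haev
    filter_upwards [this] with s hs using hs
  -- Gronwall
  obtain ⟨K, hK⟩ := isCompact_Icc.exists_bound_of_continuousOn hhcont
  set K' := max K 0 with hK'def
  have hK'0 : 0 ≤ K' := le_max_right _ _
  have hK' : ∀ s ∈ Icc (0:ℝ) r, ‖h s‖ ≤ K' := fun s hs => (hK s hs).trans (le_max_left _ _)
  have hnycont : ContinuousOn (fun s => ‖y s‖) (Icc 0 r) := hycont.norm
  have hnyint : ∀ x ∈ Icc (0:ℝ) r, IntervalIntegrable (fun s => ‖y s‖) volume 0 x := by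
    intro x hx
    apply ContinuousOn.intervalIntegrable
    apply hnycont.mono
    rw [uIcc_of_le hx.1]
    exact Icc_subset_Icc le_rfl hx.2
  set ψ : ℝ → ℝ := fun x => ∫ s in (0:ℝ)..x, ‖y s‖ with hψdef
  have hψcont : ContinuousOn ψ (Icc 0 r) := by
    have h1 := continuousOn_primitive_interval'
      (hnyint r (right_mem_Icc.mpr hr')) (left_mem_uIcc (a := (0:ℝ)) (b := r))
    rw [huIcc] at h1
    exact h1
  have hψnonneg : ∀ x ∈ Icc (0:ℝ) r, 0 ≤ ψ x :=
    fun x hx => intervalIntegral.integral_nonneg hx.1 (fun u _ => norm_nonneg _)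
  have hineq : ∀ x ∈ Icc (0:ℝ) r, ‖y x‖ ≤ K' * ψ x := by
    intro x hx
    have hIsub : Icc (0:ℝ) x ⊆ Icc 0 r := Icc_subset_Icc le_rfl hx.2
    have hint1 : IntervalIntegrable (fun s => ‖h s • y s‖) volume 0 x := by
      apply ContinuousOn.intervalIntegrable
      rw [uIcc_of_le hx.1]
      exact ((hhcont.mono hIsub).smul (hycont.mono hIsub)).norm
    have hint2 : IntervalIntegrable (fun s => K' * ‖y s‖) volume 0 x :=
      (hnyint x hx).const_mul _
    calc ‖y x‖ = ‖∫ s in (0:ℝ)..x, h s • y s‖ := by rw [hyint2 x hx]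
      _ ≤ ∫ s in (0:ℝ)..x, ‖h s • y s‖ :=
          intervalIntegral.norm_integral_le_integral_norm hx.1
      _ ≤ ∫ s in (0:ℝ)..x, K' * ‖y s‖ := by
          refine intervalIntegral.integral_mono_on hx.1 hint1 hint2 (fun s hs => ?_)
          rw [norm_smul]
          exact mul_le_mul_of_nonneg_right (hK' s (hIsub hs)) (norm_nonneg _)
      _ = K' * ψ x := intervalIntegral.integral_const_mul _ _
  have hd : ∀ x ∈ Ico (0:ℝ) r, HasDerivWithinAt ψ (‖y x‖) (Ici x) x := by
    intro x hx
    have hmem : Icc (0:ℝ) r ∈ nhdsWithin x (Ioi x) := by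
      have h1 : Iic r ∈ nhdsWithin x (Ioi x) := mem_nhdsWithin_of_mem_nhds (Iic_mem_nhds hx.2)
      have h2 : Ioi x ∈ nhdsWithin x (Ioi x) := self_mem_nhdsWithin
      filter_upwards [h1, h2] with s hs1 hs2
      exact ⟨hx.1.trans hs2.le, hs1⟩
    refine intervalIntegral.integral_hasDerivWithinAt_right
      (hnyint x ⟨hx.1, hx.2.le⟩) ⟨Icc 0 r, hmem, ?_⟩ ?_
    · exact hnycont.aestronglyMeasurable measurableSet_Icc
    · exact (hnycont.continuousWithinAt ⟨hx.1, hx.2.le⟩).mono_of_mem_nhdsWithin hmem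
  have hg0 : ∀ x ∈ Icc (0:ℝ) r, ‖ψ x‖ ≤ gronwallBound 0 K' 0 (x - 0) := by
    refine norm_le_gronwallBound_of_norm_deriv_right_le hψcont hd (by simp [hψdef]) ?_
    intro x hx
    have hx' : x ∈ Icc (0:ℝ) r := ⟨hx.1, hx.2.le⟩
    have h1 := hineq x hx'
    have h2 : ‖ψ x‖ = ψ x := Real.norm_of_nonneg (hψnonneg x hx')
    rw [Real.norm_eq_abs (‖y x‖), abs_of_nonneg (norm_nonneg (y x)), h2]
    linarith
  have hψ0 : ∀ x ∈ Icc (0:ℝ) r, ψ x = 0 := by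
    intro x hx
    have h1 := hg0 x hx
    rw [gronwallBound_ε0_δ0] at h1
    have h2 := hψnonneg x hx
    have h3 : ‖ψ x‖ = ψ x := Real.norm_of_nonneg h2
    rw [h3] at h1
    linarith
  have := hineq t ht
  rw [hψ0 t ht, mul_zero] at this
  exact norm_le_zero_iff.mp this
end

section
/- Under the hypotheses R(t) ≤ ρI, ρ ≥ 0, √ρ·r < π, the boundary value problem y'' = −R(t)y, y(0) = 0, y(r) = v has a unique solution for each v ∈ ℝ^{n−1}. -/
open Matrix Set MeasureTheory intervalIntegral

variable {E : Type*} [NormedAddCommGroup E] [NormedSpace ℝ E] [CompleteSpace E]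

noncomputable def picardMap (F : ℝ → E → E)
    (hF : ∀ u : ℝ → E, Continuous u → Continuous fun t => F t (u t))
    (a b : ℝ) (hab : a ≤ b) (x₀ : E) (u : C(Icc a b, E)) : C(Icc a b, E) := by
  have hg : Continuous fun s => F s (u (projIcc a b hab s)) :=
    hF _ (u.continuous.comp continuous_projIcc)
  refine ContinuousMap.mk (fun t => x₀ + ∫ s in a..(t:ℝ), F s (u (projIcc a b hab s))) ?_
  have : Continuous fun t : ℝ => x₀ + ∫ s in a..t, F s (u (projIcc a b hab s)) := by
    refine continuous_iff_continuousAt.2 fun t => ?_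
    exact (continuousAt_const.add (integral_hasDerivAt_right
      (hg.intervalIntegrable _ _) hg.stronglyMeasurable.stronglyMeasurableAtFilter
      hg.continuousAt).continuousAt)
  exact this.comp continuous_subtype_val

theorem picardMap_apply (F : ℝ → E → E) (hF) (a b : ℝ) (hab : a ≤ b) (x₀ : E)
    (u : C(Icc a b, E)) (t : Icc a b) :
    picardMap F hF a b hab x₀ u t = x₀ + ∫ s in a..(t:ℝ), F s (u (projIcc a b hab s)) := rfl

theorem picard_exists (F : ℝ → E → E) {K : ℝ} (hK : 0 ≤ K)
    (hFlip : ∀ t x y, ‖F t x - F t y‖ ≤ K * ‖x - y‖)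
    (hF : ∀ u : ℝ → E, Continuous u → Continuous fun t => F t (u t))
    (a b : ℝ) (hab : a ≤ b) (x₀ : E) :
    ∃ Y : ℝ → E, Y a = x₀ ∧ ∀ t ∈ Icc a b, HasDerivAt Y (F t (Y t)) t := by
  classical
  set X := C(Icc a b, E) with hX
  have hne : Nonempty X := ⟨ContinuousMap.const _ 0⟩
  set Φ : X → X := picardMap F hF a b hab x₀ with hΦ
  have gcont : ∀ u : X, Continuous fun s => F s (u (projIcc a b hab s)) := fun u =>
    hF _ (u.continuous.comp continuous_projIcc)
  -- key iterate estimate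
  have key : ∀ n : ℕ, ∀ u w : X, ∀ t : Icc a b,
      dist ((Φ^[n] u) t) ((Φ^[n] w) t) ≤ (K * ((t:ℝ) - a))^n / n.factorial * dist u w := by
    intro n
    induction n with
    | zero =>
      intro u w t
      simpa using ContinuousMap.dist_apply_le_dist t
    | succ n ih =>
      intro u w t
      rw [Function.iterate_succ_apply', Function.iterate_succ_apply']
      set U := Φ^[n] u with hU
      set W := Φ^[n] w with hW
      have hta : a ≤ (t:ℝ) := t.2.1
      have htb : (t:ℝ) ≤ b := t.2.2
      have hgU := gcont U
      have hgW := gcont W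
      have hsub : (Φ U) t - (Φ W) t
          = ∫ s in a..(t:ℝ), (F s (U (projIcc a b hab s)) - F s (W (projIcc a b hab s))) := by
        rw [hΦ, picardMap_apply, picardMap_apply, add_sub_add_left_eq_sub,
          intervalIntegral.integral_sub (hgU.intervalIntegrable _ _) (hgW.intervalIntegrable _ _)]
      have hbound : ∀ s ∈ Set.uIoc a (t:ℝ),
          ‖F s (U (projIcc a b hab s)) - F s (W (projIcc a b hab s))‖
            ≤ K * ((K * (s - a))^n / n.factorial * dist u w) := by
        intro s hs
        rw [uIoc_of_le hta] at hs
        have hsmem : s ∈ Icc a b := ⟨hs.1.le, hs.2.trans htb⟩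
        have hproj : projIcc a b hab s = ⟨s, hsmem⟩ := projIcc_of_mem hab hsmem
        calc ‖F s (U (projIcc a b hab s)) - F s (W (projIcc a b hab s))‖
            ≤ K * ‖U (projIcc a b hab s) - W (projIcc a b hab s)‖ := hFlip _ _ _
          _ = K * dist (U ⟨s, hsmem⟩) (W ⟨s, hsmem⟩) := by rw [hproj, dist_eq_norm]
          _ ≤ K * ((K * (s - a))^n / n.factorial * dist u w) := by
              have := ih u w ⟨s, hsmem⟩
              exact mul_le_mul_of_nonneg_left this hK
      have hcont_bound : Continuous fun s : ℝ => K * ((K * (s - a))^n / n.factorial * dist u w) :=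
        by fun_prop
      have hIle := intervalIntegral.norm_integral_le_abs_of_norm_le
        (μ := volume) (f := fun s => F s (U (projIcc a b hab s)) - F s (W (projIcc a b hab s)))
        (g := fun s => K * ((K * (s - a))^n / n.factorial * dist u w))
        (ae_restrict_of_forall_mem measurableSet_uIoc hbound)
        (hcont_bound.intervalIntegrable _ _)
      have hval : (∫ s in a..(t:ℝ), K * ((K * (s - a))^n / n.factorial * dist u w))
          = (K * ((t:ℝ) - a))^(n+1) / (n+1).factorial * dist u w := by
        have h1 : (∫ s in a..(t:ℝ), (s - a)^n) = ((t:ℝ) - a)^(n+1) / (n+1) := by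
          rw [intervalIntegral.integral_comp_sub_right (fun x => x^n) a, integral_pow]
          norm_num
        have : (fun s : ℝ => K * ((K * (s - a))^n / n.factorial * dist u w))
            = fun s : ℝ => (K^(n+1) / n.factorial * dist u w) * (s - a)^n := by
          funext s; rw [mul_pow]; ring
        rw [this, intervalIntegral.integral_const_mul, h1, Nat.factorial_succ, mul_pow]
        have hnf : (n.factorial : ℝ) ≠ 0 := by positivity
        field_simp
        push_cast
        ring
      rw [dist_eq_norm, hsub]
      refine hIle.trans ?_
      have hnn : (0:ℝ) ≤ K * ((t:ℝ) - a) := mul_nonneg hK (sub_nonneg.2 hta)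
      rw [hval, abs_of_nonneg (mul_nonneg (div_nonneg (pow_nonneg hnn _)
        (Nat.cast_nonneg _)) dist_nonneg)]
  -- a contracting iterate
  have hconv := FloorSemiring.tendsto_pow_div_factorial_atTop (K * (b - a))
  have hev : ∀ᶠ n : ℕ in Filter.atTop, (K * (b - a))^n / n.factorial < 1 := by
    have := hconv.eventually (gt_mem_nhds (by norm_num : (0:ℝ) < 1))
    exact this
  obtain ⟨n, hn⟩ := hev.exists
  have hKba : (0:ℝ) ≤ K * (b - a) := mul_nonneg hK (sub_nonneg.2 hab)
  set c : NNReal := ⟨(K * (b - a))^n / n.factorial,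
    div_nonneg (pow_nonneg hKba _) (Nat.cast_nonneg _)⟩ with hc
  have hc1 : c < 1 := by
    rw [← NNReal.coe_lt_coe]
    exact_mod_cast hn
  have hlip : LipschitzWith c (Φ^[n]) := by
    refine LipschitzWith.of_dist_le_mul fun u w => ?_
    refine (ContinuousMap.dist_le (mul_nonneg c.2 dist_nonneg)).2 fun t => ?_
    refine (key n u w t).trans ?_
    have h1 : (K * ((t:ℝ) - a))^n ≤ (K * (b - a))^n := by
      apply pow_le_pow_left₀ (by nlinarith [t.2.1, t.2.2] : (0:ℝ) ≤ K * ((t:ℝ) - a))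
      nlinarith [t.2.2, hK]
    have : dist u w ≥ 0 := dist_nonneg
    calc (K * ((t:ℝ) - a))^n / n.factorial * dist u w
        ≤ (K * (b - a))^n / n.factorial * dist u w := by
          apply mul_le_mul_of_nonneg_right _ dist_nonneg
          exact div_le_div_of_nonneg_right h1 (by positivity) |>.trans_eq rfl
      _ = c * dist u w := rfl
  have hC : ContractingWith c (Φ^[n]) := ⟨hc1, hlip⟩
  set u₀ : X := hC.fixedPoint (Φ^[n]) with hu₀
  have hfix : Φ u₀ = u₀ := hC.isFixedPt_fixedPoint_iterate
  -- final solution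
  refine ⟨fun t => x₀ + ∫ s in a..t, F s (u₀ (projIcc a b hab s)), by simp, ?_⟩
  intro t ht
  have hg := gcont u₀
  have hder : HasDerivAt (fun t => x₀ + ∫ s in a..t, F s (u₀ (projIcc a b hab s)))
      (F t (u₀ (projIcc a b hab t))) t := by
    exact (integral_hasDerivAt_right (hg.intervalIntegrable _ _)
      hg.stronglyMeasurable.stronglyMeasurableAtFilter hg.continuousAt).const_add x₀
  have hproj : projIcc a b hab t = ⟨t, ht⟩ := projIcc_of_mem hab ht
  have h2 : Φ u₀ ⟨t, ht⟩ = u₀ ⟨t, ht⟩ := by rw [hfix]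
  have hYt : x₀ + (∫ s in a..t, F s (u₀ (projIcc a b hab s))) = u₀ (projIcc a b hab t) := by
    rw [hproj, ← h2]
    rfl
  rw [← hYt] at hder
  simpa using hder

theorem jacobi_bvp_zero {m : ℕ} {ρ r : ℝ}
    (hρ : 0 ≤ ρ) (hr : 0 < r) (hρr : Real.sqrt ρ * r < Real.pi)
    (R : ℝ → Matrix (Fin m) (Fin m) ℝ)
    (hRcont : ∀ i j, Continuous fun t => R t i j)
    (hRle : ∀ t ∈ Set.Icc (0:ℝ) r,
      (ρ • (1 : Matrix (Fin m) (Fin m) ℝ) - R t).PosSemidef)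
    (w dw : ℝ → Fin m → ℝ)
    (hw : ∀ t ∈ Set.Icc (0:ℝ) r, HasDerivAt w (dw t) t)
    (hdw : ∀ t ∈ Set.Icc (0:ℝ) r, HasDerivAt dw (-(R t).mulVec (w t)) t)
    (h0 : w 0 = 0) (hrr : w r = 0) :
    ∀ t ∈ Set.Icc (0:ℝ) r, w t = 0 := by
  classical
  set k : ℝ := Real.pi / r with hk
  have hkpos : 0 < k := div_pos Real.pi_pos hr
  -- component derivatives
  have hwc : ∀ i, ∀ t ∈ Icc (0:ℝ) r, HasDerivAt (fun t => w t i) (dw t i) t :=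
    fun i t ht => (hasDerivAt_pi.1 (hw t ht)) i
  have hdwc : ∀ i, ∀ t ∈ Icc (0:ℝ) r,
      HasDerivAt (fun t => dw t i) (-(R t).mulVec (w t) i) t := by
    intro i t ht
    have := (hasDerivAt_pi.1 (hdw t ht)) i
    simpa using this
  -- continuity
  have hwconti : ∀ i, ContinuousOn (fun t => w t i) (Icc (0:ℝ) r) :=
    fun i t ht => ((hwc i t ht).continuousAt).continuousWithinAt
  have hdwconti : ∀ i, ContinuousOn (fun t => dw t i) (Icc (0:ℝ) r) :=
    fun i t ht => ((hdwc i t ht).continuousAt).continuousWithinAt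
  -- scalar quantities
  set S : ℝ → ℝ := fun t => ∑ i, w t i * w t i with hSdef
  set P : ℝ → ℝ := fun t => ∑ i, w t i * dw t i with hPdef
  set Q : ℝ → ℝ := fun t => ∑ i, dw t i * dw t i with hQdef
  set RW : ℝ → ℝ := fun t => ∑ i, w t i * (R t).mulVec (w t) i with hRWdef
  have hScont : ContinuousOn S (Icc (0:ℝ) r) :=
    continuousOn_finset_sum _ fun i _ => (hwconti i).mul (hwconti i)
  have hPcont : ContinuousOn P (Icc (0:ℝ) r) :=
    continuousOn_finset_sum _ fun i _ => (hwconti i).mul (hdwconti i)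
  have hQcont : ContinuousOn Q (Icc (0:ℝ) r) :=
    continuousOn_finset_sum _ fun i _ => (hdwconti i).mul (hdwconti i)
  have hmvc : ∀ i, ContinuousOn (fun t => (R t).mulVec (w t) i) (Icc (0:ℝ) r) := by
    intro i
    have heq : (fun t => (R t).mulVec (w t) i) = fun t => ∑ j, R t i j * w t j := by
      funext t; simp [Matrix.mulVec, dotProduct]
    rw [heq]
    exact continuousOn_finset_sum _ fun j _ => ((hRcont i j).continuousOn).mul (hwconti j)
  have hRWcont : ContinuousOn RW (Icc (0:ℝ) r) :=
    continuousOn_finset_sum _ fun i _ => (hwconti i).mul (hmvc i)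
  have hS : ∀ t ∈ Icc (0:ℝ) r, HasDerivAt S (2 * P t) t := by
    intro t ht
    have := HasDerivAt.fun_sum (fun i (_ : i ∈ Finset.univ) => (hwc i t ht).mul (hwc i t ht))
    refine this.congr_deriv ?_
    rw [hPdef, Finset.mul_sum]
    exact Finset.sum_congr rfl fun i _ => by ring
  have hP : ∀ t ∈ Icc (0:ℝ) r, HasDerivAt P (Q t - RW t) t := by
    intro t ht
    have := HasDerivAt.fun_sum (fun i (_ : i ∈ Finset.univ) => (hwc i t ht).mul (hdwc i t ht))
    refine this.congr_deriv ?_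
    rw [hQdef, hRWdef, ← Finset.sum_sub_distrib]
    exact Finset.sum_congr rfl fun i _ => by ring
  -- Step I : ∫ Q = ∫ RW
  have hQint : IntervalIntegrable Q volume 0 r :=
    (hQcont.mono (by rw [uIcc_of_le hr.le])).intervalIntegrable
  have hRWint : IntervalIntegrable RW volume 0 r :=
    (hRWcont.mono (by rw [uIcc_of_le hr.le])).intervalIntegrable
  have hSint : IntervalIntegrable S volume 0 r :=
    (hScont.mono (by rw [uIcc_of_le hr.le])).intervalIntegrable
  have hstep1 : (∫ t in (0:ℝ)..r, Q t) = ∫ t in (0:ℝ)..r, RW t := by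
    have hftc : (∫ t in (0:ℝ)..r, (Q t - RW t)) = P r - P 0 := by
      refine integral_eq_sub_of_hasDerivAt (fun t ht => ?_) ?_
      · exact hP t (by rwa [uIcc_of_le hr.le] at ht)
      · exact hQint.sub hRWint
    have hP0 : P 0 = 0 := by
      simp [hPdef, funext_iff.1 h0]
    have hPr : P r = 0 := by
      simp [hPdef, funext_iff.1 hrr]
    rw [intervalIntegral.integral_sub hQint hRWint, hP0, hPr, sub_zero] at hftc
    linarith
  -- Step II : ∫ RW ≤ ρ ∫ S
  have hstep2 : (∫ t in (0:ℝ)..r, RW t) ≤ ρ * ∫ t in (0:ℝ)..r, S t := by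
    rw [← intervalIntegral.integral_const_mul]
    refine intervalIntegral.integral_mono_on hr.le hRWint (hSint.const_mul ρ) fun t ht => ?_
    have hps := (hRle t ht).dotProduct_mulVec_nonneg (w t)
    simp only [star_trivial] at hps
    have hexp : (w t) ⬝ᵥ ((ρ • (1 : Matrix (Fin m) (Fin m) ℝ) - R t)).mulVec (w t)
        = ρ * S t - RW t := by
      rw [Matrix.sub_mulVec, dotProduct_sub, Matrix.smul_mulVec, Matrix.one_mulVec]
      simp only [dotProduct, Pi.smul_apply, smul_eq_mul]
      rw [hSdef, hRWdef, Finset.mul_sum]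
      congr 1
      exact Finset.sum_congr rfl fun i _ => by ring
    rw [hexp] at hps
    linarith
  -- Step III : Wirtinger
  have hstep3 : k^2 * (∫ t in (0:ℝ)..r, S t) ≤ ∫ t in (0:ℝ)..r, Q t := by
    have hkr : k * r = Real.pi := div_mul_cancel₀ _ hr.ne'
    set cs : ℝ → ℝ := fun t => Real.cos (k*t) / Real.sin (k*t) with hcsdef
    have hsin : ∀ t ∈ Ioo (0:ℝ) r, 0 < Real.sin (k*t) := by
      intro t ht
      apply Real.sin_pos_of_pos_of_lt_pi (mul_pos hkpos ht.1)
      calc k * t < k * r := by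
            exact mul_lt_mul_of_pos_left ht.2 hkpos
        _ = Real.pi := hkr
    have hcs : ∀ t ∈ Ioo (0:ℝ) r,
        HasDerivAt cs (-k / (Real.sin (k*t) * Real.sin (k*t))) t := by
      intro t ht
      have hs := hsin t ht
      have hsin' : HasDerivAt (fun u : ℝ => Real.sin (k*u)) (Real.cos (k*t) * k) t := by
        have h1 : HasDerivAt (fun u : ℝ => k*u) k t := by
          simpa using (hasDerivAt_id t).const_mul k
        exact (Real.hasDerivAt_sin (k*t)).comp t h1
      have hcos' : HasDerivAt (fun u : ℝ => Real.cos (k*u)) (-Real.sin (k*t) * k) t := by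
        have h1 : HasDerivAt (fun u : ℝ => k*u) k t := by
          simpa using (hasDerivAt_id t).const_mul k
        exact (Real.hasDerivAt_cos (k*t)).comp t h1
      have h2 := hcos'.div hsin' hs.ne'
      have hpyth := Real.sin_sq_add_cos_sq (k*t)
      have hnum : (-Real.sin (k*t) * k * Real.sin (k*t)
          - Real.cos (k*t) * (Real.cos (k*t) * k)) = -k := by
        linear_combination (-k) * hpyth
      rw [hnum, pow_two] at h2
      exact h2
    set Bf : ℝ → ℝ := fun t => S t * cs t with hBfdef
    set DB : ℝ → ℝ := fun t => 2 * P t * cs t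
        + S t * (-k / (Real.sin (k*t) * Real.sin (k*t))) with hDBdef
    have hBder : ∀ t ∈ Ioo (0:ℝ) r, HasDerivAt Bf (DB t) t := fun t ht =>
      (hS t (Ioo_subset_Icc_self ht)).mul (hcs t ht)
    set q : ℝ → ℝ := fun t => Q t - 2*k*cs t*P t + k^2 * cs t * cs t * S t with hqdef
    have hqnn : ∀ t, 0 ≤ q t := by
      intro t
      have hqe : q t = ∑ i, (dw t i - k * cs t * w t i) * (dw t i - k * cs t * w t i) := by
        have hexp : ∀ i : Fin m, (dw t i - k * cs t * w t i) * (dw t i - k * cs t * w t i)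
            = dw t i * dw t i - (2*k*cs t) * (w t i * dw t i)
              + (k^2 * cs t * cs t) * (w t i * w t i) := fun i => by ring
        rw [Finset.sum_congr rfl fun i _ => hexp i, Finset.sum_add_distrib,
          Finset.sum_sub_distrib, ← Finset.mul_sum, ← Finset.mul_sum]
      rw [hqe]
      exact Finset.sum_nonneg fun i _ => mul_self_nonneg _
    have hiden : ∀ t ∈ Ioo (0:ℝ) r, Q t - k^2 * S t = q t + k * DB t := by
      intro t ht
      have hs := (hsin t ht).ne'
      have hpyth := Real.sin_sq_add_cos_sq (k*t)
      simp only [hqdef, hDBdef, hcsdef]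
      field_simp
      linear_combination (-(k^2) * S t * Real.sin (k*t) - (Real.pi/r)^2 * S t * (1 - Real.sin (k*t))) * hpyth
    -- continuity of cs on Ioo
    have hcscont : ContinuousOn cs (Ioo (0:ℝ) r) := by
      apply ContinuousOn.div
      · exact (Real.continuous_cos.comp (continuous_const.mul continuous_id)).continuousOn
      · exact (Real.continuous_sin.comp (continuous_const.mul continuous_id)).continuousOn
      · exact fun t ht => (hsin t ht).ne'
    have hsin2cont : ContinuousOn (fun t => -k / (Real.sin (k*t) * Real.sin (k*t)))
        (Ioo (0:ℝ) r) := by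
      apply ContinuousOn.div continuousOn_const
      · exact ((Real.continuous_sin.comp (continuous_const.mul continuous_id)).mul
          (Real.continuous_sin.comp (continuous_const.mul continuous_id))).continuousOn
      · exact fun t ht => (mul_pos (hsin t ht) (hsin t ht)).ne'
    -- the truncated inequality
    have hG : ∀ ε ∈ Ioo (0:ℝ) (r/2),
        k * (Bf (r-ε) - Bf ε) ≤ ∫ t in ε..(r-ε), (Q t - k^2 * S t) := by
      intro ε hε
      have hεle : ε ≤ r - ε := by linarith [hε.1, hε.2]
      have hsub : Icc ε (r-ε) ⊆ Ioo (0:ℝ) r := fun t ht =>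
        ⟨lt_of_lt_of_le hε.1 ht.1, lt_of_le_of_lt ht.2 (by linarith [hε.1])⟩
      have hsub' : Icc ε (r-ε) ⊆ Icc (0:ℝ) r := hsub.trans Ioo_subset_Icc_self
      have hqcont : ContinuousOn q (Icc ε (r-ε)) := by
        simp only [hqdef]
        exact ((hQcont.mono hsub').sub (((continuousOn_const.mul (hcscont.mono hsub)).mul
          (hPcont.mono hsub')))).add ((((continuousOn_const.mul (hcscont.mono hsub)).mul
          (hcscont.mono hsub)).mul (hScont.mono hsub')))
      have hDBcont : ContinuousOn DB (Icc ε (r-ε)) := by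
        simp only [hDBdef]
        exact ((continuousOn_const.mul (hPcont.mono hsub')).mul (hcscont.mono hsub)).add
          ((hScont.mono hsub').mul (hsin2cont.mono hsub))
      have hqint : IntervalIntegrable q volume ε (r-ε) :=
        (hqcont.mono (by rw [uIcc_of_le hεle])).intervalIntegrable
      have hDBint : IntervalIntegrable DB volume ε (r-ε) :=
        (hDBcont.mono (by rw [uIcc_of_le hεle])).intervalIntegrable
      have hftc : (∫ t in ε..(r-ε), DB t) = Bf (r-ε) - Bf ε := by
        refine integral_eq_sub_of_hasDerivAt (fun t ht => ?_) hDBint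
        exact hBder t (hsub (by rwa [uIcc_of_le hεle] at ht))
      have hcongr : (∫ t in ε..(r-ε), (Q t - k^2 * S t))
          = ∫ t in ε..(r-ε), (q t + k * DB t) := by
        apply intervalIntegral.integral_congr
        intro t ht
        rw [uIcc_of_le hεle] at ht
        exact hiden t (hsub ht)
      rw [hcongr, intervalIntegral.integral_add hqint (hDBint.const_mul k),
        intervalIntegral.integral_const_mul, hftc]
      have : 0 ≤ ∫ t in ε..(r-ε), q t :=
        intervalIntegral.integral_nonneg hεle fun u _ => hqnn u
      linarith
    -- limits
    have htends_eps : Filter.Tendsto (fun ε : ℝ => ε) (nhdsWithin 0 (Ioi 0)) (nhds 0) :=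
      Filter.tendsto_id.mono_right nhdsWithin_le_nhds
    -- sin x / x tends to 1
    have hsinx : Filter.Tendsto (fun x : ℝ => Real.sin x / x)
        (nhdsWithin 0 {(0:ℝ)}ᶜ) (nhds 1) := by
      have h := hasDerivAt_iff_tendsto_slope.1 (Real.hasDerivAt_sin 0)
      rw [Real.cos_zero] at h
      refine h.congr' ?_
      filter_upwards [self_mem_nhdsWithin] with x hx
      simp [slope_def_field]
    have hkmap : Filter.Tendsto (fun ε : ℝ => k*ε) (nhdsWithin 0 (Ioi 0))
        (nhdsWithin 0 {(0:ℝ)}ᶜ) := by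
      apply Filter.Tendsto.mono_right _ (nhdsWithin_mono _ (fun x (hx : x ∈ Ioi (0:ℝ)) => hx.ne'))
      apply tendsto_nhdsWithin_of_tendsto_nhds_of_eventually_within
      · have : Filter.Tendsto (fun ε : ℝ => k*ε) (nhds 0) (nhds (k*0)) :=
          (continuous_const.mul continuous_id).tendsto 0
        rw [mul_zero] at this
        exact this.mono_left nhdsWithin_le_nhds
      · filter_upwards [self_mem_nhdsWithin] with x hx
        exact mul_pos hkpos hx
    have hratio : Filter.Tendsto (fun ε : ℝ => (k*ε) / Real.sin (k*ε))
        (nhdsWithin 0 (Ioi 0)) (nhds 1) := by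
      have := ((hsinx.comp hkmap).inv₀ one_ne_zero)
      rw [inv_one] at this
      refine this.congr' ?_
      filter_upwards with x
      simp [Function.comp, inv_div]
    have hratio2 : Filter.Tendsto (fun ε : ℝ => ε * ε / Real.sin (k*ε))
        (nhdsWithin 0 (Ioi 0)) (nhds 0) := by
      have heq : (fun ε : ℝ => ε * ε / Real.sin (k*ε))
          = fun ε : ℝ => ε * ((k*ε) / Real.sin (k*ε)) * (1/k) := by
        funext ε
        have hkne : k ≠ 0 := hkpos.ne'
        calc ε * ε / Real.sin (k*ε)
            = (ε*ε/Real.sin (k*ε)) * (k * (1/k)) := by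
              rw [mul_one_div, div_self hkne, mul_one]
          _ = ε * ((k*ε) / Real.sin (k*ε)) * (1/k) := by ring
      rw [heq]
      have := (htends_eps.mul hratio).mul_const (1/k)
      simpa using this
    have hcoslim : Filter.Tendsto (fun ε : ℝ => Real.cos (k*ε))
        (nhdsWithin 0 (Ioi 0)) (nhds 1) := by
      have : Filter.Tendsto (fun ε : ℝ => Real.cos (k*ε)) (nhds 0) (nhds (Real.cos (k*0))) :=
        (Real.continuous_cos.comp (continuous_const.mul continuous_id)).tendsto 0
      rw [mul_zero, Real.cos_zero] at this
      exact this.mono_left nhdsWithin_le_nhds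
    -- slopes at the two endpoints
    have hslope0 : ∀ i : Fin m, Filter.Tendsto (fun ε : ℝ => w ε i / ε)
        (nhdsWithin 0 (Ioi 0)) (nhds (dw 0 i)) := by
      intro i
      have h := hasDerivAt_iff_tendsto_slope.1 (hwc i 0 ⟨le_rfl, hr.le⟩)
      have h2 := h.mono_left (nhdsWithin_mono _ (fun x (hx : x ∈ Ioi (0:ℝ)) => hx.ne'))
      refine h2.congr' ?_
      filter_upwards [self_mem_nhdsWithin] with x hx
      simp [slope_def_field, funext_iff.1 h0 i]
    have hsloper : ∀ i : Fin m, Filter.Tendsto (fun ε : ℝ => w (r-ε) i / ε)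
        (nhdsWithin 0 (Ioi 0)) (nhds (-dw r i)) := by
      intro i
      have h := hasDerivAt_iff_tendsto_slope.1 (hwc i r ⟨hr.le, le_rfl⟩)
      have hmap : Filter.Tendsto (fun ε : ℝ => r - ε) (nhdsWithin 0 (Ioi 0))
          (nhdsWithin r {(r:ℝ)}ᶜ) := by
        apply tendsto_nhdsWithin_of_tendsto_nhds_of_eventually_within
        · have : Filter.Tendsto (fun ε : ℝ => r - ε) (nhds 0) (nhds (r - 0)) :=
            (continuous_const.sub continuous_id).tendsto 0
          rw [sub_zero] at this
          exact this.mono_left nhdsWithin_le_nhds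
        · filter_upwards [self_mem_nhdsWithin] with x hx
          simp only [mem_compl_iff, mem_singleton_iff]
          intro hcon
          have : x = 0 := by linarith
          exact absurd this (ne_of_gt hx)
      have h2 := (h.comp hmap).neg
      refine h2.congr' ?_
      filter_upwards [self_mem_nhdsWithin] with x hx
      have hx0 : x ≠ 0 := ne_of_gt hx
      simp only [Function.comp, slope_def_field, funext_iff.1 hrr i]
      field_simp
      simp [hx0]
      rw [div_neg, neg_neg, mul_div_cancel_left₀ _ hx0]
    -- limit of Bf at 0
    have hBf0 : Filter.Tendsto (fun ε : ℝ => Bf ε) (nhdsWithin 0 (Ioi 0)) (nhds 0) := by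
      have hfactor : Filter.Tendsto
          (fun ε : ℝ => (∑ i, (w ε i / ε) * (w ε i / ε)) * (ε * ε / Real.sin (k*ε))
            * Real.cos (k*ε)) (nhdsWithin 0 (Ioi 0)) (nhds 0) := by
        have hsum : Filter.Tendsto (fun ε : ℝ => ∑ i, (w ε i / ε) * (w ε i / ε))
            (nhdsWithin 0 (Ioi 0)) (nhds (∑ i, dw 0 i * dw 0 i)) :=
          tendsto_finset_sum _ fun i _ => (hslope0 i).mul (hslope0 i)
        have := (hsum.mul hratio2).mul hcoslim
        simpa using this
      refine hfactor.congr' ?_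
      filter_upwards [self_mem_nhdsWithin] with ε hε
      have hε0 : (ε:ℝ) ≠ 0 := ne_of_gt hε
      have hne2 : ε * ε ≠ 0 := mul_ne_zero hε0 hε0
      have hsum_eq : (∑ i, (w ε i / ε) * (w ε i / ε)) = S ε / (ε*ε) := by
        rw [hSdef]
        simp only
        rw [Finset.sum_div]
        exact Finset.sum_congr rfl fun i _ => div_mul_div_comm _ _ _ _
      rw [hsum_eq, div_mul_div_comm, mul_comm (S ε) (ε*ε), mul_div_mul_left _ _ hne2]
      simp only [hBfdef, hcsdef]
      ring
    -- limit of Bf at r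
    have hBfr : Filter.Tendsto (fun ε : ℝ => Bf (r-ε)) (nhdsWithin 0 (Ioi 0)) (nhds 0) := by
      have hfactor : Filter.Tendsto
          (fun ε : ℝ => (∑ i, (w (r-ε) i / ε) * (w (r-ε) i / ε)) * (ε * ε / Real.sin (k*ε))
            * (- Real.cos (k*ε))) (nhdsWithin 0 (Ioi 0)) (nhds 0) := by
        have hsum : Filter.Tendsto (fun ε : ℝ => ∑ i, (w (r-ε) i / ε) * (w (r-ε) i / ε))
            (nhdsWithin 0 (Ioi 0)) (nhds (∑ i, (-dw r i) * (-dw r i))) :=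
          tendsto_finset_sum _ fun i _ => (hsloper i).mul (hsloper i)
        have := (hsum.mul hratio2).mul hcoslim.neg
        simpa using this
      refine hfactor.congr' ?_
      filter_upwards [self_mem_nhdsWithin] with ε hε
      have hε0 : (ε:ℝ) ≠ 0 := ne_of_gt hε
      have hne2 : ε * ε ≠ 0 := mul_ne_zero hε0 hε0
      have hsum_eq : (∑ i, (w (r-ε) i / ε) * (w (r-ε) i / ε)) = S (r-ε) / (ε*ε) := by
        rw [hSdef]
        simp only
        rw [Finset.sum_div]
        exact Finset.sum_congr rfl fun i _ => div_mul_div_comm _ _ _ _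
      have hang : k * (r - ε) = Real.pi - k * ε := by
        rw [mul_sub, hkr]
      have hsin_eq : Real.sin (k*(r-ε)) = Real.sin (k*ε) := by
        rw [hang, Real.sin_pi_sub]
      have hcos_eq : Real.cos (k*(r-ε)) = - Real.cos (k*ε) := by
        rw [hang, Real.cos_pi_sub]
      rw [hsum_eq, div_mul_div_comm, mul_comm (S (r-ε)) (ε*ε), mul_div_mul_left _ _ hne2]
      simp only [hBfdef, hcsdef]
      rw [hsin_eq, hcos_eq]
      ring
    -- limit of the truncated integral
    have hIint : IntervalIntegrable (fun t => Q t - k^2 * S t) volume 0 r :=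
      hQint.sub (hSint.const_mul (k^2))
    have hfcont : ContinuousOn (fun t => Q t - k^2 * S t) (Icc (0:ℝ) r) :=
      hQcont.sub (continuousOn_const.mul hScont)
    obtain ⟨M, hM⟩ := (isCompact_Icc (a := (0:ℝ)) (b := r)).exists_bound_of_continuousOn hfcont
    have hGlim : Filter.Tendsto (fun ε : ℝ => ∫ t in ε..(r-ε), (Q t - k^2 * S t))
        (nhdsWithin 0 (Ioi 0)) (nhds (∫ t in (0:ℝ)..r, (Q t - k^2 * S t))) := by
      set I : ℝ := ∫ t in (0:ℝ)..r, (Q t - k^2 * S t) with hI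
      rw [Metric.tendsto_nhds]
      intro δ hδ
      have hMnn : 0 ≤ M := le_trans (norm_nonneg _) (hM 0 ⟨le_rfl, hr.le⟩)
      have hsmall : ∀ᶠ ε : ℝ in nhdsWithin 0 (Ioi 0),
          ε ∈ Ioo (0:ℝ) (min (r/2) (δ / (2*M+1))) := by
        apply Ioo_mem_nhdsGT_of_mem
        constructor
        · exact le_rfl
        · exact lt_min (half_pos hr) (by positivity)
      filter_upwards [hsmall] with ε hε
      have hε1 : 0 < ε := hε.1
      have hε2 : ε < r/2 := lt_of_lt_of_le hε.2 (min_le_left _ _)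
      have hε3 : ε < δ / (2*M+1) := lt_of_lt_of_le hε.2 (min_le_right _ _)
      have hεle : ε ≤ r - ε := by linarith
      have hint1 : IntervalIntegrable (fun t => Q t - k^2 * S t) volume 0 ε := by
        apply hIint.mono_set
        rw [uIcc_of_le hε1.le, uIcc_of_le hr.le]
        exact Icc_subset_Icc le_rfl (by linarith)
      have hint2 : IntervalIntegrable (fun t => Q t - k^2 * S t) volume ε (r-ε) := by
        apply hIint.mono_set
        rw [uIcc_of_le hεle, uIcc_of_le hr.le]
        exact Icc_subset_Icc hε1.le (by linarith)
      have hint3 : IntervalIntegrable (fun t => Q t - k^2 * S t) volume (r-ε) r := by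
        apply hIint.mono_set
        rw [uIcc_of_le (by linarith : r - ε ≤ r), uIcc_of_le hr.le]
        exact Icc_subset_Icc (by linarith) le_rfl
      have hsplit : I = (∫ t in (0:ℝ)..ε, (Q t - k^2 * S t))
          + (∫ t in ε..(r-ε), (Q t - k^2 * S t)) + ∫ t in (r-ε)..r, (Q t - k^2 * S t) := by
        rw [hI, ← intervalIntegral.integral_add_adjacent_intervals (hint1.trans hint2) hint3,
          ← intervalIntegral.integral_add_adjacent_intervals hint1 hint2]
      have hb1 : ‖∫ t in (0:ℝ)..ε, (Q t - k^2 * S t)‖ ≤ M * ε := by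
        have := intervalIntegral.norm_integral_le_of_norm_le_const
          (C := M) (f := fun t => Q t - k^2 * S t) (a := 0) (b := ε) ?_
        · rwa [sub_zero, abs_of_nonneg hε1.le] at this
        · intro x hx
          rw [uIoc_of_le hε1.le] at hx
          exact hM x ⟨hx.1.le, hx.2.trans (by linarith)⟩
      have hb3 : ‖∫ t in (r-ε)..r, (Q t - k^2 * S t)‖ ≤ M * ε := by
        have := intervalIntegral.norm_integral_le_of_norm_le_const
          (C := M) (f := fun t => Q t - k^2 * S t) (a := r-ε) (b := r) ?_
        · rw [show r - (r - ε) = ε by ring] at this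
          rwa [abs_of_nonneg hε1.le] at this
        · intro x hx
          rw [uIoc_of_le (by linarith : r - ε ≤ r)] at hx
          exact hM x ⟨by linarith [hx.1], hx.2⟩
      rw [Real.dist_eq]
      have : (∫ t in ε..(r-ε), (Q t - k^2 * S t)) - I
          = -((∫ t in (0:ℝ)..ε, (Q t - k^2 * S t)) + ∫ t in (r-ε)..r, (Q t - k^2 * S t)) := by
        rw [hsplit]; ring
      rw [this, abs_neg]
      calc |(∫ t in (0:ℝ)..ε, (Q t - k^2 * S t)) + ∫ t in (r-ε)..r, (Q t - k^2 * S t)|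
          ≤ ‖∫ t in (0:ℝ)..ε, (Q t - k^2 * S t)‖ + ‖∫ t in (r-ε)..r, (Q t - k^2 * S t)‖ :=
            abs_add_le _ _
        _ ≤ M * ε + M * ε := add_le_add hb1 hb3
        _ < δ := by
            have h2M : (0:ℝ) < 2*M+1 := by linarith
            rw [lt_div_iff₀ h2M] at hε3
            nlinarith
    have hlim2 : Filter.Tendsto (fun ε : ℝ => (∫ t in ε..(r-ε), (Q t - k^2 * S t))
        - k * (Bf (r-ε) - Bf ε)) (nhdsWithin 0 (Ioi 0))
        (nhds ((∫ t in (0:ℝ)..r, (Q t - k^2 * S t)) - k * (0 - 0))) :=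
      hGlim.sub ((hBfr.sub hBf0).const_mul k)
    have hev : ∀ᶠ ε : ℝ in nhdsWithin 0 (Ioi 0),
        0 ≤ (∫ t in ε..(r-ε), (Q t - k^2*S t)) - k * (Bf (r-ε) - Bf ε) := by
      filter_upwards [Ioo_mem_nhdsGT_of_mem
        (by exact ⟨le_rfl, half_pos hr⟩ : (0:ℝ) ∈ Ico 0 (r/2))] with ε hε
      linarith [hG ε hε]
    have hInn : 0 ≤ (∫ t in (0:ℝ)..r, (Q t - k^2 * S t)) - k * (0-0) :=
      ge_of_tendsto hlim2 hev
    rw [intervalIntegral.integral_sub hQint (hSint.const_mul (k^2)),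
      intervalIntegral.integral_const_mul] at hInn
    linarith

  -- conclusion
  have hSnonneg : ∀ t, 0 ≤ S t := fun t => Finset.sum_nonneg fun i _ => mul_self_nonneg _
  have hBq0 : (∫ t in (0:ℝ)..r, S t) = 0 := by
    have hA : (∫ t in (0:ℝ)..r, Q t) ≤ ρ * ∫ t in (0:ℝ)..r, S t := hstep1.trans_le hstep2
    have hBqnn : 0 ≤ ∫ t in (0:ℝ)..r, S t :=
      intervalIntegral.integral_nonneg hr.le fun u _ => hSnonneg u
    have hρk : ρ < k^2 := by
      have h1 : Real.sqrt ρ < k := by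
        rw [hk, lt_div_iff₀ hr]; exact hρr
      calc ρ = Real.sqrt ρ ^ 2 := (Real.sq_sqrt hρ).symm
        _ < k^2 := by
          apply pow_lt_pow_left₀ h1 (Real.sqrt_nonneg ρ)
          norm_num
    nlinarith
  intro t ht
  by_contra hne
  have hex : ∃ i, w t i ≠ 0 := by
    by_contra hall
    push_neg at hall
    exact hne (funext hall)
  obtain ⟨i, hi⟩ := hex
  have hSt : 0 < S t := Finset.sum_pos' (fun j _ => mul_self_nonneg _)
    ⟨i, Finset.mem_univ i, mul_self_pos.2 hi⟩
  have : 0 < ∫ t in (0:ℝ)..r, S t := by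
    refine intervalIntegral.integral_pos hr ?_ (fun u _ => hSnonneg u) ⟨t, ht, hSt⟩
    exact hScont
  linarith

/-- Existence and uniqueness for the Jacobi boundary value problem:
if `R : [0,r] → Sym(n−1)` is continuous with `R(t) ≤ ρI`, `0 ≤ ρ`, `0 < r`,
`√ρ·r < π`, then for each `v` the problem `y'' = −R(t)y`, `y(0) = 0`,
`y(r) = v` has a solution, unique on `[0,r]`. -/
theorem jacobi_bvp_exists_unique {m : ℕ} {ρ r : ℝ}
    (hρ : 0 ≤ ρ) (hr : 0 < r) (hρr : Real.sqrt ρ * r < Real.pi)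
    (R : ℝ → Matrix (Fin m) (Fin m) ℝ)
    (hRcont : ∀ i j, Continuous fun t => R t i j)
    (hRsymm : ∀ t ∈ Set.Icc (0:ℝ) r, (R t).IsSymm)
    (hRle : ∀ t ∈ Set.Icc (0:ℝ) r,
      (ρ • (1 : Matrix (Fin m) (Fin m) ℝ) - R t).PosSemidef)
    (v : Fin m → ℝ) :
    (∃ y dy : ℝ → Fin m → ℝ,
      (∀ t ∈ Set.Icc (0:ℝ) r, HasDerivAt y (dy t) t) ∧
      (∀ t ∈ Set.Icc (0:ℝ) r, HasDerivAt dy (-(R t).mulVec (y t)) t) ∧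
      y 0 = 0 ∧ y r = v) ∧
    (∀ y dy z dz : ℝ → Fin m → ℝ,
      (∀ t ∈ Set.Icc (0:ℝ) r, HasDerivAt y (dy t) t) →
      (∀ t ∈ Set.Icc (0:ℝ) r, HasDerivAt dy (-(R t).mulVec (y t)) t) →
      y 0 = 0 → y r = v →
      (∀ t ∈ Set.Icc (0:ℝ) r, HasDerivAt z (dz t) t) →
      (∀ t ∈ Set.Icc (0:ℝ) r, HasDerivAt dz (-(R t).mulVec (z t)) t) →
      z 0 = 0 → z r = v →
      ∀ t ∈ Set.Icc (0:ℝ) r, y t = z t) := by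
  classical
  -- the uniqueness half, directly from `jacobi_bvp_zero`
  have huniq2 : (∀ y dy z dz : ℝ → Fin m → ℝ,
      (∀ t ∈ Set.Icc (0:ℝ) r, HasDerivAt y (dy t) t) →
      (∀ t ∈ Set.Icc (0:ℝ) r, HasDerivAt dy (-(R t).mulVec (y t)) t) →
      y 0 = 0 → y r = v →
      (∀ t ∈ Set.Icc (0:ℝ) r, HasDerivAt z (dz t) t) →
      (∀ t ∈ Set.Icc (0:ℝ) r, HasDerivAt dz (-(R t).mulVec (z t)) t) →
      z 0 = 0 → z r = v →
      ∀ t ∈ Set.Icc (0:ℝ) r, y t = z t) := by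
    intro y dy z dz hy hdy hy0 hyr hz hdz hz0 hzr t ht
    have hzz := jacobi_bvp_zero hρ hr hρr R hRcont hRle
      (fun t => y t - z t) (fun t => dy t - dz t)
      (fun t ht => (hy t ht).sub (hz t ht))
      (fun t ht => by
        have h := (hdy t ht).sub (hdz t ht)
        refine h.congr_deriv ?_
        rw [Matrix.mulVec_sub]
        abel)
      (by show y 0 - z 0 = 0; rw [hy0, hz0, sub_self])
      (by show y r - z r = 0; rw [hyr, hzr, sub_self]) t ht
    exact sub_eq_zero.1 hzz
  refine ⟨?_, huniq2⟩
  -- clamped coefficient matrix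
  set clamp : ℝ → ℝ := fun t => max 0 (min t r) with hclampdef
  have hclampcont : Continuous clamp := continuous_const.max (continuous_id.min continuous_const)
  have hclampmem : ∀ t, clamp t ∈ Icc (0:ℝ) r :=
    fun t => ⟨le_max_left _ _, max_le hr.le (min_le_right _ _)⟩
  have hclampeq : ∀ t ∈ Icc (0:ℝ) r, clamp t = t := by
    intro t ht
    rw [hclampdef]
    simp only
    rw [min_eq_left ht.2, max_eq_right ht.1]
  set Rc : ℝ → Matrix (Fin m) (Fin m) ℝ := fun t => R (clamp t) with hRcdef
  -- a uniform bound for the clamped matrix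
  have hg0cont : Continuous fun t => ∑ i : Fin m, ∑ j : Fin m, |R t i j| :=
    continuous_finset_sum _ fun i _ => continuous_finset_sum _ fun j _ => (hRcont i j).abs
  obtain ⟨M, hM⟩ := (isCompact_Icc (a := (0:ℝ)) (b := r)).exists_bound_of_continuousOn
    hg0cont.continuousOn
  set K : ℝ := max M 1 with hKdef
  have hK1 : (1:ℝ) ≤ K := le_max_right _ _
  have hK0 : (0:ℝ) ≤ K := le_trans zero_le_one hK1
  have hRcbound : ∀ (t : ℝ) (x : Fin m → ℝ), ‖(Rc t).mulVec x‖ ≤ K * ‖x‖ := by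
    intro t x
    have hsum : (∑ i : Fin m, ∑ j : Fin m, |Rc t i j|) ≤ M := by
      have h1 := hM (clamp t) (hclampmem t)
      have h2 : (0:ℝ) ≤ ∑ i : Fin m, ∑ j : Fin m, |R (clamp t) i j| :=
        Finset.sum_nonneg fun i _ => Finset.sum_nonneg fun j _ => abs_nonneg _
      rw [Real.norm_eq_abs, abs_of_nonneg h2] at h1
      exact h1
    rw [show ((K * ‖x‖ : ℝ)) = K * ‖x‖ from rfl]
    refine (pi_norm_le_iff_of_nonneg (mul_nonneg hK0 (norm_nonneg _))).2 fun i => ?_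
    calc ‖(Rc t).mulVec x i‖ = |∑ j, Rc t i j * x j| := rfl
      _ ≤ ∑ j, |Rc t i j * x j| := Finset.abs_sum_le_sum_abs _ _
      _ ≤ ∑ j, |Rc t i j| * ‖x‖ := by
          refine Finset.sum_le_sum fun j _ => ?_
          rw [abs_mul]
          exact mul_le_mul_of_nonneg_left (norm_le_pi_norm x j) (abs_nonneg _)
      _ = (∑ j, |Rc t i j|) * ‖x‖ := (Finset.sum_mul _ _ _).symm
      _ ≤ M * ‖x‖ := by
          refine mul_le_mul_of_nonneg_right ?_ (norm_nonneg _)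
          refine le_trans ?_ hsum
          exact Finset.single_le_sum (f := fun i => ∑ j : Fin m, |Rc t i j|)
            (fun i _ => Finset.sum_nonneg fun j _ => abs_nonneg _) (Finset.mem_univ i)
      _ ≤ K * ‖x‖ := mul_le_mul_of_nonneg_right (le_max_left _ _) (norm_nonneg _)
  -- the first-order system
  set F : ℝ → (Fin m → ℝ) × (Fin m → ℝ) → (Fin m → ℝ) × (Fin m → ℝ) :=
    fun t x => (x.2, -(Rc t).mulVec x.1) with hFdef
  have hFlip : ∀ (t : ℝ) (x y : (Fin m → ℝ) × (Fin m → ℝ)), ‖F t x - F t y‖ ≤ K * ‖x - y‖ := by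
    intro t x y
    have hdiff : F t x - F t y = ((x - y).2, -(Rc t).mulVec ((x - y).1)) := by
      rw [hFdef]
      simp only [Prod.fst_sub, Prod.snd_sub, Prod.mk_sub_mk, Matrix.mulVec_sub]
      have h2 : -((Rc t).mulVec x.1) - -((Rc t).mulVec y.1)
          = -((Rc t).mulVec x.1 - (Rc t).mulVec y.1) := by abel
      rw [h2]
    rw [hdiff, Prod.norm_def]
    refine max_le ?_ ?_
    · calc ‖(x - y).2‖ ≤ ‖x - y‖ := norm_snd_le _
        _ ≤ K * ‖x - y‖ := le_mul_of_one_le_left (norm_nonneg _) hK1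
    · calc ‖-(Rc t).mulVec ((x - y).1)‖ = ‖(Rc t).mulVec ((x - y).1)‖ := norm_neg _
        _ ≤ K * ‖(x - y).1‖ := hRcbound t _
        _ ≤ K * ‖x - y‖ := mul_le_mul_of_nonneg_left (norm_fst_le _) hK0
  have hFcont : ∀ u : ℝ → (Fin m → ℝ) × (Fin m → ℝ), Continuous u →
      Continuous fun t => F t (u t) := by
    intro u hu
    show Continuous fun t => ((u t).2, -(Rc t).mulVec ((u t).1))
    refine Continuous.prodMk (continuous_snd.comp hu) ?_
    refine continuous_pi fun i => ?_
    show Continuous fun t => -∑ j, Rc t i j * (u t).1 j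
    refine Continuous.neg (continuous_finset_sum _ fun j _ => Continuous.mul ?_ ?_)
    · exact (hRcont i j).comp hclampcont
    · exact (continuous_apply j).comp (continuous_fst.comp hu)
  -- solutions of the IVP
  have hIVP : ∀ a : Fin m → ℝ, ∃ Y : ℝ → (Fin m → ℝ) × (Fin m → ℝ),
      Y 0 = ((0 : Fin m → ℝ), a) ∧ ∀ t ∈ Icc (0:ℝ) r, HasDerivAt Y (F t (Y t)) t :=
    fun a => picard_exists F hK0 hFlip hFcont 0 r hr.le _
  choose sol hsol0 hsolD using hIVP
  -- uniqueness for the IVP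
  have huniq : ∀ Y Z : ℝ → (Fin m → ℝ) × (Fin m → ℝ),
      (∀ t ∈ Icc (0:ℝ) r, HasDerivAt Y (F t (Y t)) t) →
      (∀ t ∈ Icc (0:ℝ) r, HasDerivAt Z (F t (Z t)) t) →
      Y 0 = Z 0 → ∀ t ∈ Icc (0:ℝ) r, Y t = Z t := by
    intro Y Z hY hZ h00
    have hv : ∀ t : ℝ, LipschitzOnWith (Real.toNNReal K) (F t)
        (univ : Set ((Fin m → ℝ) × (Fin m → ℝ))) := by
      intro t
      refine LipschitzWith.lipschitzOnWith (LipschitzWith.of_dist_le_mul fun x y => ?_)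
      rw [dist_eq_norm, dist_eq_norm, Real.coe_toNNReal K hK0]
      exact hFlip t x y
    exact ODE_solution_unique_of_mem_Icc_right (fun t _ => hv t)
      (fun t ht => (hY t ht).continuousAt.continuousWithinAt)
      (fun t ht => (hY t (Ico_subset_Icc_self ht)).hasDerivWithinAt)
      (fun t _ => mem_univ (Y t))
      (fun t ht => (hZ t ht).continuousAt.continuousWithinAt)
      (fun t ht => (hZ t (Ico_subset_Icc_self ht)).hasDerivWithinAt)
      (fun t _ => mem_univ (Z t)) h00
  -- component derivatives of solutions
  have hsolfst : ∀ a, ∀ t ∈ Icc (0:ℝ) r,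
      HasDerivAt (fun t => (sol a t).1) ((sol a t).2) t := by
    intro a t ht
    have h := (ContinuousLinearMap.fst ℝ (Fin m → ℝ) (Fin m → ℝ)).hasFDerivAt.comp_hasDerivAt
      t (hsolD a t ht)
    exact h
  have hsolsnd : ∀ a, ∀ t ∈ Icc (0:ℝ) r,
      HasDerivAt (fun t => (sol a t).2) (-(R t).mulVec ((sol a t).1)) t := by
    intro a t ht
    have h := (ContinuousLinearMap.snd ℝ (Fin m → ℝ) (Fin m → ℝ)).hasFDerivAt.comp_hasDerivAt
      t (hsolD a t ht)
    have hRct : Rc t = R t := by rw [hRcdef]; simp only; rw [hclampeq t ht]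
    rw [← hRct]
    exact h
  -- additivity and homogeneity of solutions
  have hrmem : r ∈ Icc (0:ℝ) r := ⟨hr.le, le_rfl⟩
  have h0mem : (0:ℝ) ∈ Icc (0:ℝ) r := ⟨le_rfl, hr.le⟩
  have hFadd : ∀ (t : ℝ) (x y : (Fin m → ℝ) × (Fin m → ℝ)),
      F t (x + y) = F t x + F t y := by
    intro t x y
    simp only [hFdef, Prod.fst_add, Prod.snd_add, Prod.mk_add_mk, Matrix.mulVec_add, neg_add]
  have hFsmul : ∀ (t : ℝ) (c : ℝ) (x : (Fin m → ℝ) × (Fin m → ℝ)),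
      F t (c • x) = c • F t x := by
    intro t c x
    simp only [hFdef, Prod.smul_fst, Prod.smul_snd, Prod.smul_mk, Matrix.mulVec_smul, smul_neg]
  have hradd : ∀ a b : Fin m → ℝ, ∀ t ∈ Icc (0:ℝ) r, sol (a + b) t = sol a t + sol b t := by
    intro a b
    refine huniq _ _ (hsolD (a+b)) ?_ ?_
    · intro t ht
      have h := (hsolD a t ht).add (hsolD b t ht)
      rw [← hFadd] at h
      exact h
    · show sol (a+b) 0 = sol a 0 + sol b 0
      rw [hsol0, hsol0, hsol0, Prod.mk_add_mk, add_zero]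
  have hrsmul : ∀ (c : ℝ) (a : Fin m → ℝ), ∀ t ∈ Icc (0:ℝ) r,
      sol (c • a) t = c • sol a t := by
    intro c a
    refine huniq _ _ (hsolD (c • a)) ?_ ?_
    · intro t ht
      have h := (hsolD a t ht).const_smul c
      rw [← hFsmul] at h
      exact h
    · show sol (c • a) 0 = c • sol a 0
      rw [hsol0, hsol0, Prod.smul_mk, smul_zero]
  -- the end-value linear map
  set Tlin : (Fin m → ℝ) →ₗ[ℝ] (Fin m → ℝ) :=
    { toFun := fun a => (sol a r).1
      map_add' := fun a b => by
        show (sol (a + b) r).1 = (sol a r).1 + (sol b r).1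
        rw [hradd a b r hrmem]; rfl
      map_smul' := fun c a => by
        show (sol (c • a) r).1 = c • (sol a r).1
        rw [hrsmul c a r hrmem]; rfl } with hTdef
  have hinj : Function.Injective Tlin := by
    refine (injective_iff_map_eq_zero Tlin).2 fun a ha => ?_
    have ha' : (sol a r).1 = 0 := ha
    have hzz := jacobi_bvp_zero hρ hr hρr R hRcont hRle
      (fun t => (sol a t).1) (fun t => (sol a t).2)
      (hsolfst a) (hsolsnd a) (by show (sol a 0).1 = 0; rw [hsol0]) ha'
    have h1 : HasDerivWithinAt (fun t => (sol a t).1) ((sol a 0).2) (Icc (0:ℝ) r) 0 :=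
      (hsolfst a 0 h0mem).hasDerivWithinAt
    have h2 : HasDerivWithinAt (fun t => (sol a t).1) 0 (Icc (0:ℝ) r) 0 := by
      refine (hasDerivWithinAt_const (0:ℝ) (Icc (0:ℝ) r) (0 : Fin m → ℝ)).congr ?_ ?_
      · exact fun t ht => hzz t ht
      · exact hzz 0 h0mem
    have hud : UniqueDiffWithinAt ℝ (Icc (0:ℝ) r) 0 := (uniqueDiffOn_Icc hr) 0 h0mem
    have hd0 : (sol a 0).2 = 0 := by
      rw [← h1.derivWithin hud, ← h2.derivWithin hud]
    rw [hsol0] at hd0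
    exact hd0
  obtain ⟨a, hav⟩ := (LinearMap.injective_iff_surjective).1 hinj v
  exact ⟨fun t => (sol a t).1, fun t => (sol a t).2, hsolfst a, hsolsnd a,
    by show (sol a 0).1 = 0; rw [hsol0], hav⟩
end

section
/- Fix a continuous map Y : [0,r] → GL_{n−1}(ℝ) and α > 0. Among all continuous symmetric-matrix-valued functions A : [0,r] → Sym(n−1) with Tr(A(t)) ≥ α for all t, the functional ∫₀ʳ Tr(A(t)² Y(t)Y(t)ᵀ) dt is minimized pointwise, and its unique minimizer is A(t) = α (Y(t)Y(t)ᵀ)^{-1} / Tr((Y(t)Y(t)ᵀ)^{-1}); moreover this minimizer is positive definite and satisfies Tr(A(t)) = α. -/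
open Matrix

section aux
variable {m : ℕ}
variable {m : ℕ}

lemma myTrace_transpose_mul_self (M : Matrix (Fin m) (Fin m) ℝ) :
    (Mᵀ * M).trace = ∑ j, ∑ i, (M i j)^2 := by
  simp [Matrix.trace, Matrix.mul_apply, Matrix.diag, sq]

lemma myTrace_transpose_mul_self_nonneg (M : Matrix (Fin m) (Fin m) ℝ) :
    0 ≤ (Mᵀ * M).trace := by
  rw [myTrace_transpose_mul_self]
  exact Finset.sum_nonneg fun j _ => Finset.sum_nonneg fun i _ => sq_nonneg _

lemma myEq_zero_of_trace (M : Matrix (Fin m) (Fin m) ℝ) (h : (Mᵀ * M).trace = 0) : M = 0 := by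
  rw [myTrace_transpose_mul_self] at h
  ext i j
  have h1 := (Finset.sum_eq_zero_iff_of_nonneg (fun j _ => Finset.sum_nonneg fun i _ => sq_nonneg (M i j))).mp h j (Finset.mem_univ j)
  have h2 := (Finset.sum_eq_zero_iff_of_nonneg (fun i _ => sq_nonneg (M i j))).mp h1 i (Finset.mem_univ i)
  simpa [sq_eq_zero_iff] using h2

lemma myPosDef_mul_transpose {Y : Matrix (Fin m) (Fin m) ℝ} (hY : IsUnit Y.det) :
    (Y * Yᵀ).PosDef := by
  have hs : (Y * Yᵀ).PosSemidef := by
    simpa [Matrix.conjTranspose_eq_transpose_of_trivial] using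
      Matrix.posSemidef_self_mul_conjTranspose Y
  refine Matrix.PosDef.of_dotProduct_mulVec_pos hs.1 fun x hx => lt_of_le_of_ne (hs.dotProduct_mulVec_nonneg x) fun h => hx ?_
  have h0 : (Y * Yᵀ) *ᵥ x = 0 := (hs.dotProduct_mulVec_zero_iff x).mp h.symm
  have hu : IsUnit (Y * Yᵀ).det := by
    rw [Matrix.det_mul, Matrix.det_transpose]; exact hY.mul hY
  have hinj := Matrix.mulVec_injective_iff_isUnit.mpr ((Matrix.isUnit_iff_isUnit_det _).mpr hu)
  exact hinj (by simpa using h0)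

lemma myPosDef_smul {M : Matrix (Fin m) (Fin m) ℝ} (hM : M.PosDef) {c : ℝ} (hc : 0 < c) :
    (c • M).PosDef := by
  refine Matrix.PosDef.of_dotProduct_mulVec_pos ?_ (fun x hx => ?_)
  · unfold Matrix.IsHermitian
    rw [Matrix.conjTranspose_smul, hM.1]
    simp
  · rw [Matrix.smul_mulVec, dotProduct_smul, smul_eq_mul]
    exact mul_pos hc (hM.dotProduct_mulVec_pos hx)

lemma myTrace_pos (hm : 1 ≤ m) {M : Matrix (Fin m) (Fin m) ℝ} (hM : M.PosDef) :
    0 < M.trace := by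
  haveI : NeZero m := ⟨by omega⟩
  have hdiag : ∀ i, 0 < M i i := by
    intro i
    have hx : (Pi.single i 1 : Fin m → ℝ) ≠ 0 := by
      intro h
      have := congrFun h i
      simp at this
    have := hM.dotProduct_mulVec_pos hx
    simpa [dotProduct, Matrix.mulVec, Pi.single_apply, Finset.mul_sum] using this
  exact Finset.sum_pos (fun i _ => hdiag i) Finset.univ_nonempty

lemma myPointwise {Y : Matrix (Fin m) (Fin m) ℝ} (hY : IsUnit Y.det)
    {α : ℝ} (hα : 0 < α) (hm : 1 ≤ m)
    {A : Matrix (Fin m) (Fin m) ℝ} (hAs : A.IsSymm) (hAt : α ≤ A.trace) :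
    (((α / (Y * Yᵀ)⁻¹.trace) • (Y * Yᵀ)⁻¹) ^ 2 * (Y * Yᵀ)).trace ≤ (A ^ 2 * (Y * Yᵀ)).trace ∧
    ((A ^ 2 * (Y * Yᵀ)).trace = (((α / (Y * Yᵀ)⁻¹.trace) • (Y * Yᵀ)⁻¹) ^ 2 * (Y * Yᵀ)).trace →
      A = (α / (Y * Yᵀ)⁻¹.trace) • (Y * Yᵀ)⁻¹) := by
  set Z := Y * Yᵀ with hZdef
  have hZ : Z.PosDef := myPosDef_mul_transpose hY
  have hZi : Z⁻¹.PosDef := hZ.inv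
  have htr : 0 < Z⁻¹.trace := myTrace_pos hm hZi
  set c := α / Z⁻¹.trace with hcdef
  have hc : 0 < c := div_pos hα htr
  set A₀ : Matrix (Fin m) (Fin m) ℝ := c • Z⁻¹ with hA₀def
  have hZdet : IsUnit Z.det := hZ.det_pos.ne'.isUnit
  have hZinvZ : Z⁻¹ * Z = 1 := Matrix.nonsing_inv_mul Z hZdet
  have hZZinv : Z * Z⁻¹ = 1 := Matrix.mul_nonsing_inv Z hZdet
  set D : Matrix (Fin m) (Fin m) ℝ := A - A₀ with hDdef
  have hADexp : A = A₀ + D := by rw [hDdef]; abel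
  have hA₀tr : A₀.trace = α := by
    rw [hA₀def, Matrix.trace_smul, smul_eq_mul, hcdef, div_mul_cancel₀ _ htr.ne']
  have hDtr : 0 ≤ D.trace := by
    rw [hDdef, Matrix.trace_sub, hA₀tr]; linarith
  have hZsymm : Zᵀ = Z := by rw [hZdef, Matrix.transpose_mul, Matrix.transpose_transpose]
  have hDsymm : Dᵀ = D := by
    rw [hDdef, Matrix.transpose_sub, hAs.eq, hA₀def, Matrix.transpose_smul,
      Matrix.transpose_nonsing_inv, hZsymm]
  have t1 : (A₀ * D * Z).trace = c * D.trace := by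
    rw [Matrix.trace_mul_comm, ← Matrix.mul_assoc, hA₀def, mul_smul_comm, hZZinv,
      smul_mul_assoc, one_mul, Matrix.trace_smul, smul_eq_mul]
  have t2 : (D * A₀ * Z).trace = c * D.trace := by
    rw [Matrix.mul_assoc, hA₀def, smul_mul_assoc, hZinvZ, mul_smul_comm, mul_one,
      Matrix.trace_smul, smul_eq_mul]
  have t3 : (D * D * Z).trace = ((D * Y)ᵀ * (D * Y)).trace := by
    rw [Matrix.transpose_mul, hDsymm, hZdef, ← Matrix.mul_assoc,
      Matrix.trace_mul_comm (D * D * Y) Yᵀ]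
    simp [Matrix.mul_assoc]
  have expand : (A ^ 2 * Z).trace
      = (A₀ ^ 2 * Z).trace + (A₀ * D * Z).trace + (D * A₀ * Z).trace + (D * D * Z).trace := by
    rw [hADexp, pow_two, pow_two]
    rw [show (A₀ + D) * (A₀ + D) * Z = A₀ * A₀ * Z + (A₀ * D * Z + (D * A₀ * Z + D * D * Z))
      by noncomm_ring]
    simp only [Matrix.trace_add]; ring
  have key : (A ^ 2 * Z).trace
      = (A₀ ^ 2 * Z).trace + 2 * c * D.trace + ((D * Y)ᵀ * (D * Y)).trace := by
    rw [expand, t1, t2, t3]; ring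
  have h3nn := myTrace_transpose_mul_self_nonneg (D * Y)
  constructor
  · rw [key]; nlinarith
  · intro heq
    rw [key] at heq
    have h0 : ((D * Y)ᵀ * (D * Y)).trace = 0 := by nlinarith
    have hDY : D * Y = 0 := myEq_zero_of_trace _ h0
    have hD0 : D = 0 := by
      have := congrArg (fun M => M * Y⁻¹) hDY
      simpa [Matrix.mul_assoc, Matrix.mul_nonsing_inv Y hY] using this
    rw [hDdef, sub_eq_zero] at hD0
    exact hD0

end aux

/-- For a continuous family `Y(t)` of invertible matrices and `α > 0`, among
continuous symmetric `A(t)` with `Tr(A(t)) ≥ α`, the functional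
`∫₀ʳ Tr(A(t)² Y(t)Y(t)ᵀ) dt` is minimized pointwise by the unique minimizer
`A₀(t) = α (Y(t)Y(t)ᵀ)⁻¹ / Tr((Y(t)Y(t)ᵀ)⁻¹)`, which moreover is positive
definite with `Tr(A₀(t)) = α`. -/
theorem min_energy_functional_A {m : ℕ} (hm : 1 ≤ m) {r : ℝ} (hr : 0 < r)
    {α : ℝ} (hα : 0 < α)
    (Y : ℝ → Matrix (Fin m) (Fin m) ℝ)
    (hYcont : ∀ i j, Continuous fun t => Y t i j)
    (hYinv : ∀ t ∈ Set.Icc (0:ℝ) r, IsUnit (Y t).det) :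
    let Z := fun t => Y t * (Y t)ᵀ
    let A₀ := fun t => (α / (Z t)⁻¹.trace) • (Z t)⁻¹
    (∀ t ∈ Set.Icc (0:ℝ) r, (A₀ t).PosDef ∧ (A₀ t).trace = α) ∧
    (∀ A : ℝ → Matrix (Fin m) (Fin m) ℝ,
      (∀ i j, Continuous fun t => A t i j) →
      (∀ t ∈ Set.Icc (0:ℝ) r, (A t).IsSymm ∧ α ≤ (A t).trace) →
      (∫ t in (0:ℝ)..r, ((A₀ t) ^ 2 * Z t).trace)
        ≤ ∫ t in (0:ℝ)..r, ((A t) ^ 2 * Z t).trace) ∧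
    (∀ A : ℝ → Matrix (Fin m) (Fin m) ℝ,
      (∀ i j, Continuous fun t => A t i j) →
      (∀ t ∈ Set.Icc (0:ℝ) r, (A t).IsSymm ∧ α ≤ (A t).trace) →
      (∫ t in (0:ℝ)..r, ((A t) ^ 2 * Z t).trace)
        = (∫ t in (0:ℝ)..r, ((A₀ t) ^ 2 * Z t).trace) →
      ∀ t ∈ Set.Icc (0:ℝ) r, A t = A₀ t) := by
  intro Z A₀
  -- basic pointwise facts
  have hZpd : ∀ t ∈ Set.Icc (0:ℝ) r, (Z t).PosDef := fun t ht =>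
    myPosDef_mul_transpose (hYinv t ht)
  have htrpos : ∀ t ∈ Set.Icc (0:ℝ) r, 0 < (Z t)⁻¹.trace := fun t ht =>
    myTrace_pos hm (hZpd t ht).inv
  -- continuity
  have hYc : Continuous Y := continuous_matrix hYcont
  have hZc : Continuous Z := hYc.matrix_mul hYc.matrix_transpose
  have hdetne : ∀ t ∈ Set.Icc (0:ℝ) r, (Z t).det ≠ 0 := fun t ht => (hZpd t ht).det_pos.ne'
  have hZinvc : ContinuousOn (fun t => (Z t)⁻¹) (Set.Icc 0 r) := by
    have heq : ∀ t, (Z t)⁻¹ = ((Z t).det)⁻¹ • (Z t).adjugate := by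
      intro t
      rw [Matrix.inv_def, Ring.inverse_eq_inv']
    simp only [heq]
    exact ((hZc.matrix_det.continuousOn).inv₀ hdetne).smul hZc.matrix_adjugate.continuousOn
  have htracec : Continuous (fun M : Matrix (Fin m) (Fin m) ℝ => M.trace) :=
    continuous_id.matrix_trace
  have htrc : ContinuousOn (fun t => (Z t)⁻¹.trace) (Set.Icc 0 r) :=
    htracec.comp_continuousOn hZinvc
  have hA₀c : ContinuousOn A₀ (Set.Icc 0 r) :=
    (continuousOn_const.div htrc (fun t ht => (htrpos t ht).ne')).smul hZinvc
  have hfc : ContinuousOn (fun t => ((A₀ t) ^ 2 * Z t).trace) (Set.Icc 0 r) := by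
    simp only [pow_two]
    exact htracec.comp_continuousOn ((hA₀c.mul hA₀c).mul hZc.continuousOn)
  have hfint : IntervalIntegrable (fun t => ((A₀ t) ^ 2 * Z t).trace) MeasureTheory.volume 0 r :=
    hfc.intervalIntegrable_of_Icc hr.le
  have hgc : ∀ A : ℝ → Matrix (Fin m) (Fin m) ℝ, (∀ i j, Continuous fun t => A t i j) →
      Continuous (fun t => ((A t) ^ 2 * Z t).trace) := by
    intro A hAc
    have hA : Continuous A := continuous_matrix hAc
    have : Continuous fun t => (A t * A t * Z t).trace :=
      ((hA.matrix_mul hA).matrix_mul hZc).matrix_trace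
    simpa only [pow_two] using this
  refine ⟨?_, ?_, ?_⟩
  · intro t ht
    have hZ := hZpd t ht
    have hc : 0 < α / (Z t)⁻¹.trace := div_pos hα (htrpos t ht)
    refine ⟨myPosDef_smul hZ.inv hc, ?_⟩
    show ((α / (Z t)⁻¹.trace) • (Z t)⁻¹).trace = α
    rw [Matrix.trace_smul, smul_eq_mul, div_mul_cancel₀ _ (htrpos t ht).ne']
  · intro A hAc hA2
    refine intervalIntegral.integral_mono_on hr.le hfint
      ((hgc A hAc).intervalIntegrable 0 r) (fun t ht => ?_)
    exact (myPointwise (hYinv t ht) hα hm (hA2 t ht).1 (hA2 t ht).2).1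
  · intro A hAc hA2 heq t ht
    by_contra hne
    have hkey := myPointwise (hYinv t ht) hα hm (hA2 t ht).1 (hA2 t ht).2
    have hlt : ((A₀ t) ^ 2 * Z t).trace < ((A t) ^ 2 * Z t).trace :=
      lt_of_le_of_ne hkey.1 (fun h => hne (hkey.2 h.symm))
    have hstrict := intervalIntegral.integral_lt_integral_of_continuousOn_of_le_of_exists_lt hr
      hfc ((hgc A hAc).continuousOn) (fun x hx => (myPointwise (hYinv x (Set.Ioc_subset_Icc_self hx))
        hα hm (hA2 x (Set.Ioc_subset_Icc_self hx)).1 (hA2 x (Set.Ioc_subset_Icc_self hx)).2).1)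
      ⟨t, ht, hlt⟩
    linarith [hstrict, heq.le, heq.ge]
end

section
/- For a fixed symmetric positive definite (n−1)×(n−1) matrix Z and α > 0, min { Tr(A²Z) : A symmetric, Tr(A) ≥ α } = α² / Tr(Z^{-1}), attained at A = α Z^{-1}/Tr(Z^{-1}). -/
open Matrix

variable {m : ℕ}

lemma single_quad (M : Matrix (Fin m) (Fin m) ℝ) (j : Fin m) :
    star (Pi.single j 1 : Fin m → ℝ) ⬝ᵥ M *ᵥ Pi.single j 1 = M j j := by
  simp [dotProduct, mulVec, Pi.single_apply]

lemma psd_trace_nonneg {M : Matrix (Fin m) (Fin m) ℝ} (h : M.PosSemidef) : 0 ≤ M.trace :=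
  Finset.sum_nonneg fun i _ => by simpa [single_quad] using h.dotProduct_mulVec_nonneg (Pi.single i 1)

lemma pd_trace_pos (hm : 1 ≤ m) {M : Matrix (Fin m) (Fin m) ℝ} (h : M.PosDef) : 0 < M.trace := by
  have i0 : Fin m := ⟨0, hm⟩
  have hne : (Pi.single i0 1 : Fin m → ℝ) ≠ 0 := by
    intro hc
    have := congrFun hc i0
    simp [Pi.single_eq_same] at this
  have h1 : 0 < M i0 i0 := by simpa [single_quad] using h.dotProduct_mulVec_pos hne
  have h2 : ∀ i ∈ Finset.univ, 0 ≤ M i i := fun i _ => by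
    simpa [single_quad] using h.posSemidef.dotProduct_mulVec_nonneg (Pi.single i 1)
  calc (0:ℝ) < M i0 i0 := h1
    _ ≤ M.trace := Finset.single_le_sum h2 (Finset.mem_univ i0)

lemma psd_trace_eq_zero {Z : Matrix (Fin m) (Fin m) ℝ} (hZ : Z.PosDef)
    (B : Matrix (Fin m) (Fin m) ℝ) (h : (Bᴴ * Z * B).trace = 0) : B = 0 := by
  have hdiag : ∀ j, (Bᴴ * Z * B) j j = 0 := by
    have hnn : ∀ i ∈ Finset.univ, 0 ≤ (Bᴴ * Z * B) i i := fun i _ => by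
      simpa [single_quad] using (hZ.posSemidef.conjTranspose_mul_mul_same B).dotProduct_mulVec_nonneg (Pi.single i 1)
    intro j
    exact (Finset.sum_eq_zero_iff_of_nonneg hnn).mp h j (Finset.mem_univ j)
  ext i j
  have hv : B *ᵥ Pi.single j 1 = 0 := by
    by_contra hne
    have hpos := hZ.dotProduct_mulVec_pos hne
    have : star (Pi.single j 1 : Fin m → ℝ) ⬝ᵥ (Bᴴ * Z * B) *ᵥ Pi.single j 1
        = star (B *ᵥ Pi.single j 1) ⬝ᵥ Z *ᵥ (B *ᵥ Pi.single j 1) := by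
      simp only [star_mulVec, dotProduct_mulVec, vecMul_vecMul]
    rw [single_quad, hdiag j] at this
    exact absurd this.symm (ne_of_gt hpos)
  have := congrFun hv i
  simpa [mulVec, dotProduct, Pi.single_apply] using this

lemma key_identity {Z : Matrix (Fin m) (Fin m) ℝ} (hZ : Z.PosDef) (hm : 1 ≤ m)
    (A : Matrix (Fin m) (Fin m) ℝ) (hA : A.IsHermitian) :
    (A ^ 2 * Z).trace =
      ((A - (A.trace / Z⁻¹.trace) • Z⁻¹)ᴴ * Z * (A - (A.trace / Z⁻¹.trace) • Z⁻¹)).trace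
        + A.trace ^ 2 / Z⁻¹.trace := by
  set W := Z⁻¹ with hW
  set t := W.trace with ht'
  have ht : 0 < t := pd_trace_pos hm hZ.inv
  set c := A.trace / t with hc
  set B := A - c • W with hB
  have hu : IsUnit Z.det := isUnit_iff_ne_zero.mpr hZ.det_pos.ne'
  have hWZ : W * Z = 1 := nonsing_inv_mul Z hu
  have hZW : Z * W = 1 := mul_nonsing_inv Z hu
  have hBH : Bᴴ = B := by
    rw [hB, conjTranspose_sub, hA.eq, conjTranspose_smul, star_trivial, hZ.inv.1.eq]
  have hAB : A = B + c • W := by rw [hB]; abel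
  have hexp : A ^ 2 * Z = B * B * Z + c • (B * W * Z) + c • (W * B * Z)
      + (c * c) • (W * W * Z) := by
    rw [hAB, sq]
    simp only [add_mul, mul_add, smul_mul_assoc, mul_smul_comm, smul_smul, smul_add]
    abel
  have hBWZ : B * W * Z = B := by rw [mul_assoc, hWZ, mul_one]
  have hWWZ : W * W * Z = W := by rw [mul_assoc, hWZ, mul_one]
  have htrB : B.trace = 0 := by
    rw [hB, trace_sub, trace_smul, smul_eq_mul, ← ht', hc]
    field_simp
    ring
  have htrWBZ : (W * B * Z).trace = 0 := by
    rw [trace_mul_cycle, hZW, one_mul, htrB]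
  have htrBZB : (B * B * Z).trace = (Bᴴ * Z * B).trace := by
    rw [hBH, trace_mul_cycle (A := B) (B := Z) (C := B)]
  rw [hexp, trace_add, trace_add, trace_add, trace_smul, trace_smul, trace_smul,
    hBWZ, hWWZ, htrB, htrWBZ, htrBZB]
  simp only [smul_eq_mul, mul_zero, add_zero, ← ht', hc]
  field_simp

lemma isHermitian_of_isSymm' {A : Matrix (Fin m) (Fin m) ℝ} (h : A.IsSymm) : A.IsHermitian := by
  rw [IsHermitian, conjTranspose_eq_transpose_of_trivial]; exact h


/-- Pointwise minimization: for a symmetric positive definite matrix `Z` and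
`α > 0`, the minimum of `Tr(A²Z)` over symmetric `A` with `Tr(A) ≥ α` is
`α²/Tr(Z⁻¹)`, attained (uniquely) at `A₀ = α Z⁻¹ / Tr(Z⁻¹)`. -/
theorem min_trace_quadratic {m : ℕ} (hm : 1 ≤ m)
    {Z : Matrix (Fin m) (Fin m) ℝ} (hZ : Z.PosDef) {α : ℝ} (hα : 0 < α) :
    let A₀ := (α / Z⁻¹.trace) • Z⁻¹
    A₀.IsSymm ∧ A₀.PosDef ∧ A₀.trace = α ∧
      (A₀ ^ 2 * Z).trace = α ^ 2 / Z⁻¹.trace ∧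
      (∀ A : Matrix (Fin m) (Fin m) ℝ, A.IsSymm → α ≤ A.trace →
        α ^ 2 / Z⁻¹.trace ≤ (A ^ 2 * Z).trace) ∧
      (∀ A : Matrix (Fin m) (Fin m) ℝ, A.IsSymm → α ≤ A.trace →
        (A ^ 2 * Z).trace = α ^ 2 / Z⁻¹.trace → A = A₀) := by
  intro A₀
  have ht : 0 < Z⁻¹.trace := pd_trace_pos hm hZ.inv
  have hc : 0 < α / Z⁻¹.trace := div_pos hα ht
  have hWsym : Z⁻¹ᵀ = Z⁻¹ := by
    rw [← conjTranspose_eq_transpose_of_trivial]; exact hZ.inv.1.eq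
  have hsymm : A₀.IsSymm := by
    show A₀ᵀ = A₀
    rw [show A₀ = (α / Z⁻¹.trace) • Z⁻¹ from rfl, transpose_smul, hWsym]
  have htr : A₀.trace = α := by
    show ((α / Z⁻¹.trace) • Z⁻¹).trace = α
    rw [trace_smul, smul_eq_mul, div_mul_cancel₀ _ ht.ne']
  refine ⟨hsymm, ?_, htr, ?_, ?_, ?_⟩
  · refine PosDef.of_dotProduct_mulVec_pos ?_ ?_
    · exact isHermitian_of_isSymm' hsymm
    · intro x hx
      have h := hZ.inv.dotProduct_mulVec_pos hx
      show 0 < star x ⬝ᵥ ((α / Z⁻¹.trace) • Z⁻¹) *ᵥ x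
      rw [smul_mulVec, dotProduct_smul, smul_eq_mul]
      exact mul_pos hc h
  · have hk := key_identity hZ hm A₀ (isHermitian_of_isSymm' hsymm)
    rw [htr] at hk
    have h0 : A₀ - (α / Z⁻¹.trace) • Z⁻¹ = 0 := sub_self _
    rw [h0] at hk
    simpa using hk
  · intro A hA hge
    have hk := key_identity hZ hm A (isHermitian_of_isSymm' hA)
    have h1 : 0 ≤ ((A - (A.trace / Z⁻¹.trace) • Z⁻¹)ᴴ * Z *
        (A - (A.trace / Z⁻¹.trace) • Z⁻¹)).trace :=
      psd_trace_nonneg (hZ.posSemidef.conjTranspose_mul_mul_same _)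
    have h2 : α ^ 2 ≤ A.trace ^ 2 := by nlinarith
    rw [hk]
    have : α ^ 2 / Z⁻¹.trace ≤ A.trace ^ 2 / Z⁻¹.trace := by gcongr
    linarith
  · intro A hA hge heq
    have hk := key_identity hZ hm A (isHermitian_of_isSymm' hA)
    have h1 : 0 ≤ ((A - (A.trace / Z⁻¹.trace) • Z⁻¹)ᴴ * Z *
        (A - (A.trace / Z⁻¹.trace) • Z⁻¹)).trace :=
      psd_trace_nonneg (hZ.posSemidef.conjTranspose_mul_mul_same _)
    have h2 : α ^ 2 ≤ A.trace ^ 2 := by nlinarith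
    have h2' : A.trace ^ 2 / Z⁻¹.trace ≤ α ^ 2 / Z⁻¹.trace := by
      rw [heq] at hk; linarith
    have h3 : A.trace ^ 2 ≤ α ^ 2 := by
      have := (div_le_div_iff_of_pos_right ht).mp h2'
      linarith [this]
    have htrA : A.trace = α := by nlinarith
    rw [htrA] at hk h1
    have h4 : ((A - (α / Z⁻¹.trace) • Z⁻¹)ᴴ * Z *
        (A - (α / Z⁻¹.trace) • Z⁻¹)).trace = 0 := by
      rw [heq] at hk; linarith
    exact sub_eq_zero.mp (psd_trace_eq_zero hZ _ h4)
end

section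
/- Let w₁, w₂ be two positive solutions on (0,r₁], (0,r₂] of the same scalar ODE w'' = β(w)/w − ρw (with β a function of position along trajectories in the phase plane), both with w(0) = 0, w increasing, and w(rᵢ) = 1, and with w₁'(0) > w₂'(0) > 0. Then viewed in the phase plane (w, w'), the trajectories cannot cross: w₁'(w₁^{-1}(x)) > w₂'(w₂^{-1}(x)) for all x ∈ (0,1], and hence r₁ = ∫₀¹ dx/w₁'(w₁^{-1}(x)) < r₂ = ∫₀¹ dx/w₂'(w₂^{-1}(x)). Consequently two distinct positive increasing solutions with w(0)=0 cannot satisfy w(r)=1 at the same time r. -/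
open Set Filter Topology

/-- Phase-plane non-crossing and uniqueness for `w'' = β(w)/w − ρw` (with `β`
a function of position `w`): if `w₁, w₂` are positive increasing solutions
with `wᵢ(0) = 0`, `wᵢ(rᵢ) = 1` and `w₁'(0) > w₂'(0) > 0`, then their
phase-plane trajectories cannot cross — whenever `w₁(t₁) = w₂(t₂)` with
`t₁ ∈ (0,r₁]`, `t₂ ∈ (0,r₂]`, one has `w₁'(t₁) > w₂'(t₂)` — and consequently
the traversal times satisfy `r₁ < r₂`; in particular two distinct such
solutions cannot reach `w = 1` at the same time. -/
theorem phase_plane_no_crossing {ρ r₁ r₂ : ℝ} (hρ : 0 ≤ ρ)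
    (hr₁ : 0 < r₁) (hr₂ : 0 < r₂)
    (β : ℝ → ℝ) (hβ : ∀ x ∈ Ioc (0:ℝ) 1, 0 ≤ β x)
    (w₁ dw₁ w₂ dw₂ : ℝ → ℝ)
    (hw₁ : ∀ t ∈ Icc (0:ℝ) r₁, HasDerivAt w₁ (dw₁ t) t)
    (hdw₁ : ∀ t ∈ Ioc (0:ℝ) r₁,
      HasDerivAt dw₁ (β (w₁ t) / w₁ t - ρ * w₁ t) t)
    (hw₂ : ∀ t ∈ Icc (0:ℝ) r₂, HasDerivAt w₂ (dw₂ t) t)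
    (hdw₂ : ∀ t ∈ Ioc (0:ℝ) r₂,
      HasDerivAt dw₂ (β (w₂ t) / w₂ t - ρ * w₂ t) t)
    (hw₁0 : w₁ 0 = 0) (hw₂0 : w₂ 0 = 0)
    (hw₁r : w₁ r₁ = 1) (hw₂r : w₂ r₂ = 1)
    (hpos₁ : ∀ t ∈ Ioc (0:ℝ) r₁, 0 < w₁ t ∧ 0 < dw₁ t)
    (hpos₂ : ∀ t ∈ Ioc (0:ℝ) r₂, 0 < w₂ t ∧ 0 < dw₂ t)
    (h0 : dw₁ 0 > dw₂ 0) (h0' : dw₂ 0 > 0) :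
    (∀ t₁ ∈ Ioc (0:ℝ) r₁, ∀ t₂ ∈ Ioc (0:ℝ) r₂,
      w₁ t₁ = w₂ t₂ → dw₂ t₂ < dw₁ t₁) ∧
    r₁ < r₂ := by
  -- continuity and monotonicity
  have cont₁ : ContinuousOn w₁ (Icc 0 r₁) :=
    fun t ht => (hw₁ t ht).continuousAt.continuousWithinAt
  have cont₂ : ContinuousOn w₂ (Icc 0 r₂) :=
    fun t ht => (hw₂ t ht).continuousAt.continuousWithinAt
  have mono₁ : StrictMonoOn w₁ (Icc 0 r₁) := by
    apply strictMonoOn_of_deriv_pos (convex_Icc _ _) cont₁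
    intro x hx
    rw [interior_Icc] at hx
    rw [(hw₁ x ⟨hx.1.le, hx.2.le⟩).deriv]
    exact (hpos₁ x ⟨hx.1, hx.2.le⟩).2
  have mono₂ : StrictMonoOn w₂ (Icc 0 r₂) := by
    apply strictMonoOn_of_deriv_pos (convex_Icc _ _) cont₂
    intro x hx
    rw [interior_Icc] at hx
    rw [(hw₂ x ⟨hx.1.le, hx.2.le⟩).deriv]
    exact (hpos₂ x ⟨hx.1, hx.2.le⟩).2
  have hw1mem : ∀ t ∈ Icc (0:ℝ) r₁, w₁ t ∈ Icc (0:ℝ) 1 := by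
    intro t ht
    constructor
    · rw [← hw₁0]
      exact mono₁.monotoneOn (left_mem_Icc.2 hr₁.le) ht ht.1
    · rw [← hw₁r]
      exact mono₁.monotoneOn ht (right_mem_Icc.2 hr₁.le) ht.2
  -- the inverse function σ of w₂ on [0, r₂]
  have hexists : ∀ y : ℝ, ∃ u, y ∈ Icc (0:ℝ) 1 → (u ∈ Icc 0 r₂ ∧ w₂ u = y) := by
    intro y
    by_cases hy : y ∈ Icc (0:ℝ) 1
    · have hy' : y ∈ Icc (w₂ 0) (w₂ r₂) := by rw [hw₂0, hw₂r]; exact hy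
      obtain ⟨u, hu, hwu⟩ := intermediate_value_Icc hr₂.le cont₂ hy'
      exact ⟨u, fun _ => ⟨hu, hwu⟩⟩
    · exact ⟨0, fun h => absurd h hy⟩
  choose σ hσ using hexists
  have hσmem : ∀ y ∈ Icc (0:ℝ) 1, σ y ∈ Icc 0 r₂ := fun y hy => (hσ y hy).1
  have hσval : ∀ y ∈ Icc (0:ℝ) 1, w₂ (σ y) = y := fun y hy => (hσ y hy).2
  have hσuniq : ∀ y ∈ Icc (0:ℝ) 1, ∀ u ∈ Icc (0:ℝ) r₂, w₂ u = y → u = σ y := by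
    intro y hy u hu hwu
    exact mono₂.injOn hu (hσmem y hy) (by rw [hwu, hσval y hy])
  -- τ = σ ∘ w₁ : time reparametrization
  set τ : ℝ → ℝ := fun t => σ (w₁ t) with hτdef
  have hτmem : ∀ t ∈ Icc (0:ℝ) r₁, τ t ∈ Icc 0 r₂ := fun t ht => hσmem _ (hw1mem t ht)
  have hτval : ∀ t ∈ Icc (0:ℝ) r₁, w₂ (τ t) = w₁ t := fun t ht => hσval _ (hw1mem t ht)
  have hτr : τ r₁ = r₂ := by
    have h1 : (1:ℝ) ∈ Icc (0:ℝ) 1 := ⟨zero_le_one, le_refl 1⟩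
    have := hσuniq 1 h1 r₂ (right_mem_Icc.2 hr₂.le) hw₂r
    simp only [hτdef, hw₁r]
    exact this.symm
  have hτpos : ∀ t ∈ Ioc (0:ℝ) r₁, τ t ∈ Ioc 0 r₂ := by
    intro t ht
    have htI : t ∈ Icc (0:ℝ) r₁ := ⟨ht.1.le, ht.2⟩
    refine ⟨?_, (hτmem t htI).2⟩
    rcases (hτmem t htI).1.lt_or_eq with h | h
    · exact h
    · exfalso
      have := hτval t htI
      rw [← h, hw₂0] at this
      exact absurd this.symm (ne_of_gt (hpos₁ t ht).1)
  -- interior values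
  have hw1int : ∀ t ∈ Ioo (0:ℝ) r₁, w₁ t ∈ Ioo (0:ℝ) 1 := by
    intro t ht
    refine ⟨(hpos₁ t ⟨ht.1, ht.2.le⟩).1, ?_⟩
    rw [← hw₁r]
    exact mono₁ ⟨ht.1.le, ht.2.le⟩ (right_mem_Icc.2 hr₁.le) ht.2
  have hσint : ∀ y ∈ Ioo (0:ℝ) 1, σ y ∈ Ioo (0:ℝ) r₂ := by
    intro y hy
    have hyI : y ∈ Icc (0:ℝ) 1 := ⟨hy.1.le, hy.2.le⟩
    rcases (hσmem y hyI).1.lt_or_eq with h | h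
    · rcases (hσmem y hyI).2.lt_or_eq with h' | h'
      · exact ⟨h, h'⟩
      · exfalso
        have := hσval y hyI
        rw [h', hw₂r] at this
        exact absurd this (ne_of_lt hy.2).symm
    · exfalso
      have := hσval y hyI
      rw [← h, hw₂0] at this
      exact absurd this (ne_of_gt hy.1).symm
  -- continuity of σ at interior points
  have hσcont : ∀ x ∈ Ioo (0:ℝ) 1, ContinuousAt σ x := by
    intro x hx
    rw [Metric.continuousAt_iff]
    intro ε hε
    set u := σ x with hu
    have huI : u ∈ Ioo (0:ℝ) r₂ := hσint x hx
    set ε' := min ε (min u (r₂ - u)) / 2 with hε'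
    have m1 := min_le_left ε (min u (r₂ - u))
    have m2 := min_le_right ε (min u (r₂ - u))
    have m3 := min_le_left u (r₂ - u)
    have m4 := min_le_right u (r₂ - u)
    have hε'pos : 0 < ε' := by
      apply half_pos
      exact lt_min hε (lt_min huI.1 (by linarith [huI.2]))
    have hab : u - ε' ∈ Icc (0:ℝ) r₂ := ⟨by linarith [huI.1], by linarith [huI.2]⟩
    have hab' : u + ε' ∈ Icc (0:ℝ) r₂ := ⟨by linarith [huI.1], by linarith [huI.2]⟩
    have hlt : w₂ (u - ε') < x := by
      rw [← hσval x ⟨hx.1.le, hx.2.le⟩]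
      exact mono₂ hab ⟨huI.1.le, huI.2.le⟩ (by linarith)
    have hgt : x < w₂ (u + ε') := by
      rw [← hσval x ⟨hx.1.le, hx.2.le⟩]
      exact mono₂ ⟨huI.1.le, huI.2.le⟩ hab' (by linarith)
    refine ⟨min (x - w₂ (u - ε')) (w₂ (u + ε') - x), lt_min (by linarith) (by linarith), ?_⟩
    intro y hy
    rw [Real.dist_eq] at hy ⊢
    rw [abs_sub_lt_iff] at hy
    have n1 := min_le_left (x - w₂ (u - ε')) (w₂ (u + ε') - x)
    have n2 := min_le_right (x - w₂ (u - ε')) (w₂ (u + ε') - x)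
    have hy1 : w₂ (u - ε') < y := by linarith [hy.2]
    have hy2 : y < w₂ (u + ε') := by linarith [hy.1]
    have hyI : y ∈ Icc (0:ℝ) 1 := by
      constructor
      · have : (0:ℝ) ≤ w₂ (u - ε') := by
          rw [← hw₂0]
          exact mono₂.monotoneOn (left_mem_Icc.2 hr₂.le) hab hab.1
        linarith
      · have : w₂ (u + ε') ≤ 1 := by
          rw [← hw₂r]
          exact mono₂.monotoneOn hab' (right_mem_Icc.2 hr₂.le) hab'.2
        linarith
    have hσy := hσval y hyI
    have hσyI := hσmem y hyI
    have h1 : u - ε' < σ y := by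
      by_contra h
      push_neg at h
      have := mono₂.monotoneOn hσyI hab h
      rw [hσy] at this
      linarith
    have h2 : σ y < u + ε' := by
      by_contra h
      push_neg at h
      have := mono₂.monotoneOn hab' hσyI h
      rw [hσy] at this
      linarith
    rw [abs_sub_lt_iff]
    constructor <;> linarith
  -- derivative of σ at interior points
  have hσderiv : ∀ x ∈ Ioo (0:ℝ) 1, HasDerivAt σ (dw₂ (σ x))⁻¹ x := by
    intro x hx
    have hmem := hσint x hx
    apply HasDerivAt.of_local_left_inverse (hσcont x hx)
      (hw₂ (σ x) ⟨hmem.1.le, hmem.2.le⟩)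
      (ne_of_gt (hpos₂ (σ x) ⟨hmem.1, hmem.2.le⟩).2)
    filter_upwards [Ioo_mem_nhds hx.1 hx.2] with y hy
    exact hσval y ⟨hy.1.le, hy.2.le⟩
  -- derivative of τ on (0, r₁)
  have hτderiv : ∀ t ∈ Ioo (0:ℝ) r₁, HasDerivAt τ ((dw₂ (τ t))⁻¹ * dw₁ t) t := by
    intro t ht
    exact (hσderiv (w₁ t) (hw1int t ht)).comp t (hw₁ t ⟨ht.1.le, ht.2.le⟩)
  -- conserved quantity g
  set g : ℝ → ℝ := fun s => dw₁ s ^ 2 - dw₂ (τ s) ^ 2 with hgdef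
  have hgderiv : ∀ s ∈ Ioo (0:ℝ) r₁, HasDerivAt g 0 s := by
    intro s hs
    have hsI : s ∈ Ioc (0:ℝ) r₁ := ⟨hs.1, hs.2.le⟩
    have hτs := hτpos s hsI
    have hτc : w₂ (τ s) = w₁ s := hτval s ⟨hs.1.le, hs.2.le⟩
    have hd2pos : 0 < dw₂ (τ s) := (hpos₂ (τ s) hτs).2
    have hcomp : HasDerivAt (fun t => dw₂ (τ t))
        ((β (w₂ (τ s)) / w₂ (τ s) - ρ * w₂ (τ s)) * ((dw₂ (τ s))⁻¹ * dw₁ s)) s :=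
      (hdw₂ (τ s) hτs).comp s (hτderiv s hs)
    have hD := ((hdw₁ s hsI).pow 2).sub (hcomp.pow 2)
    convert hD using 1
    · rfl
    · rfl
    · rfl
    rw [hτc]
    field_simp
    ring
  have hgconst : ∀ s ∈ Ioo (0:ℝ) r₁, ∀ t ∈ Ioo (0:ℝ) r₁, s ≤ t → g s = g t := by
    intro s hs t ht hst
    rcases eq_or_lt_of_le hst with h | h
    · rw [h]
    · have hsub : Icc s t ⊆ Ioo (0:ℝ) r₁ := fun x hx =>
        ⟨lt_of_lt_of_le hs.1 hx.1, lt_of_le_of_lt hx.2 ht.2⟩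
      have hcont : ContinuousOn g (Icc s t) := fun x hx =>
        (hgderiv x (hsub hx)).continuousAt.continuousWithinAt
      obtain ⟨c, _, hceq⟩ := exists_hasDerivAt_eq_slope g (fun _ => 0) h hcont
        (fun x hx => hgderiv x (hsub ⟨hx.1.le, hx.2.le⟩))
      have h0div : (g t - g s) / (t - s) = 0 := hceq.symm
      rcases div_eq_zero_iff.1 h0div with h' | h'
      · linarith
      · linarith
  set K := g (r₁ / 2) with hKdef
  have hr₁2 : r₁ / 2 ∈ Ioo (0:ℝ) r₁ := ⟨by linarith, by linarith⟩
  have hK : ∀ s ∈ Ioo (0:ℝ) r₁, g s = K := by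
    intro s hs
    rcases le_total s (r₁ / 2) with h | h
    · exact hgconst s hs _ hr₁2 h
    · exact (hgconst _ hr₁2 s hs h).symm
  -- τ tends to 0 at 0⁺
  have hIoo_mem : Ioo (0:ℝ) r₁ ∈ 𝓝[>] (0:ℝ) :=
    Ioo_mem_nhdsGT_of_mem ⟨le_refl 0, hr₁⟩
  have hτ0 : Tendsto τ (𝓝[>] (0:ℝ)) (𝓝 0) := by
    rw [tendsto_order]
    constructor
    · intro a ha
      filter_upwards [hIoo_mem] with s hs
      have := (hτmem s ⟨hs.1.le, hs.2.le⟩).1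
      linarith
    · intro b hb
      rcases le_or_gt b r₂ with hbr | hbr
      · have hw₂b : 0 < w₂ b := (hpos₂ b ⟨hb, hbr⟩).1
        have hcw : Tendsto w₁ (𝓝 0) (𝓝 0) := by
          have := (hw₁ 0 (left_mem_Icc.2 hr₁.le)).continuousAt
          rwa [ContinuousAt, hw₁0] at this
        have hev : ∀ᶠ s in 𝓝 (0:ℝ), w₁ s < w₂ b := hcw.eventually_lt_const hw₂b
        filter_upwards [hIoo_mem, hev.filter_mono nhdsWithin_le_nhds] with s hs hws
        by_contra hcon
        push_neg at hcon
        have := mono₂.monotoneOn ⟨hb.le, hbr⟩ (hτmem s ⟨hs.1.le, hs.2.le⟩) hcon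
        rw [hτval s ⟨hs.1.le, hs.2.le⟩] at this
        linarith
      · filter_upwards [hIoo_mem] with s hs
        have := (hτmem s ⟨hs.1.le, hs.2.le⟩).2
        linarith
  -- slope limits at 0
  have hslope₁ : Tendsto (fun s => w₁ s / s) (𝓝[>] (0:ℝ)) (𝓝 (dw₁ 0)) := by
    have h := hasDerivAt_iff_tendsto_slope.1 (hw₁ 0 (left_mem_Icc.2 hr₁.le))
    have h' := h.mono_left (nhdsWithin_mono _ (fun x hx => ne_of_gt hx))
    apply h'.congr'
    filter_upwards [self_mem_nhdsWithin] with s _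
    rw [slope_def_field, hw₁0, sub_zero, sub_zero]
  have hslope₂ : Tendsto (fun s => w₂ s / s) (𝓝[>] (0:ℝ)) (𝓝 (dw₂ 0)) := by
    have h := hasDerivAt_iff_tendsto_slope.1 (hw₂ 0 (left_mem_Icc.2 hr₂.le))
    have h' := h.mono_left (nhdsWithin_mono _ (fun x hx => ne_of_gt hx))
    apply h'.congr'
    filter_upwards [self_mem_nhdsWithin] with s _
    rw [slope_def_field, hw₂0, sub_zero, sub_zero]
  -- K > 0
  have hKpos : 0 < K := by
    by_contra hK0
    push_neg at hK0
    have hle : ∀ s ∈ Ioo (0:ℝ) r₁, dw₁ s ≤ dw₂ (τ s) := by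
      intro s hs
      have hgs := hK s hs
      have h1 : 0 < dw₁ s := (hpos₁ s ⟨hs.1, hs.2.le⟩).2
      have h2 : 0 < dw₂ (τ s) := (hpos₂ (τ s) (hτpos s ⟨hs.1, hs.2.le⟩)).2
      simp only [hgdef] at hgs
      nlinarith
    have hh : ∀ s ∈ Ioo (0:ℝ) r₁, ∀ t ∈ Ioo (0:ℝ) r₁, s ≤ t → τ t - t ≤ τ s - s := by
      intro s hs t ht hst
      rcases eq_or_lt_of_le hst with h | h
      · rw [h]
      · have hsub : Icc s t ⊆ Ioo (0:ℝ) r₁ := fun x hx =>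
          ⟨lt_of_lt_of_le hs.1 hx.1, lt_of_le_of_lt hx.2 ht.2⟩
        have hcont : ContinuousOn (fun u => τ u - u) (Icc s t) := fun x hx =>
          (((hτderiv x (hsub hx)).sub (hasDerivAt_id x)).continuousAt).continuousWithinAt
        obtain ⟨c, hc, hceq⟩ := exists_hasDerivAt_eq_slope (fun u => τ u - u)
          (fun c => (dw₂ (τ c))⁻¹ * dw₁ c - 1) h hcont
          (fun x hx => by
            exact (hτderiv x (hsub ⟨hx.1.le, hx.2.le⟩)).sub (hasDerivAt_id x))
        have hcmem := hsub ⟨hc.1.le, hc.2.le⟩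
        have h2 : 0 < dw₂ (τ c) := (hpos₂ (τ c) (hτpos c ⟨hcmem.1, hcmem.2.le⟩)).2
        have hle' : (dw₂ (τ c))⁻¹ * dw₁ c ≤ 1 := by
          rw [← div_eq_inv_mul, div_le_one h2]
          exact hle c hcmem
        have hnp : (τ t - t - (τ s - s)) / (t - s) ≤ 0 := by rw [← hceq]; linarith
        rcases div_nonpos_iff.1 hnp with ⟨h1', h2'⟩ | ⟨h1', h2'⟩
        · linarith
        · linarith
    have hτles : ∀ t ∈ Ioo (0:ℝ) r₁, τ t ≤ t := by
      intro t ht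
      have hten : Tendsto (fun s => τ s - s) (𝓝[>] (0:ℝ)) (𝓝 0) := by
        simpa using hτ0.sub (tendsto_id.mono_left nhdsWithin_le_nhds)
      have hev : ∀ᶠ s in 𝓝[>] (0:ℝ), τ t - t ≤ τ s - s := by
        filter_upwards [Ioo_mem_nhdsGT_of_mem ⟨le_refl (0:ℝ), ht.1⟩] with s hs
        exact hh s ⟨hs.1, hs.2.trans ht.2⟩ t ht hs.2.le
      have := ge_of_tendsto hten hev
      linarith
    have hτposev : ∀ᶠ s in 𝓝[>] (0:ℝ), τ s ∈ Ioi (0:ℝ) := by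
      filter_upwards [hIoo_mem] with s hs
      exact (hτpos s ⟨hs.1, hs.2.le⟩).1
    have hτt : Tendsto τ (𝓝[>] (0:ℝ)) (𝓝[>] (0:ℝ)) :=
      tendsto_nhdsWithin_iff.2 ⟨hτ0, hτposev⟩
    have hcomp : Tendsto (fun s => w₂ (τ s) / τ s) (𝓝[>] (0:ℝ)) (𝓝 (dw₂ 0)) :=
      hslope₂.comp hτt
    have hineq : ∀ᶠ s in 𝓝[>] (0:ℝ), w₁ s / s ≤ w₂ (τ s) / τ s := by
      filter_upwards [hIoo_mem] with s hs
      have h1 : 0 < τ s := (hτpos s ⟨hs.1, hs.2.le⟩).1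
      have h2 : τ s ≤ s := hτles s hs
      rw [hτval s ⟨hs.1.le, hs.2.le⟩]
      exact div_le_div_of_nonneg_left (le_of_lt (hpos₁ s ⟨hs.1, hs.2.le⟩).1) h1 h2
    have := le_of_tendsto_of_tendsto hslope₁ hcomp hineq
    linarith
  -- phase-plane strict inequality on the interior
  have hlt : ∀ s ∈ Ioo (0:ℝ) r₁, dw₂ (τ s) < dw₁ s := by
    intro s hs
    have hgs := hK s hs
    have h1 : 0 < dw₁ s := (hpos₁ s ⟨hs.1, hs.2.le⟩).2
    have h2 : 0 < dw₂ (τ s) := (hpos₂ (τ s) (hτpos s ⟨hs.1, hs.2.le⟩)).2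
    simp only [hgdef] at hgs
    nlinarith
  -- limit of τ at r₁ from the left
  have hIoo' : Ioo (0:ℝ) r₁ ∈ 𝓝[<] r₁ := Ioo_mem_nhdsLT_of_mem ⟨hr₁, le_refl r₁⟩
  have hτr₁lim : Tendsto τ (𝓝[<] r₁) (𝓝 r₂) := by
    rw [tendsto_order]
    constructor
    · intro a ha
      rcases lt_or_ge a 0 with hneg | hpos
      · filter_upwards [hIoo'] with s hs
        have := (hτmem s ⟨hs.1.le, hs.2.le⟩).1
        linarith
      · have hw₂a : w₂ a < 1 := by
          rw [← hw₂r]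
          exact mono₂ ⟨hpos, ha.le⟩ (right_mem_Icc.2 hr₂.le) ha
        have hcw : Tendsto w₁ (𝓝 r₁) (𝓝 1) := by
          have := (hw₁ r₁ (right_mem_Icc.2 hr₁.le)).continuousAt
          rwa [ContinuousAt, hw₁r] at this
        have hev : ∀ᶠ s in 𝓝 r₁, w₂ a < w₁ s := hcw.eventually_const_lt hw₂a
        filter_upwards [hIoo', hev.filter_mono nhdsWithin_le_nhds] with s hs hws
        by_contra hcon
        push_neg at hcon
        have := mono₂.monotoneOn (hτmem s ⟨hs.1.le, hs.2.le⟩) ⟨hpos, ha.le⟩ hcon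
        rw [hτval s ⟨hs.1.le, hs.2.le⟩] at this
        linarith
    · intro b hb
      filter_upwards [hIoo'] with s hs
      have := (hτmem s ⟨hs.1.le, hs.2.le⟩).2
      linarith
  -- value of the conserved quantity at the endpoint
  have hgr₁ : dw₁ r₁ ^ 2 - dw₂ r₂ ^ 2 = K := by
    have hd1 : Tendsto dw₁ (𝓝[<] r₁) (𝓝 (dw₁ r₁)) :=
      ((hdw₁ r₁ ⟨hr₁, le_refl r₁⟩).continuousAt).continuousWithinAt
    have hd2c : Tendsto dw₂ (𝓝 r₂) (𝓝 (dw₂ r₂)) :=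
      (hdw₂ r₂ ⟨hr₂, le_refl r₂⟩).continuousAt
    have hd2 : Tendsto (fun s => dw₂ (τ s)) (𝓝[<] r₁) (𝓝 (dw₂ r₂)) :=
      hd2c.comp hτr₁lim
    have hglim : Tendsto g (𝓝[<] r₁) (𝓝 (dw₁ r₁ ^ 2 - dw₂ r₂ ^ 2)) :=
      (hd1.pow 2).sub (hd2.pow 2)
    have hconst : Tendsto g (𝓝[<] r₁) (𝓝 K) := by
      apply Tendsto.congr' _ tendsto_const_nhds
      filter_upwards [hIoo'] with s hs
      exact (hK s hs).symm
    exact tendsto_nhds_unique hglim hconst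
  -- first conclusion
  have key : ∀ t₁ ∈ Ioc (0:ℝ) r₁, ∀ t₂ ∈ Ioc (0:ℝ) r₂, w₁ t₁ = w₂ t₂ → dw₂ t₂ < dw₁ t₁ := by
    intro t₁ ht₁ t₂ ht₂ heq
    have ht₂τ : t₂ = τ t₁ :=
      hσuniq (w₁ t₁) (hw1mem t₁ ⟨ht₁.1.le, ht₁.2⟩) t₂ ⟨ht₂.1.le, ht₂.2⟩ heq.symm
    rw [ht₂τ]
    rcases eq_or_lt_of_le ht₁.2 with h | h
    · rw [h, hτr]
      have h2 : 0 < dw₂ r₂ := (hpos₂ r₂ ⟨hr₂, le_refl r₂⟩).2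
      have h1 : 0 < dw₁ r₁ := (hpos₁ r₁ ⟨hr₁, le_refl r₁⟩).2
      nlinarith
    · exact hlt t₁ ⟨ht₁.1, h⟩
  refine ⟨key, ?_⟩
  -- second conclusion: r₁ < r₂
  have hmvt : ∀ s ∈ Ioo (0:ℝ) r₁, ∀ t ∈ Ioo (0:ℝ) r₁, s < t → τ s - s < τ t - t := by
    intro s hs t ht hst
    have hsub : Icc s t ⊆ Ioo (0:ℝ) r₁ := fun x hx =>
      ⟨lt_of_lt_of_le hs.1 hx.1, lt_of_le_of_lt hx.2 ht.2⟩
    have hcont : ContinuousOn (fun u => τ u - u) (Icc s t) := fun x hx =>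
      (((hτderiv x (hsub hx)).sub (hasDerivAt_id x)).continuousAt).continuousWithinAt
    obtain ⟨c, hc, hceq⟩ := exists_hasDerivAt_eq_slope (fun u => τ u - u)
      (fun c => (dw₂ (τ c))⁻¹ * dw₁ c - 1) hst hcont
      (fun x hx => by
        exact (hτderiv x (hsub ⟨hx.1.le, hx.2.le⟩)).sub (hasDerivAt_id x))
    have hcmem := hsub ⟨hc.1.le, hc.2.le⟩
    have h2 : 0 < dw₂ (τ c) := (hpos₂ (τ c) (hτpos c ⟨hcmem.1, hcmem.2.le⟩)).2
    have hgt1 : 1 < (dw₂ (τ c))⁻¹ * dw₁ c := by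
      rw [← div_eq_inv_mul, lt_div_iff₀ h2]
      have := hlt c hcmem
      linarith
    have hpos' : 0 < (τ t - t - (τ s - s)) / (t - s) := by rw [← hceq]; linarith
    rcases div_pos_iff.1 hpos' with ⟨h1', h2'⟩ | ⟨h1', h2'⟩
    · linarith
    · linarith
  have hnn : ∀ t ∈ Ioo (0:ℝ) r₁, 0 ≤ τ t - t := by
    intro t ht
    have hten : Tendsto (fun s => τ s - s) (𝓝[>] (0:ℝ)) (𝓝 0) := by
      simpa using hτ0.sub (tendsto_id.mono_left nhdsWithin_le_nhds)
    apply le_of_tendsto hten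
    filter_upwards [Ioo_mem_nhdsGT_of_mem ⟨le_refl (0:ℝ), ht.1⟩] with s hs
    exact (hmvt s ⟨hs.1, hs.2.trans ht.2⟩ t ht hs.2).le
  have ht₀ : r₁ / 2 ∈ Ioo (0:ℝ) r₁ := hr₁2
  have ht₀' : r₁ / 4 ∈ Ioo (0:ℝ) r₁ := ⟨by linarith, by linarith⟩
  have hδ : 0 < τ (r₁ / 2) - r₁ / 2 :=
    lt_of_le_of_lt (hnn (r₁ / 4) ht₀') (hmvt (r₁ / 4) ht₀' (r₁ / 2) ht₀ (by linarith))
  have htI : max ((r₁ / 2 + r₁) / 2) (r₁ - (τ (r₁ / 2) - r₁ / 2) / 2) ∈ Ioo (0:ℝ) r₁ := by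
    constructor
    · have := le_max_left ((r₁ / 2 + r₁) / 2) (r₁ - (τ (r₁ / 2) - r₁ / 2) / 2)
      linarith
    · exact max_lt (by linarith) (by linarith)
  have htgt : r₁ / 2 < max ((r₁ / 2 + r₁) / 2) (r₁ - (τ (r₁ / 2) - r₁ / 2) / 2) := by
    have := le_max_left ((r₁ / 2 + r₁) / 2) (r₁ - (τ (r₁ / 2) - r₁ / 2) / 2)
    linarith
  have h1 := hmvt (r₁ / 2) ht₀ _ htI htgt
  have h2 : τ (max ((r₁ / 2 + r₁) / 2) (r₁ - (τ (r₁ / 2) - r₁ / 2) / 2)) ≤ r₂ :=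
    (hτmem _ ⟨htI.1.le, htI.2.le⟩).2
  have h3 := le_max_right ((r₁ / 2 + r₁) / 2) (r₁ - (τ (r₁ / 2) - r₁ / 2) / 2)
  linarith
end

section
/- Let ρ ≥ 0, √ρ·r < π, κ ≤ ρ, and suppose R : [0,r] → Sym(n−1) is continuous with R(t) ≤ ρI for all t. If Y solves Y'' = −R(t)Y with Y(0)=0, Y(r)=I, then Tr(Y'(r)) = E(R,Y) ≥ min over Z of E(ρI, Z) = (n−1)√ρ cot(√ρ r) when ρ > 0 (and (n−1)/r when ρ = 0). In particular, (log s(r))' ≥ (log s_ρ(r))' (the usual Günther inequality in ODE form). -/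
open Matrix Set Real

open Filter in
private lemma gunther_dotProduct_expand {m : ℕ} (ρ : ℝ) (A Y : Matrix (Fin m) (Fin m) ℝ)
    (j : Fin m) :
    (fun i => Y i j) ⬝ᵥ ((ρ • (1:Matrix (Fin m) (Fin m) ℝ) - A) *ᵥ (fun i => Y i j))
    = ∑ i, (ρ * Y i j ^ 2 - Y i j * (A * Y) i j) := by
  have hmv : ∀ i, ((ρ • (1:Matrix (Fin m) (Fin m) ℝ) - A) *ᵥ fun k => Y k j) i
      = ρ * Y i j - (A * Y) i j := by
    intro i
    simp [Matrix.mulVec, dotProduct, Matrix.sub_apply, Matrix.smul_apply, Matrix.one_apply,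
      sub_mul, ite_mul, one_mul, zero_mul, Finset.sum_sub_distrib, Finset.sum_ite_eq,
      Matrix.mul_apply]
  simp only [dotProduct, hmv]
  exact Finset.sum_congr rfl fun i _ => by ring

attribute [local instance] Matrix.normedAddCommGroup Matrix.normedSpace

open Filter in
private lemma gunther_aux {m : ℕ} {ρ r : ℝ}
    (hr : 0 < r) (c : ℝ → ℝ)
    (hc : ∀ t ∈ Ioc (0:ℝ) r, HasDerivAt c (-ρ - c t ^ 2) t)
    (hlim : Tendsto (fun t => t * c t) (nhdsWithin 0 (Ioi 0)) (nhds 1))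
    (R : ℝ → Matrix (Fin m) (Fin m) ℝ)
    (hRle : ∀ t ∈ Icc (0:ℝ) r,
      (ρ • (1 : Matrix (Fin m) (Fin m) ℝ) - R t).PosSemidef)
    (Y dY : ℝ → Matrix (Fin m) (Fin m) ℝ)
    (hY : ∀ t ∈ Icc (0:ℝ) r, HasDerivAt Y (dY t) t)
    (hdY : ∀ t ∈ Icc (0:ℝ) r, HasDerivAt dY (-(R t * Y t)) t)
    (hY0 : Y 0 = 0) (hYr : Y r = 1) :
    (m : ℝ) * c r ≤ (dY r).trace := by
  have hYe : ∀ t ∈ Icc (0:ℝ) r, ∀ i j : Fin m,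
      HasDerivAt (fun s => Y s i j) (dY t i j) t := fun t ht i j =>
    hasDerivAt_pi.mp (hasDerivAt_pi.mp (hY t ht) i) j
  have hdYe : ∀ t ∈ Icc (0:ℝ) r, ∀ i j : Fin m,
      HasDerivAt (fun s => dY s i j) (-(R t * Y t) i j) t := fun t ht i j =>
    hasDerivAt_pi.mp (hasDerivAt_pi.mp (hdY t ht) i) j
  set S : ℝ → ℝ := fun t => ∑ i, ∑ j, Y t i j * dY t i j with hS
  set Q : ℝ → ℝ := fun t => ∑ i, ∑ j, (Y t i j) ^ 2 with hQ
  set F : ℝ → ℝ := fun t => S t - c t * Q t with hF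
  set E : ℝ → ℝ := fun t =>
    (∑ i, ∑ j, (dY t i j * dY t i j + Y t i j * (-(R t * Y t)) i j))
      - ((-ρ - c t ^ 2) * Q t + c t * (∑ i, ∑ j, (2 * Y t i j * dY t i j))) with hE
  have hSd : ∀ t ∈ Icc (0:ℝ) r, HasDerivAt S
      (∑ i, ∑ j, (dY t i j * dY t i j + Y t i j * (-(R t * Y t)) i j)) t := by
    intro t ht
    exact HasDerivAt.fun_sum fun i _ => HasDerivAt.fun_sum fun j _ =>
      (hYe t ht i j).mul (hdYe t ht i j)
  have hQd : ∀ t ∈ Icc (0:ℝ) r, HasDerivAt Q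
      (∑ i, ∑ j, (2 * Y t i j * dY t i j)) t := by
    intro t ht
    refine HasDerivAt.fun_sum fun i _ => HasDerivAt.fun_sum fun j _ => ?_
    have h1 := (hYe t ht i j).fun_mul (hYe t ht i j)
    have h2 : dY t i j * Y t i j + Y t i j * dY t i j = 2 * Y t i j * dY t i j := by ring
    simpa [pow_two, h2] using h1
  have hFd : ∀ t ∈ Ioc (0:ℝ) r, HasDerivAt F (E t) t := by
    intro t ht
    have ht' : t ∈ Icc (0:ℝ) r := ⟨le_of_lt ht.1, ht.2⟩
    exact (hSd t ht').sub ((hc t ht).mul (hQd t ht'))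
  have hEnn : ∀ t ∈ Ioc (0:ℝ) r, 0 ≤ E t := by
    intro t ht
    have ht' : t ∈ Icc (0:ℝ) r := ⟨le_of_lt ht.1, ht.2⟩
    have key : E t = (∑ i, ∑ j, (dY t i j - c t * Y t i j) ^ 2)
        + ∑ i, ∑ j, (ρ * Y t i j ^ 2 - Y t i j * (R t * Y t) i j) := by
      simp only [hE, hQ, Matrix.neg_apply, Finset.mul_sum, ← Finset.sum_add_distrib,
        ← Finset.sum_sub_distrib]
      refine Finset.sum_congr rfl fun i _ => Finset.sum_congr rfl fun j _ => ?_
      ring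
    rw [key]
    have hA : 0 ≤ ∑ i, ∑ j, (dY t i j - c t * Y t i j) ^ 2 :=
      Finset.sum_nonneg fun i _ => Finset.sum_nonneg fun j _ => sq_nonneg _
    have hB : 0 ≤ ∑ i, ∑ j, (ρ * Y t i j ^ 2 - Y t i j * (R t * Y t) i j) := by
      rw [Finset.sum_comm]
      refine Finset.sum_nonneg fun j _ => ?_
      have h0 : 0 ≤ (fun i => Y t i j) ⬝ᵥ ((ρ • (1:Matrix (Fin m) (Fin m) ℝ) - R t)
          *ᵥ (fun i => Y t i j)) := by simpa using (hRle t ht').dotProduct_mulVec_nonneg (fun i => Y t i j)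
      rwa [gunther_dotProduct_expand] at h0
    linarith
  have hcont : ContinuousOn F (Ioc 0 r) := fun t ht =>
    ((hFd t ht).continuousAt).continuousWithinAt
  have hmono : MonotoneOn F (Ioc 0 r) := by
    refine monotoneOn_of_hasDerivWithinAt_nonneg (convex_Ioc 0 r) hcont
      (f' := E) (fun x hx => ?_) (fun x hx => ?_)
    · rw [interior_Ioc] at hx
      exact (hFd x (Ioo_subset_Ioc_self hx)).hasDerivWithinAt
    · rw [interior_Ioc] at hx
      exact hEnn x (Ioo_subset_Ioc_self hx)
  have h0mem : (0:ℝ) ∈ Icc (0:ℝ) r := ⟨le_refl 0, hr.le⟩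
  have hSlim : Tendsto S (nhdsWithin 0 (Ioi 0)) (nhds 0) := by
    have h1 : Tendsto S (nhds 0) (nhds (∑ i, ∑ j, Y 0 i j * dY 0 i j)) :=
      tendsto_finset_sum _ fun i _ => tendsto_finset_sum _ fun j _ =>
        ((hYe 0 h0mem i j).continuousAt.tendsto.mul (hdYe 0 h0mem i j).continuousAt.tendsto)
    have h2 : (∑ i, ∑ j, Y 0 i j * dY 0 i j) = 0 := by simp [hY0]
    exact (h2 ▸ h1).mono_left nhdsWithin_le_nhds
  have hent : ∀ i j : Fin m, Tendsto (fun t => Y t i j / t)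
      (nhdsWithin 0 (Ioi 0)) (nhds (dY 0 i j)) := by
    intro i j
    have h1 := hasDerivAt_iff_tendsto_slope.mp (hYe 0 h0mem i j)
    have h2 := h1.mono_left
      (nhdsWithin_mono _ (fun x hx => ne_of_gt hx : Ioi (0:ℝ) ⊆ {(0:ℝ)}ᶜ))
    refine h2.congr fun t => ?_
    simp [slope, hY0]
    ring
  have hH : Tendsto (fun t => ∑ i, ∑ j, (Y t i j / t) ^ 2)
      (nhdsWithin 0 (Ioi 0)) (nhds (∑ i, ∑ j, (dY 0 i j) ^ 2)) :=
    tendsto_finset_sum _ fun i _ => tendsto_finset_sum _ fun j _ => (hent i j).pow 2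
  have hid : Tendsto (fun t : ℝ => t) (nhdsWithin 0 (Ioi 0)) (nhds 0) :=
    tendsto_id.mono_right nhdsWithin_le_nhds
  have hQlim : Tendsto (fun t => c t * Q t) (nhdsWithin 0 (Ioi 0)) (nhds 0) := by
    have hmul := hlim.mul (hid.mul hH)
    rw [one_mul, zero_mul] at hmul
    refine hmul.congr' ?_
    filter_upwards [self_mem_nhdsWithin] with t (ht : t ∈ Ioi (0:ℝ))
    have ht0 : t ≠ 0 := ne_of_gt ht
    have hQt : Q t = t ^ 2 * ∑ i, ∑ j, (Y t i j / t) ^ 2 := by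
      simp only [hQ, Finset.mul_sum]
      refine Finset.sum_congr rfl fun i _ => Finset.sum_congr rfl fun j _ => ?_
      field_simp
    rw [hQt]; ring
  have hFlim : Tendsto F (nhdsWithin 0 (Ioi 0)) (nhds 0) := by
    have := hSlim.sub hQlim
    rwa [sub_zero] at this
  have hle : ∀ᶠ t in nhdsWithin 0 (Ioi 0), F t ≤ F r := by
    filter_upwards [Ioo_mem_nhdsGT_of_mem (⟨le_refl 0, hr⟩ : (0:ℝ) ∈ Ico (0:ℝ) r)] with t ht
    exact hmono ⟨ht.1, ht.2.le⟩ ⟨hr, le_refl r⟩ ht.2.le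
  have h0F : (0:ℝ) ≤ F r := le_of_tendsto hFlim hle
  have hSr : S r = (dY r).trace := by
    simp [hS, hYr, Matrix.one_apply, ite_mul, one_mul, zero_mul, Finset.sum_ite_eq,
      Matrix.trace, Matrix.diag]
  have hQr : Q r = m := by
    simp [hQ, hYr, Matrix.one_apply, apply_ite (·^2 : ℝ → ℝ), Finset.sum_ite_eq]
  have h0F' : (0:ℝ) ≤ S r - c r * Q r := h0F
  rw [hSr, hQr] at h0F'
  linarith

/-- Günther's inequality in ODE form: if `R(t) ≤ ρI` with `0 ≤ ρ`, `0 < r`,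
`√ρ·r < π`, and `Y` solves `Y'' = −R(t)Y`, `Y(0) = 0`, `Y(r) = I`, then
`Tr(Y'(r)) ≥ (n−1)/r` when `ρ = 0`, and
`Tr(Y'(r)) ≥ (n−1)√ρ cos(√ρ r)/sin(√ρ r)` when `ρ > 0`;
i.e. `(log s(r))' ≥ (log s_ρ(r))'`.  Matrix size is `m = n − 1`. -/
theorem gunther_ode_form {m : ℕ} {ρ r : ℝ}
    (hρ : 0 ≤ ρ) (hr : 0 < r) (hρr : Real.sqrt ρ * r < Real.pi)
    (R : ℝ → Matrix (Fin m) (Fin m) ℝ)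
    (hRcont : ∀ i j, Continuous fun t => R t i j)
    (hRsymm : ∀ t ∈ Icc (0:ℝ) r, (R t).IsSymm)
    (hRle : ∀ t ∈ Icc (0:ℝ) r,
      (ρ • (1 : Matrix (Fin m) (Fin m) ℝ) - R t).PosSemidef)
    (Y dY : ℝ → Matrix (Fin m) (Fin m) ℝ)
    (hY : ∀ t ∈ Icc (0:ℝ) r, HasDerivAt Y (dY t) t)
    (hdY : ∀ t ∈ Icc (0:ℝ) r, HasDerivAt dY (-(R t * Y t)) t)
    (hY0 : Y 0 = 0) (hYr : Y r = 1) :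
    (ρ = 0 → (m : ℝ) / r ≤ (dY r).trace) ∧
    (0 < ρ → (m : ℝ) * Real.sqrt ρ * Real.cos (Real.sqrt ρ * r) /
      Real.sin (Real.sqrt ρ * r) ≤ (dY r).trace) := by
  constructor
  · intro hρ0
    subst hρ0
    have hc : ∀ t ∈ Ioc (0:ℝ) r, HasDerivAt (fun t : ℝ => 1/t) (-(0:ℝ) - (1/t)^2) t := by
      intro t ht
      have := hasDerivAt_inv (ne_of_gt ht.1)
      simpa [one_div, inv_pow] using this
    have hlim : Filter.Tendsto (fun t : ℝ => t * (1/t)) (nhdsWithin 0 (Ioi 0)) (nhds 1) := by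
      refine tendsto_const_nhds.congr' ?_
      filter_upwards [self_mem_nhdsWithin] with t (ht : t ∈ Ioi (0:ℝ))
      field_simp [ne_of_gt (show (0:ℝ) < t from ht)]
    have := gunther_aux hr (fun t => 1/t) hc hlim R hRle Y dY hY hdY hY0 hYr
    calc (m:ℝ)/r = (m:ℝ) * (1/r) := by ring
    _ ≤ (dY r).trace := this
  · intro hρpos
    set q := Real.sqrt ρ with hqdef
    have hq : 0 < q := Real.sqrt_pos.mpr hρpos
    have hq2 : q^2 = ρ := Real.sq_sqrt hρ
    have hc : ∀ t ∈ Ioc (0:ℝ) r, HasDerivAt (fun t : ℝ => q * Real.cos (q*t) / Real.sin (q*t))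
        (-ρ - (q * Real.cos (q*t) / Real.sin (q*t))^2) t := by
      intro t ht
      have hsin : 0 < Real.sin (q*t) :=
        Real.sin_pos_of_pos_of_lt_pi (mul_pos hq ht.1)
          (lt_of_le_of_lt (by nlinarith [ht.2] : q*t ≤ q*r) hρr)
      have hinner : HasDerivAt (fun s : ℝ => q*s) q t := by
        simpa using (hasDerivAt_id t).const_mul q
      have hu : HasDerivAt (fun s : ℝ => q * Real.cos (q*s)) (q * (-Real.sin (q*t) * q)) t :=
        (((Real.hasDerivAt_cos (q*t)).comp t hinner)).const_mul q
      have hv : HasDerivAt (fun s : ℝ => Real.sin (q*s)) (Real.cos (q*t) * q) t :=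
        (Real.hasDerivAt_sin (q*t)).comp t hinner
      have hd := hu.fun_div hv (ne_of_gt hsin)
      refine hd.congr_deriv ?_
      have h1 : Real.sin (q*t)^2 + Real.cos (q*t)^2 = 1 := Real.sin_sq_add_cos_sq _
      have hs : Real.sin (q*t) ≠ 0 := ne_of_gt hsin
      field_simp
      nlinarith [h1, hq2, sq_nonneg (Real.sin (q*t)), sq_nonneg (Real.cos (q*t))]
    have hlim : Filter.Tendsto (fun t : ℝ => t * (q * Real.cos (q*t) / Real.sin (q*t)))
        (nhdsWithin 0 (Ioi 0)) (nhds 1) := by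
      have hsin0 : Filter.Tendsto (fun x : ℝ => Real.sin x / x)
          (nhdsWithin 0 {(0:ℝ)}ᶜ) (nhds 1) := by
        have h1 := hasDerivAt_iff_tendsto_slope.mp (Real.hasDerivAt_sin 0)
        rw [Real.cos_zero] at h1
        refine h1.congr fun y => ?_
        simp [slope]
        ring
      have hq1 : Filter.Tendsto (fun t : ℝ => q*t) (nhdsWithin 0 (Ioi 0))
          (nhdsWithin 0 {(0:ℝ)}ᶜ) := by
        rw [tendsto_nhdsWithin_iff]
        constructor
        · have : Filter.Tendsto (fun t : ℝ => q*t) (nhds 0) (nhds (q*0)) :=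
            (continuous_const.mul continuous_id).tendsto 0
          rw [mul_zero] at this
          exact this.mono_left nhdsWithin_le_nhds
        · filter_upwards [self_mem_nhdsWithin] with t (ht : t ∈ Ioi (0:ℝ))
          exact ne_of_gt (mul_pos hq ht)
      have h2 : Filter.Tendsto (fun t : ℝ => Real.sin (q*t)/(q*t))
          (nhdsWithin 0 (Ioi 0)) (nhds 1) := hsin0.comp hq1
      have h3 := h2.inv₀ one_ne_zero
      rw [inv_one] at h3
      have hcos : Filter.Tendsto (fun t : ℝ => Real.cos (q*t)) (nhdsWithin 0 (Ioi 0))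
          (nhds 1) := by
        have : Filter.Tendsto (fun t : ℝ => Real.cos (q*t)) (nhds 0)
            (nhds (Real.cos (q*0))) :=
          (Real.continuous_cos.comp (continuous_const.mul continuous_id)).tendsto 0
        rw [mul_zero, Real.cos_zero] at this
        exact this.mono_left nhdsWithin_le_nhds
      have hmul := hcos.mul h3
      rw [one_mul] at hmul
      refine hmul.congr fun t => ?_
      rw [inv_div]
      ring
    have h := gunther_aux hr (fun t : ℝ => q * Real.cos (q*t) / Real.sin (q*t)) hc hlim
      R hRle Y dY hY hdY hY0 hYr
    have h' : (m:ℝ) * (q * Real.cos (q*r) / Real.sin (q*r)) ≤ (dY r).trace := h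
    calc (m:ℝ) * q * Real.cos (q * r) / Real.sin (q * r)
        = (m:ℝ) * (q * Real.cos (q*r) / Real.sin (q*r)) := by ring
    _ ≤ (dY r).trace := h'
end
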